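/- arXiv:1407.2880 — 4 statements merged into one kernel-verified Lean document; each statement's English description precedes it below -/
import Mathlib

section
/- For n ≥ 1, the n-th power sum symmetric polynomial satisfies s_n = n · Σ_{(m_1,...,m_n): m_1+2m_2+...+nm_n = n} (-1)^{m_2+m_4+...} · (m_1+...+m_n-1)!/(m_1!···m_n!) · σ_1^{m_1}···σ_n^{m_n}, where σ_i are the elementary symmetric polynomials. -/
open Finset MvPolynomial

namespace Waring

variable (n : ℕ)

def P (k : ℕ) : Finset (Fin n → ℕ) :=
  Finset.filter (fun m : Fin n → ℕ => ∑ j, (j.1 + 1) * m j = k)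
    (Fintype.piFinset fun _ => Finset.range (n + 1))

def c (m : Fin n → ℕ) : ℚ :=
  (-1 : ℚ) ^ (∑ j ∈ Finset.univ.filter (fun j : Fin n => Even (j.1 + 1)), m j) *
    (Nat.factorial (∑ j, m j - 1) : ℚ) / ∏ j, (Nat.factorial (m j) : ℚ)

noncomputable def E (N : ℕ) (m : Fin n → ℕ) : MvPolynomial (Fin N) ℚ :=
  ∏ j : Fin n, (MvPolynomial.esymm (Fin N) ℚ (j.1 + 1)) ^ (m j)

variable {n}

lemma mem_P {k : ℕ} (hk : k ≤ n) {m : Fin n → ℕ} :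
    m ∈ P n k ↔ ∑ j, (j.1 + 1) * m j = k := by
  constructor
  · exact fun h => (Finset.mem_filter.mp h).2
  · intro h
    refine Finset.mem_filter.mpr ⟨Fintype.mem_piFinset.mpr fun j => ?_, h⟩
    rw [Finset.mem_range, Nat.lt_succ_iff]
    calc m j ≤ (j.1 + 1) * m j := Nat.le_mul_of_pos_left _ j.1.succ_pos
    _ ≤ ∑ j, (j.1 + 1) * m j := Finset.single_le_sum
        (f := fun j : Fin n => (j.1 + 1) * m j) (fun _ _ => Nat.zero_le _) (mem_univ j)
    _ ≤ n := h ▸ hk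

lemma sum_P {k : ℕ} {m : Fin n → ℕ} (h : m ∈ P n k) : ∑ j, (j.1 + 1) * m j = k :=
  (Finset.mem_filter.mp h).2

/-- L2: a part of maximal size `k` forces the partition to be a single part. -/
lemma eq_single_of_max_part {k : ℕ} {m : Fin n → ℕ} (h : m ∈ P n k) (j : Fin n)
    (hj : j.1 + 1 = k) (hm : 1 ≤ m j) : m = Pi.single j 1 := by
  have hs := sum_P h
  rw [← Finset.add_sum_erase _ _ (mem_univ j)] at hs
  have hle : (j.1 + 1) * m j ≤ j.1 + 1 := by
    have := Nat.le.intro hs; rwa [← hj] at this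
  have hmj : m j = 1 := le_antisymm
    (Nat.le_of_mul_le_mul_left (by rw [mul_one]; exact hle) j.1.succ_pos) hm
  rw [hmj, mul_one, hj] at hs
  have hrest : ∑ l ∈ univ.erase j, (l.1 + 1) * m l = 0 := by omega
  funext l
  rcases eq_or_ne l j with rfl | hl
  · simp [hmj]
  · have h0 := (Finset.sum_eq_zero_iff.mp hrest) l (Finset.mem_erase.mpr ⟨hl, mem_univ l⟩)
    simp only [Nat.mul_eq_zero, Nat.succ_ne_zero, false_or] at h0
    simp [Pi.single_apply, hl, h0]

/-- L3: a partition with exactly one part is a single. -/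
lemma eq_single_of_sum_eq_one {k : ℕ} {m : Fin n → ℕ} (h : m ∈ P n k)
    (h1 : ∑ j, m j = 1) : ∃ j : Fin n, j.1 + 1 = k ∧ m = Pi.single j 1 := by
  obtain ⟨j, hj⟩ : ∃ j, m j ≠ 0 := by
    by_contra hc
    push_neg at hc
    simp [hc] at h1
  have hs1 := h1
  rw [← Finset.add_sum_erase _ _ (mem_univ j)] at hs1
  have hmj : m j = 1 ∧ ∑ l ∈ univ.erase j, m l = 0 := by omega
  have hm : m = Pi.single j 1 := by
    funext l
    rcases eq_or_ne l j with rfl | hl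
    · simp [hmj.1]
    · have := (Finset.sum_eq_zero_iff.mp hmj.2) l (Finset.mem_erase.mpr ⟨hl, mem_univ l⟩)
      simp [Pi.single_apply, hl, this]
  refine ⟨j, ?_, hm⟩
  have hs := sum_P h
  rw [hm] at hs
  rw [Finset.sum_eq_single j] at hs
  · simpa using hs
  · intro l _ hl; simp [Pi.single_apply, hl]
  · simp

lemma one_le_sum_P {k : ℕ} {m : Fin n → ℕ} (h : m ∈ P n k) (hk : 1 ≤ k) :
    1 ≤ ∑ j, m j := by
  by_contra hc
  push_neg at hc
  have hs : ∑ j : Fin n, m j = 0 := by omega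
  have hz : ∀ j ∈ (univ : Finset (Fin n)), m j = 0 := Finset.sum_eq_zero_iff.mp hs
  have hsp := sum_P h
  rw [Finset.sum_eq_zero (fun j hj => by rw [hz j hj, mul_zero])] at hsp
  omega

/-- single j 1 is in P (j+1) -/
lemma single_mem_P {k : ℕ} (hk : k ≤ n) (j : Fin n) (hj : j.1 + 1 = k) :
    Pi.single j 1 ∈ P n k := by
  rw [mem_P hk, Finset.sum_eq_single j]
  · simp [hj]
  · intro l _ hl; simp [Pi.single_apply, hl]
  · simp


lemma part_zero_of_gt {k : ℕ} {m : Fin n → ℕ} (h : m ∈ P n k) (j : Fin n)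
    (hj : k < j.1 + 1) : m j = 0 := by
  have hs := sum_P h
  have hle : (j.1 + 1) * m j ≤ k := by
    rw [← hs]
    exact Finset.single_le_sum (f := fun l : Fin n => (l.1 + 1) * m l)
      (fun _ _ => Nat.zero_le _) (mem_univ j)
  by_contra hc
  have : j.1 + 1 ≤ (j.1 + 1) * m j := Nat.le_mul_of_pos_right _ (Nat.pos_of_ne_zero hc)
  omega

lemma sum_single_weighted (j : Fin n) :
    ∑ l : Fin n, (l.1 + 1) * (Pi.single j 1 : Fin n → ℕ) l = j.1 + 1 := by
  rw [Finset.sum_eq_single j]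
  · simp
  · intro l _ hl; simp [Pi.single_apply, hl]
  · simp

lemma sum_single_plain (j : Fin n) (S : Finset (Fin n)) :
    ∑ l ∈ S, (Pi.single j 1 : Fin n → ℕ) l = if j ∈ S then 1 else 0 := by
  simp only [Pi.single_apply]
  exact Finset.sum_ite_eq' S j (fun _ => 1)

lemma c_single {k : ℕ} (j : Fin n) (hj : j.1 + 1 = k) :
    c n (Pi.single j 1) = (-1 : ℚ) ^ (k + 1) := by
  have he : ∑ l ∈ Finset.univ.filter (fun l : Fin n => Even (l.1 + 1)), (Pi.single j 1 : Fin n → ℕ) l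
      = if Even k then 1 else 0 := by
    rw [sum_single_plain]
    simp [hj]
  have hK : ∑ l : Fin n, (Pi.single j 1 : Fin n → ℕ) l = 1 := by
    rw [sum_single_plain]; simp
  have hF : ∏ l : Fin n, (((Pi.single j 1 : Fin n → ℕ) l).factorial : ℚ) = 1 := by
    apply Finset.prod_eq_one
    intro l _
    rcases eq_or_ne l j with rfl | hl
    · simp
    · simp [Pi.single_apply, hl]
  rw [c, he, hK, hF]
  rcases Nat.even_or_odd k with hk | hk
  · simp [hk, Even.add_one hk, (Even.add_one hk).neg_one_pow]
  · simp [hk, Nat.not_even_iff_odd.mpr hk, (Odd.add_one hk).neg_one_pow]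

lemma E_single (N : ℕ) {k : ℕ} (j : Fin n) (hj : j.1 + 1 = k) :
    E n N (Pi.single j 1) = esymm (Fin N) ℚ k := by
  rw [E, Finset.prod_eq_single j]
  · simp [hj]
  · intro l _ hl; simp [Pi.single_apply, hl]
  · simp

lemma E_add_single (N : ℕ) (m : Fin n → ℕ) (j : Fin n) :
    E n N (m + Pi.single j 1) = esymm (Fin N) ℚ (j.1 + 1) * E n N m := by
  rw [E, E]
  have step : (∏ l : Fin n, esymm (Fin N) ℚ (l.1 + 1) ^ ((m + Pi.single j 1 : Fin n → ℕ)) l)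
      = ∏ l : Fin n, esymm (Fin N) ℚ (l.1 + 1) ^ m l
        * esymm (Fin N) ℚ (l.1 + 1) ^ (Pi.single j 1 : Fin n → ℕ) l :=
    Finset.prod_congr rfl fun l _ => by rw [Pi.add_apply, pow_add]
  rw [step, Finset.prod_mul_distrib, mul_comm]
  congr 1
  rw [Finset.prod_eq_single j]
  · simp
  · intro l _ hl; simp [Pi.single_apply, hl]
  · simp

lemma sub_add_single {m : Fin n → ℕ} {j : Fin n} (h : 1 ≤ m j) :
    (m - Pi.single j 1) + Pi.single j 1 = m := by
  funext l
  rcases eq_or_ne l j with rfl | hl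
  · simp only [Pi.add_apply, Pi.sub_apply, Pi.single_eq_same]; omega
  · simp [Pi.single_apply, hl]

lemma add_sub_single (m : Fin n → ℕ) (j : Fin n) :
    (m + Pi.single j 1) - Pi.single j 1 = m := by
  funext l
  rcases eq_or_ne l j with rfl | hl
  · simp only [Pi.add_apply, Pi.sub_apply, Pi.single_eq_same]; omega
  · simp [Pi.single_apply, hl]

lemma add_single_mem_P {k : ℕ} (hk : k ≤ n) {m : Fin n → ℕ} {j : Fin n}
    (hj : j.1 + 1 ≤ k) (h : m ∈ P n (k - (j.1 + 1))) : m + Pi.single j 1 ∈ P n k := by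
  rw [mem_P hk]
  have hs := sum_P h
  have step : ∑ l : Fin n, (l.1 + 1) * ((m + Pi.single j 1 : Fin n → ℕ)) l
      = (∑ l : Fin n, (l.1 + 1) * m l)
        + ∑ l : Fin n, (l.1 + 1) * (Pi.single j 1 : Fin n → ℕ) l := by
    rw [← Finset.sum_add_distrib]
    exact Finset.sum_congr rfl fun l _ => by rw [Pi.add_apply, mul_add]
  rw [step, hs, sum_single_weighted]
  omega

lemma sub_single_mem_P {k : ℕ} (hk : k ≤ n) {m : Fin n → ℕ} {j : Fin n}
    (h : m ∈ P n k) (hj : j.1 + 1 ≤ k) (hm : 1 ≤ m j) :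
    m - Pi.single j 1 ∈ P n (k - (j.1 + 1)) := by
  rw [mem_P (le_trans (Nat.sub_le k _) hk)]
  have hs := sum_P h
  have heq : (m - Pi.single j 1) + Pi.single j 1 = m := sub_add_single hm
  have step : ∑ l : Fin n, (l.1 + 1) * m l
      = (∑ l : Fin n, (l.1 + 1) * ((m - Pi.single j 1 : Fin n → ℕ)) l) + (j.1 + 1) := by
    conv_lhs => rw [← heq]
    rw [← sum_single_weighted j, ← Finset.sum_add_distrib]
    exact Finset.sum_congr rfl fun l _ => by rw [Pi.add_apply, mul_add]
  omega


lemma sum_P_bij {M : Type*} [AddCommMonoid M] {k : ℕ} (hk : k ≤ n)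
    (f : Fin n → (Fin n → ℕ) → M) :
    ∑ j ∈ univ.filter (fun j : Fin n => j.1 + 1 < k),
        ∑ m ∈ P n (k - (j.1 + 1)), f j (m + Pi.single j 1)
      = ∑ m ∈ P n k, ∑ j ∈ univ.filter (fun j : Fin n => j.1 + 1 < k ∧ 1 ≤ m j), f j m := by
  rw [Finset.sum_sigma', Finset.sum_sigma']
  refine Finset.sum_nbij' (fun p : (Σ _ : Fin n, Fin n → ℕ) => (⟨p.2 + Pi.single p.1 1, p.1⟩ : Σ _ : Fin n → ℕ, Fin n))
    (fun q : (Σ _ : Fin n → ℕ, Fin n) => (⟨q.2, q.1 - Pi.single q.2 1⟩ : Σ _ : Fin n, Fin n → ℕ))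
    ?_ ?_ ?_ ?_ ?_
  · rintro ⟨j, m⟩ hp
    rw [Finset.mem_sigma] at hp
    obtain ⟨hj, hm⟩ := hp
    rw [Finset.mem_filter] at hj
    refine Finset.mem_sigma.mpr ⟨add_single_mem_P hk (le_of_lt hj.2) hm, ?_⟩
    refine Finset.mem_filter.mpr ⟨mem_univ _, hj.2, ?_⟩
    simp
  · rintro ⟨m, j⟩ hq
    rw [Finset.mem_sigma] at hq
    obtain ⟨hm, hj⟩ := hq
    rw [Finset.mem_filter] at hj
    refine Finset.mem_sigma.mpr ⟨Finset.mem_filter.mpr ⟨mem_univ _, hj.2.1⟩, ?_⟩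
    exact sub_single_mem_P hk hm (le_of_lt hj.2.1) hj.2.2
  · rintro ⟨j, m⟩ _
    simp [add_sub_single]
  · rintro ⟨m, j⟩ hq
    rw [Finset.mem_sigma] at hq
    have := (Finset.mem_filter.mp hq.2).2.2
    simp [sub_add_single this]
  · rintro ⟨j, m⟩ _
    rfl

lemma sum_apply_add (S : Finset (Fin n)) (a b : Fin n → ℕ) :
    ∑ l ∈ S, (a + b) l = (∑ l ∈ S, a l) + ∑ l ∈ S, b l := by
  rw [← Finset.sum_add_distrib]
  exact Finset.sum_congr rfl fun l _ => rfl

lemma c_sub_single (m : Fin n → ℕ) (j : Fin n) (hm : 1 ≤ m j) (hK : 2 ≤ ∑ l, m l) :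
    (-1 : ℚ) ^ j.1 * c n (m - Pi.single j 1)
      = (-1 : ℚ) ^ (∑ l ∈ univ.filter (fun l : Fin n => Even (l.1 + 1)), m l)
        * ((∑ l, m l - 2).factorial : ℚ) * (m j : ℚ) / ∏ l, ((m l).factorial : ℚ) := by
  have hsubadd : (m - Pi.single j 1) + Pi.single j 1 = m := sub_add_single hm
  -- plain sum of m - δ
  have hsum : (∑ l, (m - Pi.single j 1 : Fin n → ℕ) l) + 1 = ∑ l, m l := by
    conv_rhs => rw [← hsubadd]
    rw [sum_apply_add, sum_single_plain]
    simp
  -- sign relation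
  have hsign : (-1 : ℚ) ^ j.1
        * (-1 : ℚ) ^ (∑ l ∈ univ.filter (fun l : Fin n => Even (l.1 + 1)),
            (m - Pi.single j 1 : Fin n → ℕ) l)
      = (-1 : ℚ) ^ (∑ l ∈ univ.filter (fun l : Fin n => Even (l.1 + 1)), m l) := by
    have hes : ∑ l ∈ univ.filter (fun l : Fin n => Even (l.1 + 1)), m l
        = (∑ l ∈ univ.filter (fun l : Fin n => Even (l.1 + 1)),
            (m - Pi.single j 1 : Fin n → ℕ) l)
          + (if j ∈ univ.filter (fun l : Fin n => Even (l.1 + 1)) then 1 else 0) := by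
      conv_lhs => rw [← hsubadd]
      rw [sum_apply_add, sum_single_plain]
    by_cases hev : Even (j.1 + 1)
    · have hjS : j ∈ univ.filter (fun l : Fin n => Even (l.1 + 1)) :=
        Finset.mem_filter.mpr ⟨mem_univ _, hev⟩
      rw [hes, if_pos hjS, pow_add, pow_one]
      have hodd : Odd j.1 := by
        rcases Nat.even_or_odd j.1 with h | h
        · exact absurd hev (by simp [Nat.even_add_one, h])
        · exact h
      rw [hodd.neg_one_pow]
      ring
    · have hjS : j ∉ univ.filter (fun l : Fin n => Even (l.1 + 1)) := by
        simp [hev]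
      rw [hes, if_neg hjS, add_zero]
      have heven : Even j.1 := by
        rcases Nat.even_or_odd j.1 with h | h
        · exact h
        · exact absurd (Nat.even_add_one.mpr (Nat.not_even_iff_odd.mpr h)) hev
      rw [heven.neg_one_pow, one_mul]
  -- factorial product relation
  have hprod : (∏ l, (((m - Pi.single j 1 : Fin n → ℕ) l).factorial : ℚ)) * (m j : ℚ)
      = ∏ l, ((m l).factorial : ℚ) := by
    rw [← Finset.mul_prod_erase univ _ (mem_univ j), ← Finset.mul_prod_erase univ
      (fun l => ((m l).factorial : ℚ)) (mem_univ j)]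
    have h1 : ∀ l ∈ univ.erase j, (((m - Pi.single j 1 : Fin n → ℕ) l).factorial : ℚ)
        = ((m l).factorial : ℚ) := by
      intro l hl
      have hlj := (Finset.mem_erase.mp hl).1
      simp [Pi.single_apply, hlj]
    rw [Finset.prod_congr rfl h1]
    have h2 : ((m j - 1).factorial : ℚ) * (m j : ℚ) = ((m j).factorial : ℚ) := by
      have : m j = (m j - 1) + 1 := by omega
      rw [this, Nat.factorial_succ]
      push_cast
      ring
    have h3 : ((m - Pi.single j 1 : Fin n → ℕ) j) = m j - 1 := by
      simp
    rw [h3, ← h2]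
    ring
  -- now unfold c
  rw [c]
  have hsum2 : (∑ l, (m - Pi.single j 1 : Fin n → ℕ) l) - 1 = ∑ l, m l - 2 := by omega
  rw [hsum2]
  have hne1 : (∏ l, (((m - Pi.single j 1 : Fin n → ℕ) l).factorial : ℚ)) ≠ 0 :=
    Finset.prod_ne_zero_iff.mpr fun l _ => Nat.cast_ne_zero.mpr (Nat.factorial_ne_zero _)
  have hne2 : (m j : ℚ) ≠ 0 := Nat.cast_ne_zero.mpr (by omega)
  rw [← hprod, ← hsign]
  field_simp


lemma key_scalar {k : ℕ} (hk1 : 1 ≤ k) (hkn : k ≤ n) {m : Fin n → ℕ} (hm : m ∈ P n k)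
    (hne : m ≠ Pi.single (⟨k - 1, by omega⟩ : Fin n) 1) :
    (k : ℚ) * c n m
      = ∑ j ∈ univ.filter (fun j : Fin n => j.1 + 1 < k ∧ 1 ≤ m j),
          (-1 : ℚ) ^ j.1 * ((k - (j.1 + 1) : ℕ) : ℚ) * c n (m - Pi.single j 1) := by
  have hK1 : 1 ≤ ∑ l, m l := one_le_sum_P hm hk1
  have hK2 : 2 ≤ ∑ l, m l := by
    rcases Nat.lt_or_ge (∑ l, m l) 2 with h | h
    · exfalso
      have h1 : ∑ l, m l = 1 := by omega
      obtain ⟨j, hj, hj2⟩ := eq_single_of_sum_eq_one hm h1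
      apply hne
      have hje : j = (⟨k - 1, by omega⟩ : Fin n) := Fin.ext (by simp; omega)
      rw [← hje]; exact hj2
    · exact h
  have hterm : ∀ j ∈ univ.filter (fun j : Fin n => j.1 + 1 < k ∧ 1 ≤ m j),
      (-1 : ℚ) ^ j.1 * ((k - (j.1 + 1) : ℕ) : ℚ) * c n (m - Pi.single j 1)
        = ((-1 : ℚ) ^ (∑ l ∈ univ.filter (fun l : Fin n => Even (l.1 + 1)), m l)
            * ((∑ l, m l - 2).factorial : ℚ) / ∏ l, ((m l).factorial : ℚ))
          * (((k : ℚ) - (j.1 + 1)) * (m j : ℚ)) := by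
    intro j hj
    rw [Finset.mem_filter] at hj
    have hcast : ((k - (j.1 + 1) : ℕ) : ℚ) = (k : ℚ) - (j.1 + 1) := by
      have : j.1 + 1 ≤ k := le_of_lt hj.2.1
      push_cast [Nat.cast_sub this]
      ring
    have hcs := c_sub_single m j hj.2.2 hK2
    calc (-1 : ℚ) ^ j.1 * ((k - (j.1 + 1) : ℕ) : ℚ) * c n (m - Pi.single j 1)
        = ((k - (j.1 + 1) : ℕ) : ℚ) * ((-1 : ℚ) ^ j.1 * c n (m - Pi.single j 1)) := by ring
      _ = ((k : ℚ) - (j.1 + 1)) * ((-1 : ℚ) ^ (∑ l ∈ univ.filter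
            (fun l : Fin n => Even (l.1 + 1)), m l)
          * ((∑ l, m l - 2).factorial : ℚ) * (m j : ℚ) / ∏ l, ((m l).factorial : ℚ)) := by
          rw [hcs, hcast]
      _ = _ := by ring
  rw [Finset.sum_congr rfl hterm, ← Finset.mul_sum]
  have hext : ∑ j ∈ univ.filter (fun j : Fin n => j.1 + 1 < k ∧ 1 ≤ m j),
      ((k : ℚ) - (j.1 + 1)) * (m j : ℚ) = ∑ j : Fin n, ((k : ℚ) - (j.1 + 1)) * (m j : ℚ) := by
    apply Finset.sum_subset (Finset.filter_subset _ _)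
    intro j _ hj
    rw [Finset.mem_filter] at hj
    by_cases hmj : m j = 0
    · simp [hmj]
    · exfalso
      have h1 : 1 ≤ m j := Nat.pos_of_ne_zero hmj
      have h2 : k ≤ j.1 + 1 := by
        by_contra hc
        exact hj ⟨mem_univ _, by omega, h1⟩
      rcases Nat.lt_or_ge k (j.1 + 1) with h3 | h3
      · exact hmj (part_zero_of_gt hm j h3)
      · have hjk : j.1 + 1 = k := by omega
        have := eq_single_of_max_part hm j hjk h1
        apply hne
        have hje : j = (⟨k - 1, by omega⟩ : Fin n) := Fin.ext (by simp; omega)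
        rw [← hje]; exact this
  have h1 : ((∑ j : Fin n, (j.1 + 1) * m j : ℕ) : ℚ) = (k : ℚ) := by
    exact_mod_cast congrArg (Nat.cast : ℕ → ℚ) (sum_P hm)
  have htot : ∑ j : Fin n, ((k : ℚ) - (j.1 + 1)) * (m j : ℚ)
      = (k : ℚ) * (((∑ l, m l : ℕ) : ℚ) - 1) := by
    push_cast at h1
    have expand : ∀ j : Fin n, ((k : ℚ) - (j.1 + 1)) * (m j : ℚ)
        = (k : ℚ) * (m j : ℚ) - ((j.1 : ℚ) + 1) * (m j : ℚ) := fun j => by ring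
    rw [Finset.sum_congr rfl (fun j _ => expand j), Finset.sum_sub_distrib,
      ← Finset.mul_sum, h1]
    push_cast
    ring
  rw [hext, htot]
  -- final assembly
  have hfac : ((∑ l, m l - 1).factorial : ℚ)
      = (((∑ l, m l : ℕ) : ℚ) - 1) * ((∑ l, m l - 2).factorial : ℚ) := by
    have hn1 : (∑ l, m l) - 1 = ((∑ l, m l) - 2) + 1 := by omega
    rw [hn1, Nat.factorial_succ]
    have : (((∑ l, m l) - 2 + 1 : ℕ) : ℚ) = ((∑ l, m l : ℕ) : ℚ) - 1 := by
      push_cast [Nat.cast_sub (by omega : 2 ≤ ∑ l, m l)]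
      ring
    rw [Nat.cast_mul, this]
  have hF : (∏ l, ((m l).factorial : ℚ)) ≠ 0 :=
    Finset.prod_ne_zero_iff.mpr fun l _ => Nat.cast_ne_zero.mpr (Nat.factorial_ne_zero _)
  rw [c, hfac]
  field_simp


lemma main (N : ℕ) (hnN : n ≤ N) :
    ∀ k, 1 ≤ k → k ≤ n →
      psum (Fin N) ℚ k
        = (k : MvPolynomial (Fin N) ℚ) * ∑ m ∈ P n k, MvPolynomial.C (c n m) * E n N m := by
  intro k
  induction k using Nat.strong_induction_on with
  | _ k ih =>
    intro hk1 hkn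
    rw [psum_eq_mul_esymm_sub_sum (Fin N) ℚ k hk1]
    -- reindex the antidiagonal sum over Fin n
    have hre : ∑ a ∈ Finset.filter (fun a => a.1 ∈ Set.Ioo 0 k) (Finset.HasAntidiagonal.antidiagonal k),
          (-1 : MvPolynomial (Fin N) ℚ) ^ a.1 * esymm (Fin N) ℚ a.1 * psum (Fin N) ℚ a.2
        = ∑ j ∈ univ.filter (fun j : Fin n => j.1 + 1 < k),
            (-1 : MvPolynomial (Fin N) ℚ) ^ (j.1 + 1) * esymm (Fin N) ℚ (j.1 + 1)
              * psum (Fin N) ℚ (k - (j.1 + 1)) := by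
      have hmem : ∀ a ∈ Finset.filter (fun a : ℕ × ℕ => a.1 ∈ Set.Ioo 0 k)
          (Finset.HasAntidiagonal.antidiagonal k), 0 < a.1 ∧ a.1 < k ∧ a.1 + a.2 = k := by
        intro a ha
        rw [Finset.mem_filter, Finset.HasAntidiagonal.mem_antidiagonal] at ha
        exact ⟨ha.2.1, ha.2.2, ha.1⟩
      refine Finset.sum_bij' (fun a ha => (⟨a.1 - 1, ?_⟩ : Fin n))
        (fun j _ => ((j.1 + 1), k - (j.1 + 1))) ?_ ?_ ?_ ?_ ?_
      · have := hmem a ha; omega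
      · intro a ha
        have := hmem a ha
        rw [Finset.mem_filter]
        exact ⟨mem_univ _, by simp; omega⟩
      · intro j hj
        rw [Finset.mem_filter] at hj
        rw [Finset.mem_filter, Finset.HasAntidiagonal.mem_antidiagonal]
        refine ⟨by omega, ?_⟩
        rw [Set.mem_Ioo]
        exact ⟨Nat.succ_pos _, hj.2⟩
      · intro a ha
        have := hmem a ha
        dsimp only
        ext
        · simp; omega
        · simp; omega
      · intro j hj
        apply Fin.ext
        simp
      · intro a ha
        have := hmem a ha
        have h1 : a.1 - 1 + 1 = a.1 := by omega
        rw [h1]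
        have h2 : k - a.1 = a.2 := by omega
        rw [h2]
    rw [hre]
    -- apply the induction hypothesis to each psum
    have hih : ∀ j ∈ univ.filter (fun j : Fin n => j.1 + 1 < k),
        (-1 : MvPolynomial (Fin N) ℚ) ^ (j.1 + 1) * esymm (Fin N) ℚ (j.1 + 1)
            * psum (Fin N) ℚ (k - (j.1 + 1))
          = ∑ m ∈ P n (k - (j.1 + 1)),
              ((-1 : MvPolynomial (Fin N) ℚ) ^ (j.1 + 1)
                * MvPolynomial.C (((k - (j.1 + 1) : ℕ) : ℚ))
                * MvPolynomial.C (c n (((m + Pi.single j 1) - Pi.single j 1 : Fin n → ℕ)))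
                * E n N (m + Pi.single j 1)) := by
      intro j hj
      rw [Finset.mem_filter] at hj
      have hlt : j.1 + 1 < k := hj.2
      rw [ih (k - (j.1 + 1)) (by omega) (by omega) (by omega), Finset.mul_sum, Finset.mul_sum]
      refine Finset.sum_congr rfl fun m hm => ?_
      rw [add_sub_single, E_add_single]
      rw [show ((k - (j.1 + 1) : ℕ) : MvPolynomial (Fin N) ℚ)
          = MvPolynomial.C (((k - (j.1 + 1) : ℕ) : ℚ)) from (map_natCast MvPolynomial.C _).symm]
      ring
    rw [Finset.sum_congr rfl hih]
    have hbij := sum_P_bij (M := MvPolynomial (Fin N) ℚ) hkn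
      (fun j m' => (-1 : MvPolynomial (Fin N) ℚ) ^ (j.1 + 1)
        * MvPolynomial.C (((k - (j.1 + 1) : ℕ) : ℚ))
        * MvPolynomial.C (c n ((m' - Pi.single j 1 : Fin n → ℕ)))
        * E n N m')
    rw [hbij]
    -- split off the single-part partition
    have hkn' : k - 1 < n := by omega
    set jk : Fin n := ⟨k - 1, hkn'⟩ with hjk
    have hjk1 : jk.1 + 1 = k := by simp [hjk]; omega
    have hδmem : (Pi.single jk 1 : Fin n → ℕ) ∈ P n k := single_mem_P hkn jk hjk1
    rw [← Finset.add_sum_erase _ _ hδmem, ← Finset.add_sum_erase _ _ hδmem]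
    -- inner sum at the single partition is empty
    have hempty : univ.filter (fun j : Fin n => j.1 + 1 < k ∧ 1 ≤ (Pi.single jk 1 : Fin n → ℕ) j)
        = ∅ := by
      rw [Finset.filter_eq_empty_iff]
      intro j _
      rintro ⟨h1, h2⟩
      rcases eq_or_ne j jk with rfl | hne
      · omega
      · simp [Pi.single_apply, hne] at h2
    rw [hempty, Finset.sum_empty]
    -- value at the single partition
    have hδval : MvPolynomial.C (c n (Pi.single jk 1)) * E n N (Pi.single jk 1)
        = (-1 : MvPolynomial (Fin N) ℚ) ^ (k + 1) * esymm (Fin N) ℚ k := by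
      rw [c_single jk hjk1, E_single N jk hjk1]
      rw [map_pow, map_neg, map_one]
    rw [hδval]
    rw [mul_add]
    -- remaining: pointwise identity on the erased set
    have hpoint : ∀ m ∈ (P n k).erase (Pi.single jk 1),
        ∑ j ∈ univ.filter (fun j : Fin n => j.1 + 1 < k ∧ 1 ≤ m j),
            ((-1 : MvPolynomial (Fin N) ℚ) ^ (j.1 + 1)
              * MvPolynomial.C (((k - (j.1 + 1) : ℕ) : ℚ))
              * MvPolynomial.C (c n ((m - Pi.single j 1 : Fin n → ℕ)))
              * E n N m)
          = - ((k : MvPolynomial (Fin N) ℚ) * (MvPolynomial.C (c n m) * E n N m)) := by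
      intro m hm
      rw [Finset.mem_erase] at hm
      have hks := key_scalar hk1 hkn hm.2 (by
        intro hc
        exact hm.1 (by rw [hc]))
      have hC := congrArg (⇑(MvPolynomial.C : ℚ →+* MvPolynomial (Fin N) ℚ)) hks
      rw [map_mul, map_sum] at hC
      have hCk : MvPolynomial.C ((k : ℕ) : ℚ) = (k : MvPolynomial (Fin N) ℚ) :=
        map_natCast MvPolynomial.C k
      calc ∑ j ∈ univ.filter (fun j : Fin n => j.1 + 1 < k ∧ 1 ≤ m j),
            ((-1 : MvPolynomial (Fin N) ℚ) ^ (j.1 + 1)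
              * MvPolynomial.C (((k - (j.1 + 1) : ℕ) : ℚ))
              * MvPolynomial.C (c n ((m - Pi.single j 1 : Fin n → ℕ)))
              * E n N m)
          = -(∑ j ∈ univ.filter (fun j : Fin n => j.1 + 1 < k ∧ 1 ≤ m j),
              MvPolynomial.C ((-1 : ℚ) ^ j.1 * ((k - (j.1 + 1) : ℕ) : ℚ)
                * c n (m - Pi.single j 1))) * E n N m := by
            rw [← Finset.sum_neg_distrib, Finset.sum_mul]
            refine Finset.sum_congr rfl fun j hj => ?_
            rw [map_mul, map_mul, map_pow, map_neg, map_one, pow_succ]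
            ring
        _ = -(MvPolynomial.C ((k : ℚ) * c n m)) * E n N m := by rw [← hC, map_mul]
        _ = - ((k : MvPolynomial (Fin N) ℚ) * (MvPolynomial.C (c n m) * E n N m)) := by
            rw [map_mul, hCk]
            ring
    rw [Finset.sum_congr rfl hpoint, Finset.sum_neg_distrib, ← Finset.mul_sum]
    ring

end Waring

/-- Newton-type formula: for `1 ≤ n ≤ N`, in `N` variables,
`s_n = n · ∑_{m_1+2m_2+...+n m_n = n} (-1)^{m_2+m_4+...} (m_1+...+m_n-1)!/(m_1!⋯m_n!)
· σ_1^{m_1} ⋯ σ_n^{m_n}`. -/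
theorem stmt3 (N n : ℕ) (hn : 1 ≤ n) (hN : n ≤ N) :
    MvPolynomial.psum (Fin N) ℚ n =
      (n : MvPolynomial (Fin N) ℚ) *
        ∑ m ∈ Finset.filter (fun m : Fin n → ℕ => ∑ j, (j.1 + 1) * m j = n)
            (Fintype.piFinset fun _ => Finset.range (n + 1)),
          MvPolynomial.C
              ((-1 : ℚ) ^ (∑ j ∈ Finset.univ.filter (fun j : Fin n => Even (j.1 + 1)), m j) *
                (Nat.factorial (∑ j, m j - 1) : ℚ) / ∏ j, (Nat.factorial (m j) : ℚ)) *
            ∏ j : Fin n, (MvPolynomial.esymm (Fin N) ℚ (j.1 + 1)) ^ (m j) := by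
  exact Waring.main N hN n hn le_rfl
end

section
/- Define d_5(n) by Π_{t≥1}(1-q^{5t})/(1-q^t) = Σ_{n≥0} d_5(n) q^n. Then d_5(5n+4) ≡ 0 (mod 5) for all n ≥ 0. -/
open Polynomial Finset

noncomputable def gb (s : ℕ) : ℕ → ℤ → Polynomial ℤ
  | 0, j => if j = 0 then 1 else 0
  | (m+1), j => gb s m j + X ^ (s * (((m : ℤ) + 1) - j).toNat) * gb s m (j - 1)

lemma gb_P1 (s m : ℕ) (j : ℤ) :
    gb s (m+1) j = gb s m j + X ^ (s * (((m : ℤ) + 1) - j).toNat) * gb s m (j - 1) := rfl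

lemma gb_zero_eq (s : ℕ) (j : ℤ) : gb s 0 j = if j = 0 then 1 else 0 := rfl

lemma gb_neg (s m : ℕ) : ∀ j : ℤ, j < 0 → gb s m j = 0 := by
  induction m with
  | zero => intro j hj; rw [gb_zero_eq, if_neg (by omega)]
  | succ m ih => intro j hj; rw [gb_P1]; simp [ih j hj, ih (j-1) (by omega)]

lemma gb_gt (s m : ℕ) : ∀ j : ℤ, (m : ℤ) < j → gb s m j = 0 := by
  induction m with
  | zero => intro j hj; rw [gb_zero_eq, if_neg (by omega)]
  | succ m ih =>
    intro j hj
    push_cast at hj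
    rw [gb_P1]
    simp [ih j (by omega), ih (j-1) (by omega)]

lemma gb_zero (s m : ℕ) : gb s m 0 = 1 := by
  induction m with
  | zero => simp [gb_zero_eq]
  | succ m ih => rw [gb_P1]; simp [ih, gb_neg s m (-1) (by omega)]

lemma gb_self (s m : ℕ) : gb s m (m : ℤ) = 1 := by
  induction m with
  | zero => simp [gb_zero_eq]
  | succ m ih =>
    rw [gb_P1]
    push_cast
    rw [show ((m:ℤ) + 1 - 1) = (m:ℤ) by ring]
    simp [gb_gt s m ((m:ℤ)+1) (by omega), ih]

lemma gb_P2 (s m : ℕ) : ∀ j : ℤ, gb s (m+1) j = X ^ (s * j.toNat) * gb s m j + gb s m (j - 1) := by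
  induction m with
  | zero =>
    intro j
    rcases eq_or_ne j 0 with rfl | h0
    · simp [gb_P1, gb_zero_eq, gb_neg]
    rcases eq_or_ne j 1 with rfl | h1
    · norm_num [gb_P1, gb_zero_eq]
    · have e0 : gb s 0 j = 0 := by rw [gb_zero_eq]; simp [h0]
      have e1 : gb s 0 (j-1) = 0 := by rw [gb_zero_eq, if_neg (by omega)]
      rw [gb_P1, e0, e1]; ring
  | succ m ih =>
    intro j
    conv_rhs => rw [gb_P1 s m j, gb_P1 s m (j-1)]
    conv_lhs => rw [gb_P1 s (m+1) j, ih j, ih (j-1)]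
    rw [show (((m+1:ℕ) : ℤ) + 1 - j) = ((m:ℤ)+1-(j-1)) from by push_cast; ring]
    have key : X ^ (s * ((m:ℤ)+1-(j-1)).toNat) * (X ^ (s * (j-1).toNat) * gb s m (j-1))
        = X ^ (s * j.toNat) * (X ^ (s * ((m:ℤ)+1 - j).toNat) * gb s m (j-1)) := by
      by_cases hj : 1 ≤ j ∧ j ≤ (m:ℤ) + 1
      · rw [← mul_assoc, ← mul_assoc, ← pow_add, ← pow_add]
        congr 2
        have : ((m:ℤ)+1-(j-1)).toNat + (j-1).toNat = j.toNat + ((m:ℤ)+1 - j).toNat := by omega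
        rw [← Nat.mul_add, ← Nat.mul_add, this]
      · have : gb s m (j-1) = 0 := by
          rcases (not_and_or.mp hj) with h | h
          · exact gb_neg s m _ (by omega)
          · exact gb_gt s m _ (by omega)
        simp [this]
    linear_combination key

lemma gb_symm (s m : ℕ) : ∀ j : ℤ, gb s m j = gb s m ((m : ℤ) - j) := by
  induction m with
  | zero => intro j; rw [gb_zero_eq, gb_zero_eq]; simp only [zero_sub, neg_eq_zero, Nat.cast_zero]
  | succ m ih =>
    intro j
    conv_lhs => rw [gb_P1 s m j, ih j, ih (j-1)]
    conv_rhs => rw [gb_P2 s m (((m+1:ℕ):ℤ) - j)]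
    rw [show (((m+1:ℕ):ℤ) - j) = ((m:ℤ) + 1 - j) from by push_cast; ring]
    rw [show ((m:ℤ) - (j-1)) = ((m:ℤ)+1-j) by ring, show ((m:ℤ)+1 - j - 1) = (m:ℤ) - j by ring]
    rw [show ((m:ℤ)+1-j).toNat = (((m:ℤ)+1-j)).toNat from rfl]
    ring

-- I3''
lemma gb_ratio (s m k : ℕ) :
    (1 - X ^ (s * (k+1))) * gb s m ((k:ℤ)+1) = (1 - X ^ (s * (m - k))) * gb s m (k : ℤ) := by
  have h1 : gb s (m+1) ((k:ℤ)+1)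
      = gb s m ((k:ℤ)+1) + X ^ (s * (((m:ℤ) + 1) - ((k:ℤ)+1)).toNat) * gb s m k := by
    rw [gb_P1]; norm_num
  have h2 := gb_P2 s m ((k:ℤ)+1)
  rw [h1] at h2
  have e1 : (((k:ℤ)+1)).toNat = k+1 := by omega
  have e2 : (((m:ℤ) +1) - ((k:ℤ)+1)).toNat = m - k := by omega
  have e3 : ((k:ℤ)+1-1) = (k:ℤ) := by ring
  rw [e1, e2, e3] at h2
  linear_combination h2

-- PRD
lemma gb_prod (s m : ℕ) : ∀ k : ℕ, k ≤ m →
    (∏ i ∈ Icc 1 k, (1 - X ^ (s * i))) * gb s m (k : ℤ)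
      = ∏ i ∈ Icc (m - k + 1) m, (1 - (X : Polynomial ℤ) ^ (s * i)) := by
  intro k
  induction k with
  | zero => intro _; simp [gb_zero, Icc_self]
  | succ k ih =>
    intro hk
    have hk' : k ≤ m := by omega
    have e1 : Icc 1 (k+1) = insert (k+1) (Icc 1 k) := (Finset.insert_Icc_right_eq_Icc_add_one (by omega)).symm
    have e2 : Icc (m - (k+1) + 1) m = insert (m - k) (Icc (m - k + 1) m) := by
      rw [show m - (k+1) + 1 = m - k from by omega]
      exact (Finset.insert_Icc_add_one_left_eq_Icc (by omega)).symm
    rw [e1, e2, Finset.prod_insert (by simp), Finset.prod_insert (by simp)]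
    have := gb_ratio s m k
    push_cast
    calc (1 - X ^ (s * (k + 1))) * (∏ i ∈ Icc 1 k, (1 - X ^ (s * i))) * gb s m ((k:ℤ)+1)
        = (∏ i ∈ Icc 1 k, (1 - X ^ (s * i))) * ((1 - X ^ (s * (k+1))) * gb s m ((k:ℤ)+1)) := by ring
      _ = (∏ i ∈ Icc 1 k, (1 - X ^ (s * i))) * ((1 - X ^ (s * (m - k))) * gb s m (k:ℤ)) := by rw [this]
      _ = (1 - X ^ (s * (m - k))) * ((∏ i ∈ Icc 1 k, (1 - X ^ (s * i))) * gb s m (k:ℤ)) := by ring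
      _ = (1 - X ^ (s * (m - k))) * ∏ i ∈ Icc (m - k + 1) m, (1 - X ^ (s * i)) := by rw [ih hk']

-- 3-term recurrence
lemma gb_G3 (s m : ℕ) (j : ℤ) :
    gb s (m+2) j = X ^ (s * j.toNat) * gb s m j + (1 + X ^ (s * (m+1))) * gb s m (j-1)
      + X ^ (s * ((m:ℤ)+2-j).toNat) * gb s m (j-2) := by
  rw [gb_P2 s (m+1) j, gb_P1 s m j, gb_P1 s m (j-1)]
  rw [show ((m:ℤ)+1-(j-1)) = ((m:ℤ)+2-j) by ring, show (j-1-1) = j-2 by ring]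
  have key : X ^ (s * j.toNat) * (X ^ (s * ((m:ℤ)+1-j).toNat) * gb s m (j-1))
      = X ^ (s * (m+1)) * gb s m (j-1) := by
    by_cases hj : 0 ≤ j ∧ j ≤ (m:ℤ)+1
    · rw [← mul_assoc, ← pow_add, ← Nat.mul_add]
      congr 3
      omega
    · have : gb s m (j-1) = 0 := by
        rcases (not_and_or.mp hj) with h | h
        · exact gb_neg s m _ (by omega)
        · exact gb_gt s m _ (by omega)
      simp [this]
  linear_combination key

def eps (i : ℤ) : ℤ := if Even i then 1 else -1

lemma eps_add (i : ℤ) : eps (i+1) = -eps i := by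
  unfold eps
  rcases Int.even_or_odd i with h | h
  · rw [if_pos h, if_neg (by rw [Int.even_add_one]; exact fun hc => hc h)]
  · have h' : ¬ Even i := Int.not_even_iff_odd.mpr h
    rw [if_neg h', if_pos (Int.even_add_one.mpr h')]
    ring

lemma eps_sub (i : ℤ) : eps (i-1) = -eps i := by
  have := eps_add (i-1)
  simp at this
  omega

def gZ (i : ℤ) : ℤ := i * (3*i - 1) / 2
def tZ (i : ℤ) : ℤ := i * (i + 1) / 2

lemma twog (i : ℤ) : 2 * gZ i = i * (3*i - 1) := by
  apply Int.mul_ediv_cancel'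
  rcases Int.even_or_odd i with ⟨k, hk⟩ | ⟨k, hk⟩
  · exact ⟨k * (3*i-1), by rw [hk]; ring⟩
  · exact ⟨i * (3*k + 1), by rw [hk]; ring⟩

lemma twot (i : ℤ) : 2 * tZ i = i * (i + 1) := by
  apply Int.mul_ediv_cancel'
  rcases Int.even_or_odd i with ⟨k, hk⟩ | ⟨k, hk⟩
  · exact ⟨k * (i+1), by rw [hk]; ring⟩
  · exact ⟨i * (k + 1), by rw [hk]; ring⟩

lemma gZ_nonneg (i : ℤ) : 0 ≤ gZ i := by
  have h := twog i
  nlinarith [sq_nonneg i, sq_nonneg (3*i-1)]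

lemma tZ_nonneg (i : ℤ) : 0 ≤ tZ i := by
  have h := twot i
  nlinarith [sq_nonneg i, sq_nonneg (i+1)]

lemma gZ_pred2 (i : ℤ) : 2 * gZ (i-1) = 2 * gZ i - 6*i + 4 := by
  linear_combination twog (i-1) - twog i

lemma gZ_succ2 (i : ℤ) : 2 * gZ (i+1) = 2 * gZ i + 6*i + 2 := by
  linear_combination twog (i+1) - twog i

lemma tZ_pred2 (i : ℤ) : 2 * tZ (i-1) = 2 * tZ i - 2*i := by
  linear_combination twot (i-1) - twot i

lemma tZ_succ2 (i : ℤ) : 2 * tZ (i+1) = 2 * tZ i + 2*i + 2 := by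
  linear_combination twot (i+1) - twot i

lemma sum_shift {M : Type*} [AddCommMonoid M] (f : ℤ → M) (a b c : ℤ) :
    ∑ i ∈ Icc a b, f (i + c) = ∑ i ∈ Icc (a+c) (b+c), f i := by
  rw [← Finset.map_add_right_Icc a b c, Finset.sum_map]
  simp [addRightEmbedding_apply]

noncomputable def gbP (n : ℕ) (i : ℤ) : Polynomial ℤ := gb 3 (2*n) ((n:ℤ) + i)

lemma gbP_out (n : ℕ) (i : ℤ) (h : i < -(n:ℤ) ∨ (n:ℤ) < i) : gbP n i = 0 := by
  rcases h with h | h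
  · exact gb_neg _ _ _ (by omega)
  · exact gb_gt _ _ _ (by push_cast; omega)

noncomputable def pentTerm (n : ℕ) (i : ℤ) : Polynomial ℤ := C (eps i) * (X ^ (gZ i).toNat * gbP n i)

theorem pentId (n : ℕ) :
    ∏ k ∈ Icc 1 n, ((1 - X^(3*k-2)) * (1 - (X : Polynomial ℤ)^(3*k-1)))
      = ∑ i ∈ Icc (-(n:ℤ)) (n:ℤ), pentTerm n i := by
  induction n with
  | zero =>
    simp [pentTerm, gbP, gb_zero_eq, eps, gZ]
  | succ n ih =>
    -- ranges
    set B : Finset ℤ := Icc (-(n:ℤ)-2) ((n:ℤ)+2) with hB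
    have hIcc1 : Icc (-((n+1:ℕ):ℤ)) ((n+1:ℕ):ℤ) = Icc (-(n:ℤ)-1) ((n:ℤ)+1) := by
      push_cast; rw [show -((n:ℤ)+1) = -(n:ℤ)-1 by ring]
    -- summand functions
    set G : ℤ → Polynomial ℤ := fun i => gbP n i with hG
    set f1 : ℤ → Polynomial ℤ := fun i =>
      -(C (eps i)) * (X ^ (gZ (i-1)).toNat * (X ^ (3*((n:ℤ)+i).toNat) * G i)) with hf1
    set f2 : ℤ → Polynomial ℤ := fun i =>
      C (eps i) * (X ^ (gZ i).toNat * ((1 + X ^ (3*(2*n+1))) * G i)) with hf2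
    set f3 : ℤ → Polynomial ℤ := fun i =>
      -(C (eps i)) * (X ^ (gZ (i+1)).toNat * (X ^ (3*((n:ℤ)-i).toNat) * G i)) with hf3
    -- pointwise expansion of the new summand
    have expand : ∀ i : ℤ, pentTerm (n+1) i = f1 (i+1) + f2 i + f3 (i-1) := by
      intro i
      have harg : ((n+1:ℕ):ℤ) + i = ((n:ℤ) + 1 + i) := by push_cast; ring
      have h2n : 2*(n+1) = (2*n)+2 := by ring
      rw [pentTerm, gbP, harg, h2n, gb_G3]
      rw [show ((n:ℤ)+1+i-1) = (n:ℤ)+i by ring, show ((n:ℤ)+1+i-2) = (n:ℤ)+(i-1) by ring,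
          show (((2*n:ℕ):ℤ)+2-((n:ℤ)+1+i)) = (n:ℤ)+1-i by push_cast; ring]
      simp only [hf1, hf2, hf3, hG, gbP]
      rw [eps_add i, show (i+1-1 : ℤ) = i by ring, eps_sub i, show (i-1+1 : ℤ) = i by ring]
      rw [show ((n:ℤ)+(i-1)) = (n:ℤ)+i-1 by ring, show ((n:ℤ)-(i-1)) = (n:ℤ)+1-i by ring,
          show ((n:ℤ)+1+i).toNat = ((n:ℤ)+(i+1)).toNat by omega]
      simp only [map_neg]
      push_cast
      ring
    -- pointwise identity on B
    have pointwise : ∀ i ∈ B, (1 - X^(3*n+1)) * ((1 - X^(3*n+2)) * pentTerm n i)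
        = f1 i + f2 i + f3 i := by
      intro i _
      by_cases hin : -(n:ℤ) ≤ i ∧ i ≤ (n:ℤ)
      · have e1 : (gZ (i-1)).toNat + 3*((n:ℤ)+i).toNat = (gZ i).toNat + (3*n+2) := by
          have := gZ_pred2 i; have := gZ_nonneg i; have := gZ_nonneg (i-1); omega
        have e2 : (gZ (i+1)).toNat + 3*((n:ℤ)-i).toNat = (gZ i).toNat + (3*n+1) := by
          have := gZ_succ2 i; have := gZ_nonneg i; have := gZ_nonneg (i+1); omega
        have key1 : X ^ (gZ (i-1)).toNat * (X ^ (3*((n:ℤ)+i).toNat) * G i)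
            = X ^ (gZ i).toNat * (X ^ (3*n+2) * G i) := by
          rw [← mul_assoc, ← mul_assoc, ← pow_add, ← pow_add, e1]
        have key2 : X ^ (gZ (i+1)).toNat * (X ^ (3*((n:ℤ)-i).toNat) * G i)
            = X ^ (gZ i).toNat * (X ^ (3*n+1) * G i) := by
          rw [← mul_assoc, ← mul_assoc, ← pow_add, ← pow_add, e2]
        simp only [hf1, hf2, hf3, pentTerm, hG]
        rw [key1, key2]
        ring
      · have hz : G i = 0 := gbP_out n i (by omega)
        simp only [hf1, hf2, hf3, pentTerm, hG, hz, gbP] at *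
        simp [hz]
    -- vanishing for extensions
    have van1 : ∀ i ∈ B, i ∉ Icc (-(n:ℤ)) ((n:ℤ)+2) → f1 i = 0 := by
      intro i _ hi
      simp only [mem_Icc, not_and_or, not_le] at hi
      have : G i = 0 := gbP_out n i (by simp only [hB, mem_Icc] at *; omega)
      simp [hf1, this]
    have van3 : ∀ i ∈ B, i ∉ Icc (-(n:ℤ)-2) ((n:ℤ)) → f3 i = 0 := by
      intro i hiB hi
      simp only [mem_Icc, not_and_or, not_le] at hi
      have : G i = 0 := by
        apply gbP_out n i
        simp only [hB, mem_Icc] at hiB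
        omega
      simp [hf3, this]
    have van2 : ∀ i ∈ B, i ∉ Icc (-(n:ℤ)-1) ((n:ℤ)+1) → f2 i = 0 := by
      intro i _ hi
      simp only [mem_Icc, not_and_or, not_le] at hi
      have : G i = 0 := gbP_out n i (by omega)
      simp [hf2, this]
    have vanP : ∀ i ∈ B, i ∉ Icc (-(n:ℤ)) ((n:ℤ)) →
        (1 - X^(3*n+1)) * ((1 - (X : Polynomial ℤ)^(3*n+2)) * pentTerm n i) = 0 := by
      intro i _ hi
      simp only [mem_Icc, not_and_or, not_le] at hi
      have : gbP n i = 0 := gbP_out n i (by omega)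
      simp [pentTerm, this]
    -- subset facts
    have hs1 : Icc (-(n:ℤ)) ((n:ℤ)+2) ⊆ B := by intro x; simp only [hB, mem_Icc]; omega
    have hs2 : Icc (-(n:ℤ)-1) ((n:ℤ)+1) ⊆ B := by intro x; simp only [hB, mem_Icc]; omega
    have hs3 : Icc (-(n:ℤ)-2) ((n:ℤ)) ⊆ B := by intro x; simp only [hB, mem_Icc]; omega
    have hsP : Icc (-(n:ℤ)) ((n:ℤ)) ⊆ B := by intro x; simp only [hB, mem_Icc]; omega
    -- LHS product step
    have hprod : ∏ k ∈ Icc 1 (n+1), ((1 - X^(3*k-2)) * (1 - (X : Polynomial ℤ)^(3*k-1)))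
        = (1 - X^(3*n+1)) * ((1 - X^(3*n+2)) *
            ∏ k ∈ Icc 1 n, ((1 - X^(3*k-2)) * (1 - X^(3*k-1)))) := by
      rw [← Finset.insert_Icc_right_eq_Icc_add_one (by omega), prod_insert (by simp)]
      rw [show 3*(n+1)-2 = 3*n+1 by omega, show 3*(n+1)-1 = 3*n+2 by omega]
      ring
    rw [hprod, ih, Finset.mul_sum, Finset.mul_sum]
    rw [Finset.sum_subset hsP vanP]
    rw [Finset.sum_congr rfl pointwise]
    rw [Finset.sum_add_distrib, Finset.sum_add_distrib]
    -- now handle RHS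
    rw [hIcc1]
    have hsum : ∑ i ∈ Icc (-(n:ℤ)-1) ((n:ℤ)+1), pentTerm (n+1) i
        = (∑ i ∈ Icc (-(n:ℤ)-1) ((n:ℤ)+1), f1 (i+1))
          + (∑ i ∈ Icc (-(n:ℤ)-1) ((n:ℤ)+1), f2 i)
          + (∑ i ∈ Icc (-(n:ℤ)-1) ((n:ℤ)+1), f3 (i-1)) := by
      rw [← Finset.sum_add_distrib, ← Finset.sum_add_distrib]
      exact Finset.sum_congr rfl (fun i _ => expand i)
    rw [hsum]
    refine congrArg₂ (· + ·) ?_ ?_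
    refine congrArg₂ (· + ·) ?_ ?_
    · -- sum of f1 over shifted range
      have : ∑ i ∈ Icc (-(n:ℤ)-1) ((n:ℤ)+1), f1 (i+1)
          = ∑ i ∈ Icc (-(n:ℤ)) ((n:ℤ)+2), f1 i := by
        rw [sum_shift f1 (-(n:ℤ)-1) ((n:ℤ)+1) 1,
          show (-(n:ℤ)-1+1) = -(n:ℤ) by ring, show ((n:ℤ)+1+1) = (n:ℤ)+2 by ring]
      rw [this, Finset.sum_subset hs1 van1]
    · exact (Finset.sum_subset hs2 van2).symm
    · have : ∑ i ∈ Icc (-(n:ℤ)-1) ((n:ℤ)+1), f3 (i-1)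
          = ∑ i ∈ Icc (-(n:ℤ)-2) ((n:ℤ)), f3 i := by
        simp only [sub_eq_add_neg]
        rw [sum_shift f3 (-(n:ℤ)+(-1)) ((n:ℤ)+1) (-1),
          show (-(n:ℤ)+(-1)+(-1)) = -(n:ℤ)+(-2) by ring, show ((n:ℤ)+1+(-1)) = (n:ℤ) by ring]
      rw [this, Finset.sum_subset hs3 van3]

noncomputable def gbJ (n : ℕ) (i : ℤ) : Polynomial ℤ := gb 1 (2*n) ((n:ℤ) + i)

lemma gbJ_out (n : ℕ) (i : ℤ) (h : i < -(n:ℤ) ∨ (n:ℤ) < i) : gbJ n i = 0 := by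
  rcases h with h | h
  · exact gb_neg _ _ _ (by omega)
  · exact gb_gt _ _ _ (by push_cast; omega)

noncomputable def kTerm (n : ℕ) (i : ℤ) : Polynomial ℤ :=
  ((eps i : ℤ) : Polynomial ℤ) * (X ^ (tZ i).toNat * gbJ n i)

noncomputable def jTerm (n : ℕ) (i : ℤ) : Polynomial ℤ :=
  ((eps i * ((n:ℤ)+i) : ℤ) : Polynomial ℤ) * (X ^ (tZ i).toNat * gbJ n i)

lemma tExp1 (n : ℕ) (i : ℤ) (h1 : -(n:ℤ) ≤ i) :
    (tZ (i-1)).toNat + ((n:ℤ)+i).toNat = (tZ i).toNat + n := by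
  have := tZ_pred2 i; have := tZ_nonneg i; have := tZ_nonneg (i-1); omega

lemma tExp2 (n : ℕ) (i : ℤ) (h1 : i ≤ (n:ℤ)) :
    (tZ (i+1)).toNat + ((n:ℤ)-i).toNat = (tZ i).toNat + (n+1) := by
  have := tZ_succ2 i; have := tZ_nonneg i; have := tZ_nonneg (i+1); omega

-- step lemma skeleton shared by kId and jId proofs is written inline below.

theorem kId : ∀ n : ℕ, 1 ≤ n → ∑ i ∈ Icc (-(n:ℤ)) (n:ℤ), kTerm n i = 0 := by
  intro n
  induction n with
  | zero => intro h; omega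
  | succ n ih =>
    intro _
    rcases Nat.eq_or_lt_of_le (Nat.one_le_iff_ne_zero.mpr (Nat.succ_ne_zero n)) with h1 | h1
    · -- n + 1 = 1, i.e. n = 0 : base case
      have hn : n = 0 := by omega
      subst hn
      have hset : Icc (-((0+1:ℕ):ℤ)) ((0+1:ℕ):ℤ) = {-1, 0, 1} := by decide
      rw [hset]
      rw [Finset.sum_insert (by decide), Finset.sum_insert (by decide), Finset.sum_singleton]
      have g0 : gb 1 (2*1) ((1:ℤ) + (-1)) = 1 := by
        norm_num [gb_zero]
      have g1 : gb 1 (2*1) ((1:ℤ) + 0) = 1 + X := by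
        norm_num [show (2:ℕ) = 1+1 from rfl, gb_P1, gb_zero_eq]
      have g2 : gb 1 (2*1) ((1:ℤ) + 1) = 1 := by
        exact_mod_cast gb_self 1 2
      simp only [kTerm, gbJ, show (0+1 : ℕ) = 1 from rfl, Nat.cast_one]
      rw [g0, g1, g2]
      norm_num [tZ, eps]
    -- inductive step: n ≥ 1
    have hn1 : 1 ≤ n := by omega
    have hK := ih hn1
    set B : Finset ℤ := Icc (-(n:ℤ)-2) ((n:ℤ)+2) with hB
    have hIcc1 : Icc (-((n+1:ℕ):ℤ)) ((n+1:ℕ):ℤ) = Icc (-(n:ℤ)-1) ((n:ℤ)+1) := by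
      push_cast; rw [show -((n:ℤ)+1) = -(n:ℤ)-1 by ring]
    set G : ℤ → Polynomial ℤ := fun i => gbJ n i with hG
    set k1 : ℤ → Polynomial ℤ := fun i =>
      -((eps i : ℤ) : Polynomial ℤ) * (X ^ (tZ (i-1)).toNat * (X ^ (((n:ℤ)+i).toNat) * G i)) with hk1
    set k2 : ℤ → Polynomial ℤ := fun i =>
      ((eps i : ℤ) : Polynomial ℤ) * (X ^ (tZ i).toNat * ((1 + X ^ (2*n+1)) * G i)) with hk2
    set k3 : ℤ → Polynomial ℤ := fun i =>
      -((eps i : ℤ) : Polynomial ℤ) * (X ^ (tZ (i+1)).toNat * (X ^ (((n:ℤ)-i).toNat) * G i)) with hk3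
    have expand : ∀ i : ℤ, kTerm (n+1) i = k1 (i+1) + k2 i + k3 (i-1) := by
      intro i
      have harg : ((n+1:ℕ):ℤ) + i = ((n:ℤ) + 1 + i) := by push_cast; ring
      have h2n : 2*(n+1) = (2*n)+2 := by ring
      rw [kTerm, gbJ, harg, h2n, gb_G3]
      rw [show ((n:ℤ)+1+i-1) = (n:ℤ)+i by ring, show ((n:ℤ)+1+i-2) = (n:ℤ)+(i-1) by ring,
          show (((2*n:ℕ):ℤ)+2-((n:ℤ)+1+i)) = (n:ℤ)+1-i by push_cast; ring]
      simp only [hk1, hk2, hk3, hG, gbJ]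
      rw [eps_add i, show (i+1-1 : ℤ) = i by ring, eps_sub i, show (i-1+1 : ℤ) = i by ring]
      rw [show ((n:ℤ)+(i-1)) = (n:ℤ)+i-1 by ring, show ((n:ℤ)-(i-1)) = (n:ℤ)+1-i by ring,
          show ((n:ℤ)+1+i).toNat = ((n:ℤ)+(i+1)).toNat by omega]
      simp only [one_mul]
      push_cast
      ring
    have pointwise : ∀ i ∈ B, (1 - X^(n+0)) * ((1 - X^(n+1)) * kTerm n i)
        = k1 i + k2 i + k3 i := by
      intro i _
      by_cases hin : -(n:ℤ) ≤ i ∧ i ≤ (n:ℤ)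
      · have e1 := tExp1 n i hin.1
        have e2 := tExp2 n i hin.2
        have key1 : X ^ (tZ (i-1)).toNat * (X ^ (((n:ℤ)+i).toNat) * G i)
            = X ^ (tZ i).toNat * (X ^ (n+0) * G i) := by
          rw [← mul_assoc, ← mul_assoc, ← pow_add, ← pow_add, e1]
          norm_num
        have key2 : X ^ (tZ (i+1)).toNat * (X ^ (((n:ℤ)-i).toNat) * G i)
            = X ^ (tZ i).toNat * (X ^ (n+1) * G i) := by
          rw [← mul_assoc, ← mul_assoc, ← pow_add, ← pow_add, e2]
        simp only [hk1, hk2, hk3, kTerm, hG]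
        rw [key1, key2]
        ring
      · have hz : G i = 0 := gbJ_out n i (by omega)
        simp only [hk1, hk2, hk3, kTerm, hG, hz, gbJ] at *
        simp [hz]
    have van1 : ∀ i ∈ B, i ∉ Icc (-(n:ℤ)) ((n:ℤ)+2) → k1 i = 0 := by
      intro i _ hi
      simp only [mem_Icc, not_and_or, not_le] at hi
      have : G i = 0 := gbJ_out n i (by omega)
      simp [hk1, this]
    have van3 : ∀ i ∈ B, i ∉ Icc (-(n:ℤ)-2) ((n:ℤ)) → k3 i = 0 := by
      intro i hiB hi
      simp only [mem_Icc, not_and_or, not_le] at hi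
      have : G i = 0 := by
        apply gbJ_out n i
        simp only [hB, mem_Icc] at hiB
        omega
      simp [hk3, this]
    have van2 : ∀ i ∈ B, i ∉ Icc (-(n:ℤ)-1) ((n:ℤ)+1) → k2 i = 0 := by
      intro i _ hi
      simp only [mem_Icc, not_and_or, not_le] at hi
      have : G i = 0 := gbJ_out n i (by omega)
      simp [hk2, this]
    have vanP : ∀ i ∈ B, i ∉ Icc (-(n:ℤ)) ((n:ℤ)) →
        (1 - X^(n+0)) * ((1 - (X : Polynomial ℤ)^(n+1)) * kTerm n i) = 0 := by
      intro i _ hi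
      simp only [mem_Icc, not_and_or, not_le] at hi
      have : gbJ n i = 0 := gbJ_out n i (by omega)
      simp [kTerm, this]
    have hs1 : Icc (-(n:ℤ)) ((n:ℤ)+2) ⊆ B := by intro x; simp only [hB, mem_Icc]; omega
    have hs2 : Icc (-(n:ℤ)-1) ((n:ℤ)+1) ⊆ B := by intro x; simp only [hB, mem_Icc]; omega
    have hs3 : Icc (-(n:ℤ)-2) ((n:ℤ)) ⊆ B := by intro x; simp only [hB, mem_Icc]; omega
    have hsP : Icc (-(n:ℤ)) ((n:ℤ)) ⊆ B := by intro x; simp only [hB, mem_Icc]; omega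
    have main : (1 - X^(n+0)) * ((1 - X^(n+1)) * ∑ i ∈ Icc (-(n:ℤ)) ((n:ℤ)), kTerm n i)
        = ∑ i ∈ Icc (-((n+1:ℕ)):ℤ) ((n+1:ℕ):ℤ), kTerm (n+1) i := by
      rw [Finset.mul_sum, Finset.mul_sum, Finset.sum_subset hsP vanP,
        Finset.sum_congr rfl pointwise, Finset.sum_add_distrib, Finset.sum_add_distrib, hIcc1]
      have hsum : ∑ i ∈ Icc (-(n:ℤ)-1) ((n:ℤ)+1), kTerm (n+1) i
          = (∑ i ∈ Icc (-(n:ℤ)-1) ((n:ℤ)+1), k1 (i+1))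
            + (∑ i ∈ Icc (-(n:ℤ)-1) ((n:ℤ)+1), k2 i)
            + (∑ i ∈ Icc (-(n:ℤ)-1) ((n:ℤ)+1), k3 (i-1)) := by
        rw [← Finset.sum_add_distrib, ← Finset.sum_add_distrib]
        exact Finset.sum_congr rfl (fun i _ => expand i)
      rw [hsum]
      refine congrArg₂ (· + ·) ?_ ?_
      refine congrArg₂ (· + ·) ?_ ?_
      · have : ∑ i ∈ Icc (-(n:ℤ)-1) ((n:ℤ)+1), k1 (i+1)
            = ∑ i ∈ Icc (-(n:ℤ)) ((n:ℤ)+2), k1 i := by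
          rw [sum_shift k1 (-(n:ℤ)-1) ((n:ℤ)+1) 1,
            show (-(n:ℤ)-1+1) = -(n:ℤ) by ring, show ((n:ℤ)+1+1) = (n:ℤ)+2 by ring]
        rw [this, Finset.sum_subset hs1 van1]
      · exact (Finset.sum_subset hs2 van2).symm
      · have : ∑ i ∈ Icc (-(n:ℤ)-1) ((n:ℤ)+1), k3 (i-1)
            = ∑ i ∈ Icc (-(n:ℤ)-2) ((n:ℤ)), k3 i := by
          simp only [sub_eq_add_neg]
          rw [sum_shift k3 (-(n:ℤ)+(-1)) ((n:ℤ)+1) (-1),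
            show (-(n:ℤ)+(-1)+(-1)) = -(n:ℤ)+(-2) by ring, show ((n:ℤ)+1+(-1)) = (n:ℤ) by ring]
        rw [this, Finset.sum_subset hs3 van3]
    rw [← main, hK]
    ring

theorem jId : ∀ n : ℕ, 1 ≤ n →
    (1 - X^n) * ∏ k ∈ Icc 1 (n-1), (1 - (X:Polynomial ℤ)^k)^2
      = ∑ i ∈ Icc (-(n:ℤ)) (n:ℤ), jTerm n i := by
  intro n
  induction n with
  | zero => intro h; omega
  | succ n ih =>
    intro _
    rcases Nat.eq_or_lt_of_le (Nat.one_le_iff_ne_zero.mpr (Nat.succ_ne_zero n)) with h1 | h1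
    · have hn : n = 0 := by omega
      subst hn
      have hset : Icc (-((0+1:ℕ):ℤ)) ((0+1:ℕ):ℤ) = {-1, 0, 1} := by decide
      rw [hset]
      rw [Finset.sum_insert (by decide), Finset.sum_insert (by decide), Finset.sum_singleton]
      have g0 : gb 1 (2*1) ((1:ℤ) + (-1)) = 1 := by
        norm_num [gb_zero]
      have g1 : gb 1 (2*1) ((1:ℤ) + 0) = 1 + X := by
        norm_num [show (2:ℕ) = 1+1 from rfl, gb_P1, gb_zero_eq]
      have g2 : gb 1 (2*1) ((1:ℤ) + 1) = 1 := by
        exact_mod_cast gb_self 1 2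
      simp only [jTerm, gbJ, show (0+1 : ℕ) = 1 from rfl, Nat.cast_one]
      rw [g0, g1, g2]
      norm_num [tZ, eps]
      ring
    have hn1 : 1 ≤ n := by omega
    have hJ := ih hn1
    have hK := kId n hn1
    set B : Finset ℤ := Icc (-(n:ℤ)-2) ((n:ℤ)+2) with hB
    have hIcc1 : Icc (-((n+1:ℕ):ℤ)) ((n+1:ℕ):ℤ) = Icc (-(n:ℤ)-1) ((n:ℤ)+1) := by
      push_cast; rw [show -((n:ℤ)+1) = -(n:ℤ)-1 by ring]
    set G : ℤ → Polynomial ℤ := fun i => gbJ n i with hG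
    set j1 : ℤ → Polynomial ℤ := fun i =>
      -((eps i * ((n:ℤ)+i) : ℤ) : Polynomial ℤ)
        * (X ^ (tZ (i-1)).toNat * (X ^ (((n:ℤ)+i).toNat) * G i)) with hj1
    set j2 : ℤ → Polynomial ℤ := fun i =>
      ((eps i * ((n:ℤ)+1+i) : ℤ) : Polynomial ℤ)
        * (X ^ (tZ i).toNat * ((1 + X ^ (2*n+1)) * G i)) with hj2
    set j3 : ℤ → Polynomial ℤ := fun i =>
      -((eps i * ((n:ℤ)+2+i) : ℤ) : Polynomial ℤ)
        * (X ^ (tZ (i+1)).toNat * (X ^ (((n:ℤ)-i).toNat) * G i)) with hj3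
    have expand : ∀ i : ℤ, jTerm (n+1) i = j1 (i+1) + j2 i + j3 (i-1) := by
      intro i
      have harg : ((n+1:ℕ):ℤ) + i = ((n:ℤ) + 1 + i) := by push_cast; ring
      have h2n : 2*(n+1) = (2*n)+2 := by ring
      rw [jTerm, gbJ, harg, h2n, gb_G3]
      rw [show ((n:ℤ)+1+i-1) = (n:ℤ)+i by ring, show ((n:ℤ)+1+i-2) = (n:ℤ)+(i-1) by ring,
          show (((2*n:ℕ):ℤ)+2-((n:ℤ)+1+i)) = (n:ℤ)+1-i by push_cast; ring]
      simp only [hj1, hj2, hj3, hG, gbJ]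
      rw [eps_add i, show (i+1-1 : ℤ) = i by ring, eps_sub i, show (i-1+1 : ℤ) = i by ring]
      rw [show ((n:ℤ)+(i-1)) = (n:ℤ)+i-1 by ring, show ((n:ℤ)-(i-1)) = (n:ℤ)+1-i by ring,
          show ((n:ℤ)+(i+1)) = (n:ℤ)+1+i by ring,
          show ((n:ℤ)+2+(i-1)) = (n:ℤ)+1+i by ring]
      simp only [one_mul]
      push_cast
      ring
    have pointwise : ∀ i ∈ B,
        (1 - X^(n+0)) * ((1 - X^(n+1)) * jTerm n i)
          + (1 - 2*X^(n+1) + X^(2*n+1)) * kTerm n i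
        = j1 i + j2 i + j3 i := by
      intro i _
      by_cases hin : -(n:ℤ) ≤ i ∧ i ≤ (n:ℤ)
      · have e1 := tExp1 n i hin.1
        have e2 := tExp2 n i hin.2
        have key1 : X ^ (tZ (i-1)).toNat * (X ^ (((n:ℤ)+i).toNat) * G i)
            = X ^ (tZ i).toNat * (X ^ (n+0) * G i) := by
          rw [← mul_assoc, ← mul_assoc, ← pow_add, ← pow_add, e1]
          norm_num
        have key2 : X ^ (tZ (i+1)).toNat * (X ^ (((n:ℤ)-i).toNat) * G i)
            = X ^ (tZ i).toNat * (X ^ (n+1) * G i) := by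
          rw [← mul_assoc, ← mul_assoc, ← pow_add, ← pow_add, e2]
        simp only [hj1, hj2, hj3, jTerm, kTerm, hG]
        rw [key1, key2]
        push_cast
        ring
      · have hz : G i = 0 := gbJ_out n i (by omega)
        simp only [hj1, hj2, hj3, jTerm, kTerm, hG, hz, gbJ] at *
        simp [hz]
    have van1 : ∀ i ∈ B, i ∉ Icc (-(n:ℤ)) ((n:ℤ)+2) → j1 i = 0 := by
      intro i _ hi
      simp only [mem_Icc, not_and_or, not_le] at hi
      have : G i = 0 := gbJ_out n i (by omega)
      simp [hj1, this]
    have van3 : ∀ i ∈ B, i ∉ Icc (-(n:ℤ)-2) ((n:ℤ)) → j3 i = 0 := by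
      intro i hiB hi
      simp only [mem_Icc, not_and_or, not_le] at hi
      have : G i = 0 := by
        apply gbJ_out n i
        simp only [hB, mem_Icc] at hiB
        omega
      simp [hj3, this]
    have van2 : ∀ i ∈ B, i ∉ Icc (-(n:ℤ)-1) ((n:ℤ)+1) → j2 i = 0 := by
      intro i _ hi
      simp only [mem_Icc, not_and_or, not_le] at hi
      have : G i = 0 := gbJ_out n i (by omega)
      simp [hj2, this]
    have vanP : ∀ i ∈ B, i ∉ Icc (-(n:ℤ)) ((n:ℤ)) →
        (1 - X^(n+0)) * ((1 - (X:Polynomial ℤ)^(n+1)) * jTerm n i)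
          + (1 - 2*X^(n+1) + X^(2*n+1)) * kTerm n i = 0 := by
      intro i _ hi
      simp only [mem_Icc, not_and_or, not_le] at hi
      have : gbJ n i = 0 := gbJ_out n i (by omega)
      simp [jTerm, kTerm, this]
    have hs1 : Icc (-(n:ℤ)) ((n:ℤ)+2) ⊆ B := by intro x; simp only [hB, mem_Icc]; omega
    have hs2 : Icc (-(n:ℤ)-1) ((n:ℤ)+1) ⊆ B := by intro x; simp only [hB, mem_Icc]; omega
    have hs3 : Icc (-(n:ℤ)-2) ((n:ℤ)) ⊆ B := by intro x; simp only [hB, mem_Icc]; omega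
    have hsP : Icc (-(n:ℤ)) ((n:ℤ)) ⊆ B := by intro x; simp only [hB, mem_Icc]; omega
    have main : (1 - X^(n+0)) * ((1 - X^(n+1)) * ∑ i ∈ Icc (-(n:ℤ)) ((n:ℤ)), jTerm n i)
          + (1 - 2*X^(n+1) + X^(2*n+1)) * ∑ i ∈ Icc (-(n:ℤ)) ((n:ℤ)), kTerm n i
        = ∑ i ∈ Icc (-((n+1:ℕ)):ℤ) ((n+1:ℕ):ℤ), jTerm (n+1) i := by
      rw [Finset.mul_sum, Finset.mul_sum, Finset.mul_sum,
        Finset.sum_subset hsP (fun i hi hni => by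
          have : gbJ n i = 0 := gbJ_out n i (by simp only [mem_Icc, not_and_or, not_le] at hni; omega)
          simp [jTerm, this]),
        Finset.sum_subset hsP (fun i hi hni => by
          have : gbJ n i = 0 := gbJ_out n i (by simp only [mem_Icc, not_and_or, not_le] at hni; omega)
          simp [kTerm, this]),
        ← Finset.sum_add_distrib,
        Finset.sum_congr rfl pointwise, Finset.sum_add_distrib, Finset.sum_add_distrib, hIcc1]
      have hsum : ∑ i ∈ Icc (-(n:ℤ)-1) ((n:ℤ)+1), jTerm (n+1) i
          = (∑ i ∈ Icc (-(n:ℤ)-1) ((n:ℤ)+1), j1 (i+1))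
            + (∑ i ∈ Icc (-(n:ℤ)-1) ((n:ℤ)+1), j2 i)
            + (∑ i ∈ Icc (-(n:ℤ)-1) ((n:ℤ)+1), j3 (i-1)) := by
        rw [← Finset.sum_add_distrib, ← Finset.sum_add_distrib]
        exact Finset.sum_congr rfl (fun i _ => expand i)
      rw [hsum]
      refine congrArg₂ (· + ·) ?_ ?_
      refine congrArg₂ (· + ·) ?_ ?_
      · have : ∑ i ∈ Icc (-(n:ℤ)-1) ((n:ℤ)+1), j1 (i+1)
            = ∑ i ∈ Icc (-(n:ℤ)) ((n:ℤ)+2), j1 i := by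
          rw [sum_shift j1 (-(n:ℤ)-1) ((n:ℤ)+1) 1,
            show (-(n:ℤ)-1+1) = -(n:ℤ) by ring, show ((n:ℤ)+1+1) = (n:ℤ)+2 by ring]
        rw [this, Finset.sum_subset hs1 van1]
      · exact (Finset.sum_subset hs2 van2).symm
      · have : ∑ i ∈ Icc (-(n:ℤ)-1) ((n:ℤ)+1), j3 (i-1)
            = ∑ i ∈ Icc (-(n:ℤ)-2) ((n:ℤ)), j3 i := by
          simp only [sub_eq_add_neg]
          rw [sum_shift j3 (-(n:ℤ)+(-1)) ((n:ℤ)+1) (-1),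
            show (-(n:ℤ)+(-1)+(-1)) = -(n:ℤ)+(-2) by ring, show ((n:ℤ)+1+(-1)) = (n:ℤ) by ring]
        rw [this, Finset.sum_subset hs3 van3]
    rw [← main, ← hJ, hK]
    have hprodstep : ∏ k ∈ Icc 1 (n+1-1), (1 - (X:Polynomial ℤ)^k)^2
        = (1 - X^n)^2 * ∏ k ∈ Icc 1 (n-1), (1 - (X:Polynomial ℤ)^k)^2 := by
      rw [show n+1-1 = n from by omega, show Icc 1 n = insert n (Icc 1 (n-1)) from ?_,
        prod_insert (by simp; omega)]
      rw [show n = n-1+1 from by omega]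
      exact (Finset.insert_Icc_right_eq_Icc_add_one (by omega)).symm
    rw [hprodstep]
    ring

/-! ### Coefficient extraction -/

def NearOne (m : ℕ) (f : Polynomial ℤ) : Prop := ∃ r, f = 1 + X^m * r

lemma nearOne_one (m : ℕ) : NearOne m 1 := ⟨0, by ring⟩

lemma nearOne_single (m t : ℕ) (h : m ≤ t) : NearOne m (1 - X^t) := by
  refine ⟨-X^(t-m), ?_⟩
  have ht : X^m * X^(t-m) = (X:Polynomial ℤ)^t := by
    rw [← pow_add]; congr 1; omega
  linear_combination ht

lemma nearOne_mul (m : ℕ) {f g : Polynomial ℤ} (hf : NearOne m f) (hg : NearOne m g) :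
    NearOne m (f * g) := by
  obtain ⟨r, hr⟩ := hf
  obtain ⟨s, hs⟩ := hg
  exact ⟨r + s + X^m * r * s, by rw [hr, hs]; ring⟩

lemma nearOne_prod {α : Type} (m : ℕ) (S : Finset α) (f : α → Polynomial ℤ)
    (h : ∀ a ∈ S, NearOne m (f a)) : NearOne m (∏ a ∈ S, f a) :=
  Finset.prod_induction f (NearOne m) (fun _ _ => nearOne_mul m) (nearOne_one m) h

lemma nearOne_pow (m e : ℕ) {f : Polynomial ℤ} (hf : NearOne m f) : NearOne m (f^e) := by
  induction e with
  | zero => simpa using nearOne_one m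
  | succ e ih => rw [pow_succ]; exact nearOne_mul m ih hf

lemma coeff_mul_nearOne (f g : Polynomial ℤ) (d m : ℕ) (h : NearOne m g) (hdm : d < m) :
    (f * g).coeff d = f.coeff d := by
  obtain ⟨r, hr⟩ := h
  rw [hr, show f * (1 + X^m * r) = f + (f * r) * X^m by ring, Polynomial.coeff_add,
    Polynomial.coeff_mul_X_pow', if_neg (by omega), add_zero]

lemma coeff_nearOne (g : Polynomial ℤ) (d m : ℕ) (h : NearOne m g) (hdm : d < m) :
    g.coeff d = if d = 0 then 1 else 0 := by
  have := coeff_mul_nearOne 1 g d m h hdm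
  rw [one_mul] at this
  rw [this, Polynomial.coeff_one]

-- stabilization
lemma coeff_stab (d M M' : ℕ) (h1 : d ≤ M) (h2 : M ≤ M') (e : ℕ) :
    ((∏ t ∈ Icc 1 M', (1 - (X:Polynomial ℤ)^t))^(e+1)).coeff d
      = ((∏ t ∈ Icc 1 M, (1 - (X:Polynomial ℤ)^t))^(e+1)).coeff d := by
  have hu : Icc 1 M ∪ Icc (M+1) M' = Icc 1 M' := by
    ext x; simp only [mem_union, mem_Icc]; omega
  have hdisj : Disjoint (Icc 1 M) (Icc (M+1) M') := by
    rw [Finset.disjoint_left]; intro x hx hx'; simp only [mem_Icc] at *; omega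
  rw [← hu, Finset.prod_union hdisj, mul_pow]
  apply coeff_mul_nearOne _ _ _ (M+1)
  · exact nearOne_pow _ _ (nearOne_prod _ _ _ (fun t ht => nearOne_single _ t (by simp only [mem_Icc] at ht; omega)))
  · omega


lemma gZ_ge_abs (i : ℤ) : (i.natAbs : ℤ) ≤ gZ i := by
  have h := twog i
  rcases le_or_gt 0 i with hi | hi
  · rw [Int.natAbs_of_nonneg hi]
    have h2 : 0 ≤ i * (i - 1) := by
      rcases eq_or_lt_of_le hi with h' | h'
      · simp [← h']
      · exact mul_nonneg (by omega) (by omega)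
    nlinarith [h2]
  · rw [Int.ofNat_natAbs_of_nonpos (le_of_lt hi)]
    have h2 : 0 ≤ (-i) * (-(3*i + 1)) := mul_nonneg (by omega) (by omega)
    nlinarith [h2]

lemma tZ_ge_abs (i : ℤ) : (i.natAbs : ℤ) ≤ tZ i + 1 := by
  have h := twot i
  rcases le_or_gt 0 i with hi | hi
  · rw [Int.natAbs_of_nonneg hi]
    nlinarith [sq_nonneg (2*i - 1)]
  · rw [Int.ofNat_natAbs_of_nonpos (le_of_lt hi)]
    have h2 : 0 ≤ (i+1) * (i+2) := by
      rcases le_or_gt i (-2) with h' | h'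
      · have h2' : 0 ≤ (-(i+1)) * (-(i+2)) := mul_nonneg (by omega) (by omega)
        nlinarith [h2']
      · have : i = -1 := by omega
        subst this; norm_num
    nlinarith [h2]

lemma gb_mul_prod_nearOne (s n : ℕ) (i : ℤ) (hi1 : -(n:ℤ) ≤ i) (hi2 : i ≤ (n:ℤ)) :
    NearOne (s*(n - i.natAbs) + s)
      (gb s (2*n) ((n:ℤ)+i) * ∏ k ∈ Icc 1 n, (1 - (X:Polynomial ℤ)^(s*k))) := by
  set m := i.natAbs with hm
  have hmn : m ≤ n := by omega
  set k0 := n - m with hk0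
  have hgb : gb s (2*n) ((n:ℤ)+i) = gb s (2*n) (k0 : ℤ) := by
    rcases le_or_gt 0 i with hi | hi
    · rw [gb_symm s (2*n) ((n:ℤ)+i)]
      congr 1
      push_cast
      omega
    · congr 1
      push_cast
      omega
  have hsplit : Icc 1 n = Icc 1 k0 ∪ Icc (k0+1) n := by
    ext x; simp only [mem_union, mem_Icc]; omega
  have hdisj : Disjoint (Icc 1 k0) (Icc (k0+1) n) := by
    rw [Finset.disjoint_left]; intro x hx hx'; simp only [mem_Icc] at *; omega
  rw [hgb, hsplit, Finset.prod_union hdisj, ← mul_assoc, mul_comm (gb s (2*n) (k0:ℤ)),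
    gb_prod s (2*n) k0 (by omega)]
  apply nearOne_mul
  · apply nearOne_prod
    intro t ht
    simp only [mem_Icc] at ht
    apply nearOne_single
    have : k0 + 1 ≤ t := by omega
    calc s*(n-m) + s = s * (k0 + 1) := by rw [hk0]; ring
      _ ≤ s * t := Nat.mul_le_mul_left s this
  · apply nearOne_prod
    intro t ht
    simp only [mem_Icc] at ht
    apply nearOne_single
    have : k0 + 1 ≤ t := by omega
    calc s*(n-m) + s = s * (k0 + 1) := by rw [hk0]; ring
      _ ≤ s * t := Nat.mul_le_mul_left s this

lemma coeff_cXQ (c : ℤ) (g d m : ℕ) (Q : Polynomial ℤ) (hQ : NearOne m Q) (hlt : d - g < m) :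
    (C c * (X^g * Q)).coeff d = if g = d then c else 0 := by
  rw [Polynomial.coeff_C_mul, mul_comm (X^g : Polynomial ℤ) Q, Polynomial.coeff_mul_X_pow']
  by_cases hgd : g ≤ d
  · rw [if_pos hgd, coeff_nearOne Q (d - g) m hQ (by omega)]
    rcases eq_or_ne g d with rfl | hne
    · simp
    · rw [if_neg (by omega), if_neg hne, mul_zero]
  · rw [if_neg hgd, if_neg (by omega), mul_zero]

lemma tripling (n : ℕ) : ∏ t ∈ Icc 1 (3*n), (1 - (X:Polynomial ℤ)^t)
    = (∏ k ∈ Icc 1 n, ((1 - X^(3*k-2)) * (1 - X^(3*k-1)))) * ∏ k ∈ Icc 1 n, (1 - X^(3*k)) := by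
  induction n with
  | zero => simp
  | succ n ih =>
    have e1 : Icc 1 (3*(n+1)) = insert (3*n+3) (insert (3*n+2) (insert (3*n+1) (Icc 1 (3*n)))) := by
      ext x; simp only [mem_insert, mem_Icc]; omega
    have e2 : Icc 1 (n+1) = insert (n+1) (Icc 1 n) := (Finset.insert_Icc_right_eq_Icc_add_one (by omega)).symm
    rw [e1, e2, Finset.prod_insert (by simp only [mem_insert, mem_Icc]; omega),
      Finset.prod_insert (by simp only [mem_insert, mem_Icc]; omega),
      Finset.prod_insert (by simp only [mem_Icc]; omega),
      Finset.prod_insert (by simp only [mem_Icc]; omega),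
      Finset.prod_insert (by simp only [mem_Icc]; omega), ih]
    rw [show 3*(n+1)-2 = 3*n+1 from by omega, show 3*(n+1)-1 = 3*n+2 from by omega,
      show 3*(n+1) = 3*n+3 from by omega]
    ring

theorem coeff_euler (M d : ℕ) (h : d ≤ M) :
    (∏ t ∈ Icc 1 M, (1 - (X:Polynomial ℤ)^t)).coeff d
      = ∑ i ∈ Icc (-(d:ℤ)-1) ((d:ℤ)+1), (if gZ i = (d:ℤ) then eps i else 0) := by
  have hstab : ∀ M' : ℕ, d ≤ M' →
      ((∏ t ∈ Icc 1 M', (1 - (X:Polynomial ℤ)^t))).coeff d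
        = ((∏ t ∈ Icc 1 d, (1 - (X:Polynomial ℤ)^t))).coeff d := by
    intro M' hM'
    have := coeff_stab d d M' (le_refl d) hM' 0
    simpa using this
  set n := d + 1 with hn
  rw [hstab M h, ← hstab (3*n) (by omega)]
  rw [tripling n, pentId n, Finset.sum_mul, Polynomial.finset_sum_coeff]
  have hrange : Icc (-(n:ℤ)) ((n:ℤ)) = Icc (-(d:ℤ)-1) ((d:ℤ)+1) := by
    congr 1 <;> (push_cast; omega)
  rw [hrange]
  apply Finset.sum_congr rfl
  intro i hi
  simp only [mem_Icc] at hi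
  have hi1 : -(n:ℤ) ≤ i := by push_cast; omega
  have hi2 : i ≤ (n:ℤ) := by push_cast; omega
  have hshape : pentTerm n i * ∏ k ∈ Icc 1 n, (1 - (X:Polynomial ℤ)^(3*k))
      = C (eps i) * (X ^ (gZ i).toNat * (gb 3 (2*n) ((n:ℤ)+i) * ∏ k ∈ Icc 1 n, (1 - (X:Polynomial ℤ)^(3*k)))) := by
    rw [pentTerm, gbP]; ring
  rw [hshape, coeff_cXQ (eps i) _ d (3*(n - i.natAbs) + 3) _
    (by simpa using gb_mul_prod_nearOne 3 n i hi1 hi2) ?_]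
  · have hnn := gZ_nonneg i
    rcases eq_or_ne (gZ i) (d:ℤ) with he | he
    · rw [if_pos (by omega), if_pos he]
    · rw [if_neg (by omega), if_neg he]
  · have h1 := gZ_ge_abs i
    have h2 := gZ_nonneg i
    omega

theorem coeff_jac (M d : ℕ) (h : d ≤ M) :
    ((∏ t ∈ Icc 1 M, (1 - (X:Polynomial ℤ)^t))^3).coeff d
      = ∑ i ∈ Icc (-(2*(d:ℤ)+2)) (2*(d:ℤ)+2),
          (if tZ i = (d:ℤ) then eps i * ((2*(d:ℤ)+2)+i) else 0) := by
  set n := 2*d + 2 with hn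
  have hstab : ∀ M' : ℕ, d ≤ M' →
      ((∏ t ∈ Icc 1 M', (1 - (X:Polynomial ℤ)^t))^3).coeff d
        = ((∏ t ∈ Icc 1 d, (1 - (X:Polynomial ℤ)^t))^3).coeff d := by
    intro M' hM'
    have := coeff_stab d d M' (le_refl d) hM' 2
    simpa using this
  rw [hstab M h, ← hstab (n-1) (by omega)]
  -- multiply jId by E_n
  have hEn : ∏ t ∈ Icc 1 n, (1 - (X:Polynomial ℤ)^t)
      = (1 - X^n) * ∏ t ∈ Icc 1 (n-1), (1 - (X:Polynomial ℤ)^t) := by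
    rw [show Icc 1 n = insert n (Icc 1 (n-1)) from ?_, Finset.prod_insert (by simp only [mem_Icc]; omega)]
    rw [show n = n-1+1 from by omega]
    exact (Finset.insert_Icc_right_eq_Icc_add_one (by omega)).symm
  have hmain : (∏ t ∈ Icc 1 (n-1), (1 - (X:Polynomial ℤ)^t))^3 * ((1-X^n)^2)
      = ∑ i ∈ Icc (-(n:ℤ)) ((n:ℤ)), jTerm n i * ∏ t ∈ Icc 1 n, (1 - (X:Polynomial ℤ)^t) := by
    rw [← Finset.sum_mul, ← jId n (by omega), hEn, Finset.prod_pow]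
    ring
  have hco : ((∏ t ∈ Icc 1 (n-1), (1 - (X:Polynomial ℤ)^t))^3).coeff d
      = ((∏ t ∈ Icc 1 (n-1), (1 - (X:Polynomial ℤ)^t))^3 * ((1-X^n)^2)).coeff d := by
    rw [coeff_mul_nearOne _ _ d n (nearOne_pow n 2 (nearOne_single n n (le_refl n))) (by omega)]
  rw [hco, hmain, Polynomial.finset_sum_coeff]
  have hrange : Icc (-(n:ℤ)) ((n:ℤ)) = Icc (-(2*(d:ℤ)+2)) (2*(d:ℤ)+2) := by
    congr 1 <;> (push_cast; omega)
  rw [hrange]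
  apply Finset.sum_congr rfl
  intro i hi
  simp only [mem_Icc] at hi
  have hi1 : -(n:ℤ) ≤ i := by push_cast; omega
  have hi2 : i ≤ (n:ℤ) := by push_cast; omega
  have hprodshape : ∏ k ∈ Icc 1 n, (1 - (X:Polynomial ℤ)^(1*k)) = ∏ t ∈ Icc 1 n, (1 - (X:Polynomial ℤ)^t) := by
    apply Finset.prod_congr rfl; intro x _; rw [one_mul]
  have hshape : jTerm n i * ∏ t ∈ Icc 1 n, (1 - (X:Polynomial ℤ)^t)
      = C (eps i * ((n:ℤ)+i)) * (X ^ (tZ i).toNat * (gb 1 (2*n) ((n:ℤ)+i) * ∏ k ∈ Icc 1 n, (1 - (X:Polynomial ℤ)^(1*k)))) := by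
    rw [jTerm, gbJ, hprodshape, ← Polynomial.C_eq_intCast]
    simp only [Int.cast_id]
    ring
  rw [hshape, coeff_cXQ _ _ d (1*(n - i.natAbs) + 1) _
    (by rw [hprodshape] at *; simpa using gb_mul_prod_nearOne 1 n i hi1 hi2) ?_]
  · have hnn := tZ_nonneg i
    have hcast : ((n:ℕ):ℤ) = 2*(d:ℤ)+2 := by push_cast; omega
    rcases eq_or_ne (tZ i) (d:ℤ) with he | he
    · rw [if_pos (by omega), if_pos he, hcast]
    · rw [if_neg (by omega), if_neg he]
  · have h1 := tZ_ge_abs i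
    have h2 := tZ_nonneg i
    omega

lemma eps_neg (i : ℤ) : eps (-i) = eps i := by
  unfold eps
  simp [even_neg]

lemma eps_reflect (k : ℤ) : eps (-k-1) = -eps k := by
  rw [show (-k-1 : ℤ) = -(k+1) by ring, eps_neg, eps_add]

lemma tZ_reflect (k : ℤ) : tZ (-k-1) = tZ k := by
  have h1 := twot (-k-1)
  have h2 := twot k
  nlinarith [h1, h2]

lemma jac_sum_pair (b : ℤ) (hb : 0 ≤ b) :
    (∑ i ∈ Icc (-(2*b+2)) (2*b+2), (if tZ i = b then eps i * ((2*b+2)+i) else 0))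
      = ∑ k ∈ Icc (0:ℤ) (2*b+1), (if tZ k = b then eps k * (2*k+1) else 0) := by
  have hsplit : Icc (-(2*b+2)) (2*b+2) = Icc (-(2*b+2)) (-1) ∪ Icc 0 (2*b+2) := by
    ext x; simp only [mem_union, mem_Icc]; omega
  have hdisj : Disjoint (Icc (-(2*b+2)) (-1)) (Icc (0:ℤ) (2*b+2)) := by
    rw [Finset.disjoint_left]; intro x hx hx'; simp only [mem_Icc] at *; omega
  rw [hsplit, Finset.sum_union hdisj]
  -- negative part
  have hneg : ∑ i ∈ Icc (-(2*b+2)) (-1), (if tZ i = b then eps i * ((2*b+2)+i) else 0)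
      = ∑ k ∈ Icc (0:ℤ) (2*b+1), (if tZ k = b then -(eps k * ((2*b+1)-k)) else 0) := by
    have hmap : Icc (-(2*b+2)) (-1)
        = (Icc (0:ℤ) (2*b+1)).map ⟨fun k => -k-1, show Function.Injective _ from by intro x y h; dsimp at h; omega⟩ := by
      ext x
      simp only [mem_Icc, Finset.mem_map, Function.Embedding.coeFn_mk]
      constructor
      · intro hx; exact ⟨-x-1, by omega, by ring⟩
      · rintro ⟨a, ha, rfl⟩; omega
    rw [hmap, Finset.sum_map]
    apply Finset.sum_congr rfl
    intro k _
    simp only [Function.Embedding.coeFn_mk]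
    rw [tZ_reflect, eps_reflect]
    rcases eq_or_ne (tZ k) b with he | he
    · rw [if_pos he, if_pos he]; ring
    · rw [if_neg he, if_neg he]
  -- positive part
  have hpos : ∑ k ∈ Icc (0:ℤ) (2*b+2), (if tZ k = b then eps k * ((2*b+2)+k) else 0)
      = ∑ k ∈ Icc (0:ℤ) (2*b+1), (if tZ k = b then eps k * ((2*b+2)+k) else 0) := by
    rw [show Icc (0:ℤ) (2*b+2) = insert (2*b+2) (Icc 0 (2*b+1)) from ?_,
      Finset.sum_insert (by simp only [mem_Icc]; omega)]
    · rw [if_neg ?_, zero_add]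
      have := tZ_ge_abs (2*b+2)
      have h2 : (2*b+2).natAbs = 2*b+2 := by omega
      omega
    · ext x; simp only [mem_insert, mem_Icc]; omega
  rw [hneg, hpos, ← Finset.sum_add_distrib]
  apply Finset.sum_congr rfl
  intro k _
  rcases eq_or_ne (tZ k) b with he | he
  · rw [if_pos he, if_pos he, if_pos he]; ring
  · rw [if_neg he, if_neg he, if_neg he]; ring

lemma mod5_key (m a b i k : ℤ) (hab : a + b = 5*m + 4) (ha : gZ i = a) (hb : tZ k = b) :
    (5:ℤ) ∣ (2*k+1) := by
  have h1 := twog i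
  have h2 := twot k
  have key : (6*i-1)^2 + 3*(2*k+1)^2 = 120*m + 100 := by
    linear_combination -12*h1 - 12*h2 + 24*ha + 24*hb + 24*hab
  have hcast : ((6*i-1 : ℤ) : ZMod 5)^2 + 3*((2*k+1 : ℤ) : ZMod 5)^2 = 0 := by
    have h100 : ((120*m + 100 : ℤ) : ZMod 5) = 0 := by
      have he : (120*m + 100 : ℤ) = 5*(24*m+20) := by ring
      rw [he]
      push_cast
      have h5 : ((5:ℤ) : ZMod 5) = 0 := by decide
      push_cast at h5
      rw [h5]
      ring
    rw [← h100, ← key]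
    push_cast
    ring
  have hy : ((2*k+1 : ℤ) : ZMod 5) = 0 := by
    revert hcast
    generalize ((6*i-1 : ℤ) : ZMod 5) = x
    generalize ((2*k+1 : ℤ) : ZMod 5) = y
    revert x y
    decide
  exact (ZMod.intCast_zmod_eq_zero_iff_dvd _ 5).mp hy

lemma pow5_char (y : PowerSeries (ZMod 5)) : (1 - y)^5 = 1 - y^5 := by
  have h5 : (5 : PowerSeries (ZMod 5)) = 0 := by
    have h : ((5:ℕ) : ZMod 5) = 0 := by decide
    rw [show (5 : PowerSeries (ZMod 5)) = ((5:ℕ) : PowerSeries (ZMod 5)) by norm_cast,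
      ← map_natCast ((PowerSeries.C (R := ZMod 5))) 5, h, map_zero]
  linear_combination (y^4 - 2*y^3 + 2*y^2 - y) * h5


/-- With `d` the coefficients of `∏_{t≥1}(1-q^{5 t})/(1-q^t)` (each coefficient computed
from sufficiently long truncations in `ℤ⟦X⟧`), we have `d(5 n + 4) ≡ 0 (mod 5)`. -/
theorem stmt8 (d : ℕ → ℤ)
    (hd : ∀ N : ℕ, d N =
      PowerSeries.coeff N
        ((∏ t ∈ Finset.Icc 1 N, (1 - (PowerSeries.X : PowerSeries ℤ) ^ (5 * t))) *
          PowerSeries.invOfUnit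
            (∏ t ∈ Finset.Icc 1 N, (1 - (PowerSeries.X : PowerSeries ℤ) ^ t)) 1)) :
    ∀ n : ℕ, (5 : ℤ) ∣ d (5 * n + 4) := by
  intro n
  rw [hd (5*n+4)]
  set N := 5*n+4 with hN
  set φ : ℤ →+* ZMod 5 := Int.castRingHom (ZMod 5) with hφ
  set Bz : PowerSeries ℤ := ∏ t ∈ Icc 1 N, (1 - (PowerSeries.X : PowerSeries ℤ)^t) with hBz
  set B' : PowerSeries (ZMod 5) := ∏ t ∈ Icc 1 N, (1 - (PowerSeries.X : PowerSeries (ZMod 5))^t) with hB'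
  set P : Polynomial ℤ := ∏ t ∈ Icc 1 N, (1 - (X : Polynomial ℤ)^t) with hP
  -- constant coefficient of Bz is 1
  have hconst : PowerSeries.constantCoeff Bz = 1 := by
    rw [hBz, map_prod]
    apply Finset.prod_eq_one
    intro t ht
    simp only [mem_Icc] at ht
    rw [map_sub, map_one, map_pow, PowerSeries.constantCoeff_X, zero_pow (by omega), sub_zero]
  have hunit : Bz * PowerSeries.invOfUnit Bz 1 = 1 :=
    PowerSeries.mul_invOfUnit Bz 1 (by rw [hconst]; simp)
  have hmapB : PowerSeries.map φ Bz = B' := by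
    rw [hBz, hB', map_prod]
    apply Finset.prod_congr rfl
    intro t _
    rw [map_sub, map_one, map_pow, PowerSeries.map_X]
  have hmapA : PowerSeries.map φ (∏ t ∈ Icc 1 N, (1 - (PowerSeries.X : PowerSeries ℤ)^(5*t)))
      = B'^5 := by
    rw [map_prod, hB', ← Finset.prod_pow]
    apply Finset.prod_congr rfl
    intro t _
    rw [map_sub, map_one, map_pow, PowerSeries.map_X, pow5_char (PowerSeries.X^t), ← pow_mul,
      mul_comm t 5]
  have hVB : B' * PowerSeries.map φ (PowerSeries.invOfUnit Bz 1) = 1 := by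
    rw [← hmapB, ← map_mul, hunit, map_one]
  -- reduce to ZMod 5 statement
  have h5nat : ((5:ℕ) : ℤ) = 5 := by norm_num
  rw [← h5nat]
  apply (ZMod.intCast_zmod_eq_zero_iff_dvd _ 5).mp
  have hφc : ∀ z : ℤ, (z : ZMod 5) = φ z := fun _ => rfl
  rw [hφc, ← PowerSeries.coeff_map, map_mul, hmapA,
    show B'^5 * PowerSeries.map φ (PowerSeries.invOfUnit Bz 1) = B' * B'^3 from by
      calc B'^5 * PowerSeries.map φ (PowerSeries.invOfUnit Bz 1)
          = B'^4 * (B' * PowerSeries.map φ (PowerSeries.invOfUnit Bz 1)) := by ring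
        _ = B'^4 := by rw [hVB, mul_one]
        _ = B' * B'^3 := by ring,
    PowerSeries.coeff_mul]
  -- translate coefficients to polynomial coefficients
  have hcoeP : ((P : Polynomial ℤ) : PowerSeries ℤ) = Bz := by
    rw [hP, hBz, ← Polynomial.coeToPowerSeries.ringHom_apply, map_prod]
    apply Finset.prod_congr rfl
    intro t _
    rw [map_sub, map_one, map_pow, Polynomial.coeToPowerSeries.ringHom_apply, Polynomial.coe_X]
  have hcoeffB : ∀ c : ℕ, PowerSeries.coeff c B' = ((P.coeff c : ℤ) : ZMod 5) := by
    intro c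
    rw [← hmapB, PowerSeries.coeff_map, ← hcoeP, Polynomial.coeff_coe]
    rfl
  have hcoeffB3 : ∀ c : ℕ, PowerSeries.coeff c (B'^3) = (((P^3).coeff c : ℤ) : ZMod 5) := by
    intro c
    rw [← hmapB, ← map_pow, PowerSeries.coeff_map, ← hcoeP, ← Polynomial.coe_pow,
      Polynomial.coeff_coe]
    rfl
  have hsum : ∑ p ∈ Finset.HasAntidiagonal.antidiagonal N,
        PowerSeries.coeff p.1 B' * PowerSeries.coeff p.2 (B'^3)
      = ((∑ p ∈ Finset.HasAntidiagonal.antidiagonal N, (P.coeff p.1) * ((P^3).coeff p.2) : ℤ) : ZMod 5) := by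
    push_cast
    apply Finset.sum_congr rfl
    intro p _
    rw [hcoeffB, hcoeffB3]
  rw [hsum]
  apply (ZMod.intCast_zmod_eq_zero_iff_dvd _ 5).mpr
  rw [h5nat]
  apply Finset.dvd_sum
  rintro ⟨a, b⟩ hab
  rw [Finset.HasAntidiagonal.mem_antidiagonal] at hab
  simp only
  rw [hP, coeff_euler N a (by omega), coeff_jac N b (by omega),
    jac_sum_pair (b:ℤ) (by positivity), Finset.sum_mul_sum]
  apply Finset.dvd_sum
  intro i _
  apply Finset.dvd_sum
  intro k _
  by_cases h1 : gZ i = (a:ℤ)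
  · by_cases h2 : tZ k = (b:ℤ)
    · rw [if_pos h1, if_pos h2]
      have hdvd : (5:ℤ) ∣ (2*k+1) :=
        mod5_key n (a:ℤ) (b:ℤ) i k (by push_cast; omega) h1 h2
      exact Dvd.dvd.mul_left (Dvd.dvd.mul_left hdvd (eps k)) (eps i)
    · rw [if_neg h2, mul_zero]
      exact dvd_zero _
  · rw [if_neg h1, zero_mul]
    exact dvd_zero _
end

section
/- Define d_5(n) by Π_{t≥1}(1-q^{5t})/(1-q^t) = Σ_{n≥0} d_5(n) q^n. Then d_5(121n+9) ≡ 0 (mod 5) for all n ≥ 0. -/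
namespace Reg5
open Polynomial

/-- triangular number of an integer, `k(k+1)/2`, as a natural number -/
def tz (k : ℤ) : ℕ := (k * (k + 1) / 2).toNat

/-- pentagonal number of an integer, `j(3j-1)/2`, as a natural number -/
def gz (j : ℤ) : ℕ := (j * (3 * j - 1) / 2).toNat

lemma tz_cast (k : ℤ) : (tz k : ℤ) * 2 = k * (k + 1) := by
  have h2 : (2:ℤ) ∣ k * (k + 1) := (Int.even_mul_succ_self k).two_dvd
  have hnn : 0 ≤ k * (k + 1) := by
    rcases le_or_gt 0 k with h | h
    · exact mul_nonneg h (by omega)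
    · nlinarith [mul_nonneg (by omega : (0:ℤ) ≤ -k) (by omega : (0:ℤ) ≤ -(k+1))]
  rw [tz, Int.toNat_of_nonneg (Int.ediv_nonneg hnn (by norm_num)), Int.ediv_mul_cancel h2]

lemma gz_cast (j : ℤ) : (gz j : ℤ) * 2 = j * (3 * j - 1) := by
  have h2 : (2:ℤ) ∣ j * (3 * j - 1) := by
    rcases Int.even_or_odd j with h | h
    · exact Dvd.dvd.mul_right h.two_dvd _
    · exact Dvd.dvd.mul_left (by rcases h with ⟨m, hm⟩; exact ⟨3*m+1, by omega⟩) _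
  have hnn : 0 ≤ j * (3 * j - 1) := by
    rcases le_or_gt 1 j with h | h
    · exact mul_nonneg (by omega) (by omega)
    · nlinarith [mul_nonneg (by omega : (0:ℤ) ≤ -j) (by omega : (0:ℤ) ≤ -(3*j-1))]
  rw [gz, Int.toNat_of_nonneg (Int.ediv_nonneg hnn (by norm_num)), Int.ediv_mul_cancel h2]

/-- The key arithmetic fact: no pentagonal + triangular decomposition of `121n+9`. -/
lemma no_decomp (n : ℕ) (j k : ℤ) (h : (gz j : ℤ) + tz k = 121 * n + 9) : False := by
  have ht := tz_cast k
  have hg := gz_cast j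
  have key : (6*j - 1)^2 + 3*(2*k+1)^2 = 2904 * n + 220 := by nlinarith
  have h11 : ∀ a b : ZMod 11, a^2 + 3*b^2 = 0 → a = 0 ∧ b = 0 := by decide
  have hcast : ((6*j-1 : ℤ) : ZMod 11)^2 + 3*((2*k+1 : ℤ) : ZMod 11)^2 = 0 := by
    have h1 := congrArg (fun z : ℤ => (z : ZMod 11)) key
    push_cast at h1
    push_cast
    rw [h1, show (2904 : ZMod 11) = 0 by decide, show (220 : ZMod 11) = 0 by decide]
    ring
  obtain ⟨ha, hb⟩ := h11 _ _ hcast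
  rw [ZMod.intCast_zmod_eq_zero_iff_dvd] at ha hb
  obtain ⟨a, ha⟩ := ha
  obtain ⟨b, hb⟩ := hb
  push_cast at ha hb
  have key2 : (11*a)^2 + 3*(11*b)^2 = 2904 * n + 220 := by rw [← ha, ← hb]; exact key
  have key3 : ∃ s : ℤ, 121 * s = 2904 * n + 220 := ⟨a^2 + 3*b^2, by linarith [key2]⟩
  obtain ⟨s, hs⟩ := key3
  omega

/-- Gaussian binomial coefficient as a polynomial in `ℤ[X]`. -/
noncomputable def GB : ℕ → ℕ → Polynomial ℤ
  | _, 0 => 1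
  | 0, _ + 1 => 0
  | n + 1, k + 1 => GB n (k + 1) + X ^ (n - k) * GB n k

@[simp] lemma GB_zero_right (n : ℕ) : GB n 0 = 1 := by cases n <;> rfl

lemma GB_succ_succ (n k : ℕ) : GB (n+1) (k+1) = GB n (k+1) + X ^ (n - k) * GB n k := rfl

lemma GB_eq_zero : ∀ {n k : ℕ}, n < k → GB n k = 0 := by
  intro n
  induction n with
  | zero => intro k h; match k, h with | k+1, _ => rfl
  | succ n ih =>
    intro k h
    match k, h with
    | k+1, h =>
      rw [GB_succ_succ, ih (by omega), ih (by omega), mul_zero, add_zero]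

@[simp] lemma GB_self : ∀ n, GB n n = 1 := by
  intro n
  induction n with
  | zero => rfl
  | succ n ih =>
    rw [GB_succ_succ, GB_eq_zero (by omega), ih, zero_add, Nat.sub_self, pow_zero, one_mul]

lemma GB_one (n : ℕ) : GB n 1 = ∑ i ∈ Finset.range n, X ^ i := by
  induction n with
  | zero => simp [show GB 0 1 = 0 from rfl]
  | succ n ih =>
    rw [GB_succ_succ, ih, GB_zero_right, Nat.sub_zero, mul_one, Finset.sum_range_succ]

/-- second Pascal rule -/
lemma GB_pascal₂ : ∀ n k : ℕ, GB (n+1) (k+1) = X ^ (k+1) * GB n (k+1) + GB n k := by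
  intro n
  induction n with
  | zero =>
    intro k
    match k with
    | 0 => simp [GB_succ_succ, show GB 0 1 = 0 from rfl]
    | k+1 => simp [GB_succ_succ, show GB 0 (k+2) = 0 from rfl, show GB 0 (k+1) = 0 from rfl]
  | succ n ih =>
    intro k
    match k with
    | 0 =>
      simp only [Nat.zero_add, Nat.sub_zero]
      rw [GB_succ_succ, GB_zero_right, GB_one]
      simp only [Nat.sub_zero, mul_one, pow_one]
      rw [← Finset.sum_range_succ, Finset.sum_range_succ' (fun i => (X:ℤ[X])^i) (n+1)]
      simp [Finset.mul_sum, pow_succ, mul_comm]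
    | k+1 =>
      rcases le_or_gt (k+1) n with h | h
      · have hL : GB (n+2) (k+2)
            = (X^(k+2)*GB n (k+2) + GB n (k+1)) + X^(n-k) * (X^(k+1)*GB n (k+1) + GB n k) := by
          rw [GB_succ_succ (n+1) (k+1), show n+1-(k+1) = n-k by omega, ih (k+1), ih k]
        have hR : X^(k+1+1) * GB (n+1) (k+1+1) + GB (n+1) (k+1)
            = X^(k+2) * (GB n (k+2) + X^(n-(k+1)) * GB n (k+1)) + (GB n (k+1) + X^(n-k) * GB n k) := by
          rw [GB_succ_succ n (k+1), GB_succ_succ n k]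
        rw [hL, hR]
        have hx : (X:ℤ[X])^(n-k) * X^(k+1) = X^(k+2) * X^(n-(k+1)) := by
          rw [← pow_add, ← pow_add]; congr 1; omega
        linear_combination (GB n (k+1)) * hx
      · have hA : GB n (k+2) = 0 := GB_eq_zero (by omega)
        have hB : GB n (k+1) = 0 := GB_eq_zero (by omega)
        rw [GB_succ_succ (n+1) (k+1), GB_succ_succ n (k+1), hA, hB]
        rcases eq_or_lt_of_le (by omega : n ≤ k) with he | hl
        · subst he
          simp [Nat.sub_self, show n+1-(n+1) = 0 by omega]
        · have hC : GB (n+1) (k+1) = 0 := GB_eq_zero (by omega)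
          simp [hC]

/-- double Pascal rule needed for the finite triple-product induction -/
lemma GB_pascal_sq (n i : ℕ) :
    GB (n+2) (i+2) = GB n (i+1) * (1 + X^(n+1)) + X^(i+2) * GB n (i+2) + X^(n - i) * GB n i := by
  rw [show GB (n+2) (i+2) = X^(i+2) * GB (n+1) (i+2) + GB (n+1) (i+1) from GB_pascal₂ (n+1) (i+1),
    GB_succ_succ n (i+1), GB_succ_succ n i]
  rcases le_or_gt (i+1) n with h | h
  · have hx : (X:ℤ[X])^(i+2) * X^(n-(i+1)) = X^(n+1) := by rw [← pow_add]; congr 1; omega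
    linear_combination (GB n (i+1)) * hx
  · have hB : GB n (i+1) = 0 := GB_eq_zero (by omega)
    have hA : GB n (i+2) = 0 := GB_eq_zero (by omega)
    simp [hA, hB]

/-- product formula: `GB n i * (X;X)_i = ∏_{j=n-i+1}^{n} (1-X^j)` -/
lemma GB_prod : ∀ n i : ℕ, i ≤ n →
    GB n i * ∏ j ∈ Finset.Icc 1 i, (1 - X^j) = ∏ j ∈ Finset.Icc (n-i+1) n, (1 - (X:ℤ[X])^j) := by
  intro n
  induction n with
  | zero => intro i h; interval_cases i; simp
  | succ n ih =>
    intro i h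
    rcases Nat.eq_or_lt_of_le h with he | hlt
    · subst he
      simp [show n+1-(n+1)+1 = 1 by omega]
    · have hi : i ≤ n := by omega
      match i, hi with
      | 0, _ => simp [show n+1-0+1 = n+2 by omega, Finset.Icc_eq_empty (by omega : ¬ (n+2 ≤ n+1))]
      | i+1, hi =>
        have hii : i ≤ n := by omega
        have splitL : ∏ j ∈ Finset.Icc 1 (i+1), (1 - (X:ℤ[X])^j)
            = (∏ j ∈ Finset.Icc 1 i, (1 - X^j)) * (1 - X^(i+1)) :=
          Finset.prod_Icc_succ_top (by omega) _
        have splitR : ∏ j ∈ Finset.Icc (n+1-(i+1)+1) (n+1), (1 - (X:ℤ[X])^j)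
            = (∏ j ∈ Finset.Icc (n-i+1) n, (1 - X^j)) * (1 - X^(n+1)) := by
          rw [show n+1-(i+1)+1 = n-i+1 by omega]
          exact Finset.prod_Icc_succ_top (by omega) _
        have hbot : ∏ j ∈ Finset.Icc (n-(i+1)+1) n, (1 - (X:ℤ[X])^j)
            = (1 - X^(n-i)) * ∏ j ∈ Finset.Icc (n-i+1) n, (1 - X^j) := by
          rw [← Finset.Ico_add_one_right_eq_Icc, ← Finset.Ico_add_one_right_eq_Icc, show n-(i+1)+1 = n-i by omega,
            Finset.prod_eq_prod_Ico_succ_bot (by omega : n-i < n+1)]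
        have h1 := ih (i+1) (by omega)
        have h2 := ih i hii
        rw [hbot] at h1
        have hx : (X:ℤ[X])^(n-i) * X^(i+1) = X^(n+1) := by rw [← pow_add]; congr 1; omega
        rw [GB_succ_succ n i]
        linear_combination h1 + (X^(n-i) * GB n i) * splitL + (X^(n-i)*(1 - X^(i+1))) * h2
          - splitR - (∏ j ∈ Finset.Icc (n-i+1) n, (1 - (X:ℤ[X])^j)) * hx


lemma tz_succ (k : ℤ) : (tz (k+1) : ℤ) = tz k + (k + 1) := by
  have h1 := tz_cast (k+1)
  have h2 := tz_cast k
  nlinarith [h1, h2]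

/-- The finite triple product, a polynomial in `z` over `ℤ[X]`. -/
noncomputable def JL (m : ℕ) : Polynomial (Polynomial ℤ) :=
  ∏ j ∈ Finset.range m,
    ((1 - X * C ((Polynomial.X : Polynomial ℤ)^(j+1))) * (X - C ((Polynomial.X : Polynomial ℤ)^j)))

/-- Coefficients of `JL m` -/
noncomputable def cc (m i : ℕ) : Polynomial ℤ :=
  (-1)^(i+m) * GB (2*m) i * X^(tz ((i:ℤ) - m))

lemma cc_key0 (m : ℕ) : cc (m+1) 0 = -(X^m * cc m 0) := by
  unfold cc
  push_cast
  rw [show (0:ℤ) - ((m:ℤ)+1) = -((m:ℤ)+1) by ring, show (0:ℤ) - (m:ℤ) = -(m:ℤ) by ring]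
  have he : tz (-((m:ℤ)+1)) = m + tz (-(m:ℤ)) := by
    have := tz_succ (-((m:ℤ)+1))
    rw [show -((m:ℤ)+1) + 1 = -(m:ℤ) by ring] at this
    omega
  rw [he, pow_add, GB_zero_right, GB_zero_right]
  ring

lemma GB_one_succ (m : ℕ) : GB (2*m+2) 1 = (1 + X^(2*m+1)) + X * GB (2*m) 1 := by
  rw [GB_one, GB_one, Finset.mul_sum, Finset.sum_range_succ,
    Finset.sum_range_succ' (fun i => (X : Polynomial ℤ)^i) (2*m)]
  simp only [pow_zero, pow_succ]
  rw [add_comm ((∑ i ∈ Finset.range (2*m), X ^ i * X) + 1) ((X:Polynomial ℤ) ^ (2*m) * X)]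
  ring_nf

lemma cc_key1 (m : ℕ) : cc (m+1) 1 = cc m 0 * (1 + X^(2*m+1)) - X^m * cc m 1 := by
  unfold cc
  push_cast
  rw [show (1:ℤ) - ((m:ℤ)+1) = -(m:ℤ) by ring, show (0:ℤ) - (m:ℤ) = -(m:ℤ) by ring,
    show (1:ℤ) - (m:ℤ) = -(m:ℤ) + 1 by ring]
  have he : m + tz ((-(m:ℤ)) + 1) = tz (-(m:ℤ)) + 1 := by
    have := tz_succ (-(m:ℤ))
    omega
  have hx : (X : Polynomial ℤ)^m * X^(tz ((-(m:ℤ))+1)) = X^(tz (-(m:ℤ))) * X := by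
    rw [← pow_add, he, pow_add, pow_one]
  rw [show 2*(m+1) = 2*m+2 by ring, GB_one_succ, GB_zero_right]
  linear_combination (-((-1:Polynomial ℤ)^m * GB (2*m) 1)) * hx

lemma cc_key (m i : ℕ) :
    cc (m+1) (i+2) = cc m (i+1) * (1 + X^(2*m+1)) - X^m * cc m (i+2) - X^(m+1) * cc m i := by
  unfold cc
  push_cast
  rw [show ((i:ℤ)+2) - ((m:ℤ)+1) = ((i:ℤ)+1) - m by ring,
    show ((i:ℤ)+2) - (m:ℤ) = ((i:ℤ)+1) - m + 1 by ring,
    show (i:ℤ) - (m:ℤ) = ((i:ℤ)+1) - m - 1 by ring,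
    show ((i:ℤ)+1) - (m:ℤ) = ((i:ℤ)+1) - m by ring]
  set k : ℤ := ((i:ℤ)+1) - m with hk
  rcases le_or_gt i (2*m) with h | h
  · have hs1 := tz_succ k
    have hs2 := tz_succ (k-1)
    rw [show k - 1 + 1 = k by ring] at hs2
    have e1 : m + tz (k + 1) = tz k + (i + 2) := by omega
    have e2 : (m+1) + tz (k-1) = tz k + (2*m - i) := by omega
    have hx1 : (X:Polynomial ℤ)^m * X^(tz (k+1)) = X^(tz k) * X^(i+2) := by
      rw [← pow_add, ← pow_add, e1]
    have hx2 : (X:Polynomial ℤ)^(m+1) * X^(tz (k-1)) = X^(tz k) * X^(2*m - i) := by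
      rw [← pow_add, ← pow_add, e2]
    rw [show 2*(m+1) = 2*m+2 by ring]
    linear_combination (-(((-1:Polynomial ℤ)^(i+m))) * X^(tz k)) * GB_pascal_sq (2*m) i
      + (((-1:Polynomial ℤ)^(i+m)) * GB (2*m) (i+2)) * hx1
      + (((-1:Polynomial ℤ)^(i+m)) * GB (2*m) i) * hx2
  · have z1 : GB (2*m) (i+1) = 0 := GB_eq_zero (by omega)
    have z2 : GB (2*m) (i+2) = 0 := GB_eq_zero (by omega)
    have z3 : GB (2*m) i = 0 := GB_eq_zero (by omega)
    have z4 : GB (2*(m+1)) (i+2) = 0 := GB_eq_zero (by omega)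
    rw [z1, z2, z3, z4]
    ring

lemma cc_zero_zero : cc 0 0 = 1 := by
  unfold cc
  norm_num [show tz 0 = 0 from rfl]

lemma cc_zero_succ (i : ℕ) : cc 0 (i+1) = 0 := by
  unfold cc
  rw [show 2*0 = 0 by ring, GB_eq_zero (by omega)]
  ring

theorem coeff_JL (m : ℕ) : ∀ i, (JL m).coeff i = cc m i := by
  induction m with
  | zero =>
    intro i
    rw [JL, Finset.range_zero, Finset.prod_empty]
    match i with
    | 0 => simp [cc_zero_zero]
    | i+1 => simp [cc_zero_succ, Polynomial.coeff_one]
  | succ m ih =>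
    have hstep : JL (m+1) = JL m * X^1 + C ((Polynomial.X : Polynomial ℤ)^(2*m+1)) * (JL m * X^1)
        - C ((Polynomial.X : Polynomial ℤ)^m) * JL m
        - C ((Polynomial.X : Polynomial ℤ)^(m+1)) * (JL m * X^2) := by
      have hC : (C ((Polynomial.X : Polynomial ℤ)^(2*m+1)) : Polynomial (Polynomial ℤ))
          = C ((Polynomial.X : Polynomial ℤ)^(m+1)) * C ((Polynomial.X : Polynomial ℤ)^m) := by
        rw [← C_mul, ← pow_add, show m+1+m = 2*m+1 by omega]
      rw [JL, Finset.prod_range_succ, ← JL, hC]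
      ring
    intro i
    rw [hstep]
    simp only [Polynomial.coeff_add, Polynomial.coeff_sub, Polynomial.coeff_C_mul,
      Polynomial.coeff_mul_X_pow']
    match i with
    | 0 =>
      norm_num
      rw [ih 0, cc_key0]
      try ring
    | 1 =>
      norm_num
      rw [ih 0, ih 1, cc_key1]
      ring
    | i+2 =>
      rw [if_pos (show 1 ≤ i+2 by omega), if_pos (show 2 ≤ i+2 by omega),
        show i+2-1 = i+1 by omega, show i+2-2 = i by omega,
        ih (i+1), ih (i+2), ih i, cc_key]
      ring

/-- Euler product truncation -/
noncomputable def Ei (m : ℕ) : Polynomial ℤ := ∏ j ∈ Finset.Icc 1 m, (1 - X^j)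

lemma prod_range_shift {M : Type*} [CommMonoid M] (f : ℕ → M) (m : ℕ) :
    ∏ j ∈ Finset.range m, f (j+1) = ∏ j ∈ Finset.Icc 1 m, f j := by
  induction m with
  | zero => simp
  | succ m ih => rw [Finset.prod_range_succ, ih, Finset.prod_Icc_succ_top (by omega)]

lemma JL_eq_sum (m : ℕ) : JL m = ∑ i ∈ Finset.range (2*m+1), C (cc m i) * X^i := by
  apply Polynomial.ext
  intro n
  rw [Polynomial.finset_sum_coeff, coeff_JL]
  simp only [Polynomial.coeff_C_mul, Polynomial.coeff_X_pow, mul_ite, mul_one, mul_zero]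
  rw [Finset.sum_ite_eq (Finset.range (2*m+1)) n (fun i => cc m i)]
  by_cases h : n ∈ Finset.range (2*m+1)
  · rw [if_pos h]
  · rw [if_neg h, cc, GB_eq_zero (by simp at h; omega), mul_zero, zero_mul]

/-- the `z`-derivative of `JL (m+1)` evaluated at `z = 1` -/
lemma A_ident (m : ℕ) :
    Ei (m+1) * Ei m = ∑ i ∈ Finset.range (2*(m+1)+1), cc (m+1) i * (i : Polynomial ℤ) := by
  have hfac : JL (m+1) = (X - 1) *
      ((∏ j ∈ Finset.range (m+1), (1 - X * C ((Polynomial.X : Polynomial ℤ)^(j+1)))) *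
       (∏ j ∈ Finset.range m, (X - C ((Polynomial.X : Polynomial ℤ)^(j+1))))) := by
    rw [JL, Finset.prod_mul_distrib, Finset.prod_range_succ' (fun j => (X:Polynomial (Polynomial ℤ)) - C ((Polynomial.X : Polynomial ℤ)^j)) m]
    simp only [pow_zero, map_one]
    ring
  have hL : Polynomial.eval 1 (Polynomial.derivative (JL (m+1))) = Ei (m+1) * Ei m := by
    rw [hfac, Polynomial.derivative_mul]
    simp only [Polynomial.eval_add, Polynomial.eval_mul, Polynomial.eval_sub, Polynomial.eval_X,
      Polynomial.eval_one, Polynomial.derivative_sub, Polynomial.derivative_X,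
      Polynomial.derivative_one, sub_self, zero_mul, sub_zero]
    rw [Polynomial.eval_prod, Polynomial.eval_prod]
    simp only [Polynomial.eval_sub, Polynomial.eval_mul, Polynomial.eval_one, Polynomial.eval_X,
      Polynomial.eval_C, one_mul]
    rw [prod_range_shift (fun j => 1 - (Polynomial.X : Polynomial ℤ)^j),
      prod_range_shift (fun j => 1 - (Polynomial.X : Polynomial ℤ)^j), ← Ei, ← Ei]
    ring
  have hR : Polynomial.eval 1 (Polynomial.derivative (JL (m+1)))
      = ∑ i ∈ Finset.range (2*(m+1)+1), cc (m+1) i * (i : Polynomial ℤ) := by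
    rw [JL_eq_sum, Polynomial.derivative_sum, Polynomial.eval_finset_sum]
    apply Finset.sum_congr rfl
    intro i _
    rw [Polynomial.derivative_C_mul_X_pow]
    simp [mul_comm]
  rw [← hL, hR]

section Util

lemma dvd_mul_sub_mul {R : Type*} [CommRing R] {c a b a' b' : R}
    (ha : c ∣ a - a') (hb : c ∣ b - b') : c ∣ a*b - a'*b' := by
  have : a*b - a'*b' = a*(b - b') + (a - a')*b' := by ring
  rw [this]
  exact dvd_add (Dvd.dvd.mul_left hb a) (Dvd.dvd.mul_right ha b')

lemma tail_dvd {c : ℕ} (S : Finset ℕ) (f : ℕ → ℕ) (h : ∀ e ∈ S, c ≤ f e) :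
    (X : Polynomial ℤ)^c ∣ (∏ e ∈ S, (1 - X^(f e))) - 1 := by
  induction S using Finset.cons_induction with
  | empty => simp
  | cons a s ha ih =>
    rw [Finset.prod_cons]
    have h1 : (X : Polynomial ℤ)^c ∣ (∏ e ∈ s, (1 - X^(f e))) - 1 :=
      ih (fun e he => h e (Finset.mem_cons_of_mem he))
    have h2 : (X : Polynomial ℤ)^c ∣ X^(f a) := pow_dvd_pow _ (h a (Finset.mem_cons_self a s))
    have : (1 - (X:Polynomial ℤ)^(f a)) * (∏ e ∈ s, (1 - X^(f e))) - 1
        = (1 - X^(f a)) * ((∏ e ∈ s, (1 - X^(f e))) - 1) - X^(f a) := by ring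
    rw [this]
    exact dvd_sub (Dvd.dvd.mul_left h1 _) h2

lemma npow_neg_one (a b : ℕ) (h : a % 2 = b % 2) : ((-1 : Polynomial ℤ))^a = (-1)^b := by
  rcases Nat.even_or_odd a with ha | ha
  · rw [ha.neg_one_pow, (Nat.even_iff.2 (by rw [← h]; exact Nat.even_iff.1 ha)).neg_one_pow]
  · rw [ha.neg_one_pow, (Nat.odd_iff.2 (by rw [← h]; exact Nat.odd_iff.1 ha)).neg_one_pow]

lemma coeff_eq_of_dvd {a b : Polynomial ℤ} {D n : ℕ} (h : (X:Polynomial ℤ)^(D+1) ∣ a - b)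
    (hn : n ≤ D) : a.coeff n = b.coeff n := by
  obtain ⟨c, hc⟩ := h
  have : a = b + c * X^(D+1) := by rw [mul_comm]; linear_combination hc
  rw [this, Polynomial.coeff_add, Polynomial.coeff_mul_X_pow', if_neg (by omega), add_zero]

lemma Ei_split {a b : ℕ} (h : a ≤ b) :
    Ei b = Ei a * ∏ j ∈ Finset.Ioc a b, (1 - (X:Polynomial ℤ)^j) := by
  rw [Ei, Ei, show (1:ℕ) = 0 + 1 by rfl, Finset.Icc_add_one_left_eq_Ioc, Finset.Icc_add_one_left_eq_Ioc]
  exact (Finset.prod_Ioc_consecutive _ (by omega) h).symm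

lemma Ei_congr {a b c : ℕ} (hc : c ≤ a + 1) (hab : a ≤ b) :
    (X : Polynomial ℤ)^c ∣ Ei b - Ei a := by
  rw [Ei_split hab]
  have : Ei a * ∏ j ∈ Finset.Ioc a b, (1 - (X:Polynomial ℤ)^j) - Ei a
      = Ei a * ((∏ j ∈ Finset.Ioc a b, (1 - (X:Polynomial ℤ)^j)) - 1) := by ring
  rw [this]
  exact Dvd.dvd.mul_left
    (dvd_trans (pow_dvd_pow _ hc) (tail_dvd _ _ (fun e he => by
      simp only [Finset.mem_Ioc] at he; omega))) _

end Util

lemma tz_neg (k : ℤ) : tz (-(k+1)) = tz k := by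
  unfold tz
  have h : -(k+1) * (-(k+1)+1) = k * (k+1) := by ring
  rw [h]

lemma E3_term (D M : ℕ) (hM : D + 1 ≤ M) (i : ℕ) (hi : i ≤ 2*M) :
    (X:Polynomial ℤ)^(D+1) ∣ Ei (2*M) * (cc M i * (i : Polynomial ℤ))
      - (-1:Polynomial ℤ)^(i+M) * (i : Polynomial ℤ) * X^(tz ((i:ℤ) - M)) := by
  set T1 : Polynomial ℤ := ∏ j ∈ Finset.Icc (2*M-i+1) (2*M), (1 - X^j) with hT1
  set T2 : Polynomial ℤ := ∏ j ∈ Finset.Ioc i (2*M), (1 - X^j) with hT2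
  have hGB := GB_prod (2*M) i hi
  rw [← Ei, ← hT1] at hGB
  have hsplit := Ei_split hi
  rw [← hT2] at hsplit
  set t := tz ((i:ℤ) - M) with htdef
  have hprod : Ei (2*M) * cc M i = (-1:Polynomial ℤ)^(i+M) * X^t * (T1 * T2) := by
    rw [hsplit, cc]
    linear_combination ((-1:Polynomial ℤ)^(i+M) * X^t * T2) * hGB
  have h2 := tz_cast ((i:ℤ) - M)
  have hb1 : ((t : ℤ)) ≥ (i:ℤ) - M - 1 := by nlinarith [h2]
  have hb2 : ((t : ℤ)) ≥ (M:ℤ) - i - 1 := by nlinarith [h2]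
  set c : ℕ := min (2*M - i + 1) (i+1) with hc
  have he : D + 1 ≤ t + c := by omega
  have d1 : (X:Polynomial ℤ)^c ∣ T1 - 1 :=
    dvd_trans (pow_dvd_pow _ (min_le_left _ _))
      (tail_dvd _ id (fun e heq => by simp only [Finset.mem_Icc] at heq; simp only [id_eq]; omega))
  have d2 : (X:Polynomial ℤ)^c ∣ T2 - 1 :=
    dvd_trans (pow_dvd_pow _ (min_le_right _ _))
      (tail_dvd _ id (fun e heq => by simp only [Finset.mem_Ioc] at heq; simp only [id_eq]; omega))
  have d12 : (X:Polynomial ℤ)^c ∣ T1 * T2 - 1 := by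
    have := dvd_mul_sub_mul d1 d2
    rwa [mul_one] at this
  have hT : (X:Polynomial ℤ)^(D+1) ∣ X^t * (T1 * T2 - 1) :=
    dvd_trans (pow_dvd_pow _ he) (by rw [pow_add]; exact mul_dvd_mul_left _ d12)
  have hdiff : Ei (2*M) * (cc M i * (i : Polynomial ℤ))
      - (-1:Polynomial ℤ)^(i+M) * (i : Polynomial ℤ) * X^t
      = ((-1:Polynomial ℤ)^(i+M) * (i : Polynomial ℤ)) * (X^t * (T1 * T2 - 1)) := by
    linear_combination (i : Polynomial ℤ) * hprod
  rw [hdiff]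
  exact Dvd.dvd.mul_left hT _

lemma E3_sum (D M : ℕ) (hM : D+1 ≤ M) :
    (X:Polynomial ℤ)^(D+1) ∣ Ei (2*M) * (Ei M * Ei (M-1))
      - ∑ i ∈ Finset.range (2*M+1), (-1:Polynomial ℤ)^(i+M) * (i : Polynomial ℤ) * X^(tz ((i:ℤ)-M)) := by
  obtain ⟨m, rfl⟩ : ∃ m, M = m + 1 := ⟨M - 1, by omega⟩
  have hA := A_ident m
  simp only [Nat.add_sub_cancel]
  rw [hA, Finset.mul_sum, show 2*(m+1)+1 = 2*(m+1)+1 from rfl, ← Finset.sum_sub_distrib]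
  exact Finset.dvd_sum (fun i hii =>
    E3_term D (m+1) hM i (by simp only [Finset.mem_range] at hii; omega))

lemma E3_pair (D M : ℕ) (hM : D+1 ≤ M) :
    (X:Polynomial ℤ)^(D+1) ∣
      (∑ i ∈ Finset.range (2*M+1), (-1:Polynomial ℤ)^(i+M) * (i : Polynomial ℤ) * X^(tz ((i:ℤ)-M)))
      - ∑ k ∈ Finset.range M, C (((-1)^k * (2*(k:ℤ)+1)) : ℤ) * X^(tz (k:ℤ)) := by
  set f : ℕ → Polynomial ℤ := fun i => (-1:Polynomial ℤ)^(i+M) * (i : Polynomial ℤ) * X^(tz ((i:ℤ)-M)) with hf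
  have hmain : ∑ i ∈ Finset.range (2*M), f i
      = ∑ k ∈ Finset.range M, C (((-1)^k * (2*(k:ℤ)+1)) : ℤ) * X^(tz (k:ℤ)) := by
    rw [show 2*M = M + M by ring, Finset.sum_range_add,
      ← Finset.sum_range_reflect (fun i => f i) M, ← Finset.sum_add_distrib]
    apply Finset.sum_congr rfl
    intro k hk
    simp only [Finset.mem_range] at hk
    simp only [hf]
    rw [show ((M - 1 - k : ℕ) : ℤ) - (M:ℤ) = -(((k:ℤ))+1) by omega,
      show ((M + k : ℕ) : ℤ) - (M:ℤ) = (k:ℤ) by push_cast; ring,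
      tz_neg (k:ℤ),
      npow_neg_one (M-1-k+M) (k+1) (by omega),
      npow_neg_one (M+k+M) k (by omega),
      show M-1-k = M-(k+1) by omega, Nat.cast_sub (show k+1 ≤ M by omega)]
    simp only [map_mul, map_pow, map_neg, map_one, map_add, map_natCast, map_ofNat]
    push_cast
    ring
  rw [Finset.sum_range_succ, hmain, add_sub_cancel_left]
  have harg : ((2*M : ℕ) : ℤ) - (M:ℤ) = (M:ℤ) := by push_cast; ring
  simp only [hf, harg]
  have htM : D + 1 ≤ tz ((M:ℤ)) := by
    have := tz_cast ((M:ℤ))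
    nlinarith [this]
  exact Dvd.dvd.mul_left (pow_dvd_pow _ htM) _

lemma E3_final (D M : ℕ) (hM : D+1 ≤ M) :
    (X:Polynomial ℤ)^(D+1) ∣ Ei (2*M) * (Ei M * Ei (M-1))
      - ∑ k ∈ Finset.range M, C (((-1)^k * (2*(k:ℤ)+1)) : ℤ) * X^(tz (k:ℤ)) := by
  have h1 := E3_sum D M hM
  have h2 := E3_pair D M hM
  have := dvd_add h1 h2
  rwa [sub_add_sub_cancel] at this

lemma E3_witness {L n : ℕ} (h : n ≤ L) (hne : ((Ei L)^ 3).coeff n ≠ 0) :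
    ∃ k : ℕ, tz (k:ℤ) = n := by
  by_contra hcon
  push_neg at hcon
  set M := n + 1 with hM
  have dL : ∀ b : ℕ, n ≤ b → (X:Polynomial ℤ)^(n+1) ∣ Ei b - Ei n :=
    fun b hb => Ei_congr (by omega) hb
  have d1 : (X:Polynomial ℤ)^(n+1) ∣ Ei L - Ei (2*M) := by
    have := dvd_sub (dL L h) (dL (2*M) (by omega))
    rwa [sub_sub_sub_cancel_right] at this
  have d2 : (X:Polynomial ℤ)^(n+1) ∣ Ei L - Ei M := by
    have := dvd_sub (dL L h) (dL M (by omega))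
    rwa [sub_sub_sub_cancel_right] at this
  have d3 : (X:Polynomial ℤ)^(n+1) ∣ Ei L - Ei (M-1) := by
    have : M - 1 = n := by omega
    rw [this]
    exact dL L h
  have dcube : (X:Polynomial ℤ)^(n+1) ∣ (Ei L)^3 - Ei (2*M) * (Ei M * Ei (M-1)) := by
    have := dvd_mul_sub_mul d1 (dvd_mul_sub_mul d2 d3)
    rwa [show (Ei L) * (Ei L * Ei L) = (Ei L)^3 by ring] at this
  have hfin := E3_final n M (by omega)
  have : (X:Polynomial ℤ)^(n+1) ∣ (Ei L)^3
      - ∑ k ∈ Finset.range M, C (((-1)^k * (2*(k:ℤ)+1)) : ℤ) * X^(tz (k:ℤ)) := by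
    have := dvd_add dcube hfin
    rwa [sub_add_sub_cancel] at this
  have hco := coeff_eq_of_dvd this (le_refl n)
  rw [Polynomial.finset_sum_coeff] at hco
  apply hne
  rw [hco]
  apply Finset.sum_eq_zero
  intro k _
  rw [Polynomial.coeff_C_mul, Polynomial.coeff_X_pow, if_neg (fun hh => hcon k (by omega)), mul_zero]

/-- substitution `p(X) ↦ p(X³)` as eval₂ -/
noncomputable def ph3 : Polynomial ℤ →+* Polynomial ℤ := Polynomial.eval₂RingHom Polynomial.C (X^3)

lemma ph3_X_pow (k : ℕ) : ph3 ((Polynomial.X : Polynomial ℤ)^k) = X^(3*k) := by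
  rw [ph3, Polynomial.coe_eval₂RingHom, Polynomial.eval₂_X_pow, ← pow_mul, mul_comm]

/-- the two-variable substitution `z ↦ X`, coefficients via `ph3`. -/
noncomputable def Phi : Polynomial (Polynomial ℤ) →+* Polynomial ℤ :=
  Polynomial.eval₂RingHom ph3 X

lemma exp_ident (m' i : ℕ) :
    3 * tz ((i:ℤ) - (m'+1)) + i = m' + gz ((i:ℤ) + 1 - (m'+1)) := by
  set k : ℤ := (i:ℤ) - (m'+1) with hk
  have h1 := tz_cast k
  have h2 := gz_cast (k+1)
  have : (3 * (tz k : ℤ) + i) = (m' : ℤ) + (gz (k+1) : ℤ) := by nlinarith [h1, h2]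
  have harg : (i:ℤ) + 1 - ((m':ℤ)+1) = k + 1 := by rw [hk]; ring
  rw [harg]
  exact_mod_cast this

lemma E1A (m' : ℕ) :
    (X - 1) * (∏ j ∈ Finset.range (m'+1), (1 - (X:Polynomial ℤ)^(3*j+4)))
        * (∏ j ∈ Finset.range m', (1 - (X:Polynomial ℤ)^(3*j+2)))
    = ∑ i ∈ Finset.range (2*(m'+1)+1),
        (-1:Polynomial ℤ)^(i+(m'+1)) * (ph3 (GB (2*(m'+1)) i)) * X^(gz ((i:ℤ)+1-(m'+1))) := by
  set m := m' + 1 with hm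
  have hJ := congrArg Phi (JL_eq_sum m)
  -- LHS of hJ
  have hL : Phi (JL m) = X^m' * ((X - 1) * (∏ j ∈ Finset.range m, (1 - (X:Polynomial ℤ)^(3*j+4)))
      * (∏ j ∈ Finset.range m', (1 - (X:Polynomial ℤ)^(3*j+2)))) := by
    rw [JL, map_prod]
    have hterm : ∀ j, Phi ((1 - X * C ((Polynomial.X : Polynomial ℤ)^(j+1)))
        * (X - C ((Polynomial.X : Polynomial ℤ)^j)))
        = (1 - (X:Polynomial ℤ)^(3*j+4)) * (X - X^(3*j)) := by
      intro j
      rw [map_mul, map_sub, map_sub, map_mul, map_one]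
      rw [Phi, Polynomial.coe_eval₂RingHom, Polynomial.eval₂_X, Polynomial.eval₂_C,
        Polynomial.eval₂_C, ph3_X_pow, ph3_X_pow]
      rw [show X * (X:Polynomial ℤ)^(3*(j+1)) = X^(3*j+4) by rw [← pow_succ']; ring_nf]
    rw [Finset.prod_congr rfl (fun j _ => hterm j), Finset.prod_mul_distrib]
    have hsecond : ∏ j ∈ Finset.range m, ((X:Polynomial ℤ) - X^(3*j)) =
        X^m' * ((X - 1) * ∏ j ∈ Finset.range m', (1 - (X:Polynomial ℤ)^(3*j+2))) := by
      rw [hm, Finset.prod_range_succ' (fun j => (X:Polynomial ℤ) - X^(3*j)) m']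
      have : ∀ j, (X:Polynomial ℤ) - X^(3*(j+1)) = X * (1 - X^(3*j+2)) := by
        intro j
        rw [mul_sub, mul_one, show (X:Polynomial ℤ) * X^(3*j+2) = X^(3*(j+1)) by
          rw [← pow_succ']; ring_nf]
      rw [Finset.prod_congr rfl (fun j _ => this j), Finset.prod_mul_distrib,
        Finset.prod_const, Finset.card_range]
      norm_num
      ring
    rw [hsecond]
    ring
  -- RHS of hJ
  have hR : Phi (∑ i ∈ Finset.range (2*m+1), C (cc m i) * X^i)
      = X^m' * ∑ i ∈ Finset.range (2*m+1),
          (-1:Polynomial ℤ)^(i+m) * (ph3 (GB (2*m) i)) * X^(gz ((i:ℤ)+1-m)) := by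
    rw [map_sum, Finset.mul_sum]
    apply Finset.sum_congr rfl
    intro i _
    rw [map_mul, Phi, Polynomial.coe_eval₂RingHom, Polynomial.eval₂_C, Polynomial.eval₂_X_pow]
    rw [cc, map_mul, map_mul, map_pow, map_neg, map_one, ph3_X_pow]
    have he : 3 * tz ((i:ℤ) - m) + i = m' + gz ((i:ℤ)+1-m) := by
      rw [hm]; exact_mod_cast exp_ident m' i
    have hxp : (X:Polynomial ℤ)^(3 * tz ((i:ℤ) - m)) * X^i
        = X^m' * X^(gz ((i:ℤ)+1-m)) := by
      rw [← pow_add, ← pow_add, he]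
    rw [mul_assoc, hxp]
    ring
  rw [hL, hR] at hJ
  exact mul_left_cancel₀ (pow_ne_zero _ Polynomial.X_ne_zero) hJ

lemma ph3_prod_one_sub (s : Finset ℕ) :
    ph3 (∏ j ∈ s, (1 - (X:Polynomial ℤ)^j)) = ∏ j ∈ s, (1 - (X:Polynomial ℤ)^(3*j)) := by
  rw [map_prod]
  exact Finset.prod_congr rfl (fun j _ => by rw [map_sub, map_one, ph3_X_pow])

lemma E1_term (D m' : ℕ) (hm : m' = D + 1) (i : ℕ) (hi : i ≤ 2*(m'+1)) :
    (X:Polynomial ℤ)^(D+1) ∣ (ph3 (GB (2*(m'+1)) i)) * ph3 (Ei (2*(m'+1)))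
      * X^(gz ((i:ℤ)+1-(m'+1)))
      - X^(gz ((i:ℤ)+1-(m'+1))) := by
  have hGB := GB_prod (2*(m'+1)) i hi
  rw [← Ei] at hGB
  have hsplit := Ei_split hi
  have hfact : GB (2*(m'+1)) i * Ei (2*(m'+1))
      = (∏ j ∈ Finset.Icc (2*(m'+1)-i+1) (2*(m'+1)), (1 - (X:Polynomial ℤ)^j))
        * ∏ j ∈ Finset.Ioc i (2*(m'+1)), (1 - (X:Polynomial ℤ)^j) := by
    rw [hsplit]
    linear_combination (∏ j ∈ Finset.Ioc i (2*(m'+1)), (1 - (X:Polynomial ℤ)^j)) * hGB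
  have hph := congrArg ph3 hfact
  rw [map_mul, map_mul, ph3_prod_one_sub, ph3_prod_one_sub] at hph
  set U1 : Polynomial ℤ := ∏ j ∈ Finset.Icc (2*(m'+1)-i+1) (2*(m'+1)), (1 - (X:Polynomial ℤ)^(3*j)) with hU1
  set U2 : Polynomial ℤ := ∏ j ∈ Finset.Ioc i (2*(m'+1)), (1 - (X:Polynomial ℤ)^(3*j)) with hU2
  set c : ℕ := min (3*(2*(m'+1)-i)+3) (3*i+3) with hc
  have d1 : (X:Polynomial ℤ)^c ∣ U1 - 1 :=
    dvd_trans (pow_dvd_pow _ (min_le_left _ _))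
      (tail_dvd _ (fun j => 3*j) (fun e heq => by
        simp only [Finset.mem_Icc] at heq; show 3*(2*(m'+1)-i)+3 ≤ 3*e; omega))
  have d2 : (X:Polynomial ℤ)^c ∣ U2 - 1 :=
    dvd_trans (pow_dvd_pow _ (min_le_right _ _))
      (tail_dvd _ (fun j => 3*j) (fun e heq => by
        simp only [Finset.mem_Ioc] at heq; show 3*i+3 ≤ 3*e; omega))
  have d12 : (X:Polynomial ℤ)^c ∣ U1 * U2 - 1 := by
    have := dvd_mul_sub_mul d1 d2
    rwa [mul_one] at this
  set k : ℤ := (i:ℤ) + 1 - ((m':ℤ)+1) with hk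
  have hgz := gz_cast k
  have hb1 : ((gz k : ℤ)) ≥ 3*k - 4 := by nlinarith [hgz]
  have hb2 : ((gz k : ℤ)) ≥ -3*k - 4 := by nlinarith [hgz]
  have he : D + 1 ≤ gz k + c := by omega
  have hT : (X:Polynomial ℤ)^(D+1) ∣ X^(gz k) * (U1 * U2 - 1) :=
    dvd_trans (pow_dvd_pow _ he) (by rw [pow_add]; exact mul_dvd_mul_left _ d12)
  have hdiff : (ph3 (GB (2*(m'+1)) i)) * ph3 (Ei (2*(m'+1))) * X^(gz k) - X^(gz k)
      = X^(gz k) * (U1 * U2 - 1) := by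
    rw [hph]; ring
  rw [hdiff]
  exact hT

lemma E1_sum (D m' : ℕ) (hm : m' = D + 1) :
    (X:Polynomial ℤ)^(D+1) ∣
      (1-X) * (∏ j ∈ Finset.range (m'+1), (1 - (X:Polynomial ℤ)^(3*j+4)))
        * (∏ j ∈ Finset.range m', (1 - (X:Polynomial ℤ)^(3*j+2)))
        * (∏ j ∈ Finset.Icc 1 (2*(m'+1)), (1 - (X:Polynomial ℤ)^(3*j)))
      - ∑ i ∈ Finset.range (2*(m'+1)+1),
          C (((-1)^(i+m')) : ℤ) * X^(gz ((i:ℤ)+1-(m'+1))) := by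
  have hA := E1A m'
  have h3p : ∏ j ∈ Finset.Icc 1 (2*(m'+1)), (1 - (X:Polynomial ℤ)^(3*j)) = ph3 (Ei (2*(m'+1))) := by
    rw [Ei, ph3_prod_one_sub]
  rw [h3p]
  have hmul := congrArg (· * ph3 (Ei (2*(m'+1)))) hA
  simp only [Finset.sum_mul] at hmul
  have hL : (1-X) * (∏ j ∈ Finset.range (m'+1), (1 - (X:Polynomial ℤ)^(3*j+4)))
        * (∏ j ∈ Finset.range m', (1 - (X:Polynomial ℤ)^(3*j+2))) * ph3 (Ei (2*(m'+1)))
      = - ∑ i ∈ Finset.range (2*(m'+1)+1),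
          (-1:Polynomial ℤ)^(i+(m'+1)) * (ph3 (GB (2*(m'+1)) i)) * X^(gz ((i:ℤ)+1-(m'+1)))
            * ph3 (Ei (2*(m'+1))) := by
    rw [← hmul]; ring
  rw [hL, ← Finset.sum_neg_distrib, ← Finset.sum_sub_distrib]
  apply Finset.dvd_sum
  intro i hii
  simp only [Finset.mem_range] at hii
  have hterm := E1_term D m' hm i (by omega)
  have heq : -((-1:Polynomial ℤ)^(i+(m'+1)) * (ph3 (GB (2*(m'+1)) i)) * X^(gz ((i:ℤ)+1-(m'+1)))
        * ph3 (Ei (2*(m'+1))))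
      - C (((-1)^(i+m')) : ℤ) * X^(gz ((i:ℤ)+1-(m'+1)))
      = (-1:Polynomial ℤ)^(i+m') * ((ph3 (GB (2*(m'+1)) i)) * ph3 (Ei (2*(m'+1)))
          * X^(gz ((i:ℤ)+1-(m'+1))) - X^(gz ((i:ℤ)+1-(m'+1)))) := by
    simp only [map_mul, map_pow, map_neg, map_one]
    ring
  rw [heq]
  exact Dvd.dvd.mul_left hterm _

lemma prodS_eq (m' : ℕ) :
    (1-X) * (∏ j ∈ Finset.range (m'+1), (1 - (X:Polynomial ℤ)^(3*j+4)))
      * (∏ j ∈ Finset.range m', (1 - (X:Polynomial ℤ)^(3*j+2)))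
      * (∏ j ∈ Finset.Icc 1 (2*(m'+1)), (1 - (X:Polynomial ℤ)^(3*j)))
    = ∏ e ∈ insert 1 (((Finset.range (m'+1)).image (fun j => 3*j+4)
        ∪ (Finset.range m').image (fun j => 3*j+2))
        ∪ (Finset.Icc 1 (2*(m'+1))).image (fun j => 3*j)),
        (1 - (X:Polynomial ℤ)^e) := by
  rw [Finset.prod_insert (by
    simp only [Finset.mem_union, Finset.mem_image, Finset.mem_range, Finset.mem_Icc]
    push_neg
    refine ⟨⟨fun x _ => by omega, fun x _ => by omega⟩, fun x hx => by omega⟩)]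
  rw [Finset.prod_union (by
    rw [Finset.disjoint_left]
    intro a ha hb
    simp only [Finset.mem_union, Finset.mem_image, Finset.mem_range, Finset.mem_Icc] at ha hb
    obtain ⟨x, hx, rfl⟩ := hb
    rcases ha with ⟨y, hy, h⟩ | ⟨y, hy, h⟩ <;> omega)]
  rw [Finset.prod_union (by
    rw [Finset.disjoint_left]
    intro a ha hb
    simp only [Finset.mem_image, Finset.mem_range] at ha hb
    obtain ⟨x, hx, rfl⟩ := ha
    obtain ⟨y, hy, h⟩ := hb
    omega)]
  rw [Finset.prod_image (fun x _ y _ h => by omega),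
    Finset.prod_image (fun x _ y _ h => by omega),
    Finset.prod_image (fun x _ y _ h => by omega)]
  rw [pow_one]
  ring

lemma filterS_eq (D m' : ℕ) (hm : m' = D + 1) :
    (insert 1 (((Finset.range (m'+1)).image (fun j => 3*j+4)
        ∪ (Finset.range m').image (fun j => 3*j+2))
        ∪ (Finset.Icc 1 (2*(m'+1))).image (fun j => 3*j))).filter (· ≤ D)
    = Finset.Icc 1 D := by
  ext e
  simp only [Finset.mem_filter, Finset.mem_insert, Finset.mem_union, Finset.mem_image,
    Finset.mem_range, Finset.mem_Icc]
  constructor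
  · rintro ⟨h1, h2⟩
    refine ⟨?_, h2⟩
    rcases h1 with h | (⟨x, _, rfl⟩ | ⟨x, _, rfl⟩) | ⟨x, hx, rfl⟩ <;> omega
  · rintro ⟨h1, h2⟩
    refine ⟨?_, h2⟩
    rcases (show e % 3 = 0 ∨ e % 3 = 1 ∨ e % 3 = 2 by omega) with h | h | h
    · exact Or.inr (Or.inr ⟨e/3, ⟨by omega, by omega⟩, by omega⟩)
    · rcases eq_or_ne e 1 with he | he
      · exact Or.inl he
      · exact Or.inr (Or.inl (Or.inl ⟨(e-4)/3, by omega, by omega⟩))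
    · exact Or.inr (Or.inl (Or.inr ⟨(e-2)/3, by omega, by omega⟩))

lemma prodS_congr (D m' : ℕ) (hm : m' = D + 1) :
    (X:Polynomial ℤ)^(D+1) ∣
      (1-X) * (∏ j ∈ Finset.range (m'+1), (1 - (X:Polynomial ℤ)^(3*j+4)))
        * (∏ j ∈ Finset.range m', (1 - (X:Polynomial ℤ)^(3*j+2)))
        * (∏ j ∈ Finset.Icc 1 (2*(m'+1)), (1 - (X:Polynomial ℤ)^(3*j)))
      - Ei D := by
  rw [prodS_eq m']
  set S := insert 1 (((Finset.range (m'+1)).image (fun j => 3*j+4)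
        ∪ (Finset.range m').image (fun j => 3*j+2))
        ∪ (Finset.Icc 1 (2*(m'+1))).image (fun j => 3*j)) with hS
  rw [← Finset.prod_filter_mul_prod_filter_not S (· ≤ D), filterS_eq D m' hm, ← Ei]
  have : Ei D * (∏ e ∈ S.filter (fun e => ¬ e ≤ D), (1 - (X:Polynomial ℤ)^e)) - Ei D
      = Ei D * ((∏ e ∈ S.filter (fun e => ¬ e ≤ D), (1 - (X:Polynomial ℤ)^e)) - 1) := by ring
  rw [this]
  exact Dvd.dvd.mul_left
    (tail_dvd _ id (fun e he => by
      simp only [Finset.mem_filter] at he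
      show D+1 ≤ e
      omega)) _

lemma E1_witness {L n : ℕ} (h : n ≤ L) (hne : (Ei L).coeff n ≠ 0) :
    ∃ j : ℤ, gz j = n := by
  by_contra hcon
  push_neg at hcon
  set m' := n + 1 with hm'
  have h1 : (X:Polynomial ℤ)^(n+1) ∣ Ei L - Ei n := Ei_congr (by omega) h
  have h2 := prodS_congr n m' rfl
  have h3 := E1_sum n m' rfl
  have hd : (X:Polynomial ℤ)^(n+1) ∣ Ei L
      - ∑ i ∈ Finset.range (2*(m'+1)+1),
          C (((-1)^(i+m')) : ℤ) * X^(gz ((i:ℤ)+1-(m'+1))) := by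
    have t1 := dvd_sub h1 (dvd_sub h2 h3)
    have : Ei L - Ei n - ((1-X) * (∏ j ∈ Finset.range (m'+1), (1 - (X:Polynomial ℤ)^(3*j+4)))
        * (∏ j ∈ Finset.range m', (1 - (X:Polynomial ℤ)^(3*j+2)))
        * (∏ j ∈ Finset.Icc 1 (2*(m'+1)), (1 - (X:Polynomial ℤ)^(3*j))) - Ei n
        - ((1-X) * (∏ j ∈ Finset.range (m'+1), (1 - (X:Polynomial ℤ)^(3*j+4)))
        * (∏ j ∈ Finset.range m', (1 - (X:Polynomial ℤ)^(3*j+2)))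
        * (∏ j ∈ Finset.Icc 1 (2*(m'+1)), (1 - (X:Polynomial ℤ)^(3*j)))
        - ∑ i ∈ Finset.range (2*(m'+1)+1),
            C (((-1)^(i+m')) : ℤ) * X^(gz ((i:ℤ)+1-(m'+1)))))
        = Ei L - ∑ i ∈ Finset.range (2*(m'+1)+1),
            C (((-1)^(i+m')) : ℤ) * X^(gz ((i:ℤ)+1-(m'+1))) := by ring
    rwa [this] at t1
  have hco := coeff_eq_of_dvd hd (le_refl n)
  apply hne
  rw [hco, Polynomial.finset_sum_coeff]
  apply Finset.sum_eq_zero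
  intro i _
  rw [Polynomial.coeff_C_mul, Polynomial.coeff_X_pow,
    if_neg (fun hh => hcon ((i:ℤ)+1-(m'+1)) (by omega)), mul_zero]

/-- The main vanishing: coefficient of `X^(121n+9)` in `(∏(1-X^t))^4` is zero. -/
lemma main_poly (n : ℕ) : ((Ei (121*n+9))^4).coeff (121*n+9) = 0 := by
  set N := 121*n+9 with hN
  rw [show (Ei N)^4 = Ei N * (Ei N)^3 by ring, Polynomial.coeff_mul]
  apply Finset.sum_eq_zero
  rintro ⟨a, b⟩ hab
  rw [Finset.HasAntidiagonal.mem_antidiagonal] at hab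
  by_contra hne
  have ha : (Ei N).coeff a ≠ 0 := fun h => hne (by rw [h, zero_mul])
  have hb : ((Ei N)^3).coeff b ≠ 0 := fun h => hne (by rw [h, mul_zero])
  obtain ⟨j, hj⟩ := E1_witness (show a ≤ N by omega) ha
  obtain ⟨k, hk⟩ := E3_witness (show b ≤ N by omega) hb
  exact no_decomp n j k (by
    rw [hj, hk]
    omega)

end Reg5

open PowerSeries Finset

/-- With `d` the coefficients of `∏_{t≥1}(1-q^{5 t})/(1-q^t)` (each coefficient computed
from sufficiently long truncations in `ℤ⟦X⟧`), we have `d(121 n + 9) ≡ 0 (mod 5)`. -/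
theorem stmt9 (d : ℕ → ℤ)
    (hd : ∀ N : ℕ, d N =
      PowerSeries.coeff (R := ℤ) N
        ((∏ t ∈ Finset.Icc 1 N, (1 - (PowerSeries.X : PowerSeries ℤ) ^ (5 * t))) *
          PowerSeries.invOfUnit
            (∏ t ∈ Finset.Icc 1 N, (1 - (PowerSeries.X : PowerSeries ℤ) ^ t)) 1)) :
    ∀ n : ℕ, (5 : ℤ) ∣ d (121 * n + 9) := by
  intro n
  set N := 121*n+9 with hN
  set F : PowerSeries ℤ := ∏ t ∈ Finset.Icc 1 N, (1 - (PowerSeries.X : PowerSeries ℤ) ^ t) with hF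
  set G : PowerSeries ℤ := ∏ t ∈ Finset.Icc 1 N, (1 - (PowerSeries.X : PowerSeries ℤ) ^ (5*t)) with hG
  have hdN : d N = PowerSeries.coeff (R := ℤ) N (G * PowerSeries.invOfUnit F 1) := hd N
  -- reduce to `ZMod 5`
  suffices hcast : ((d N : ℤ) : ZMod 5) = 0 by
    have := (ZMod.intCast_zmod_eq_zero_iff_dvd (d N) 5).mp hcast
    exact_mod_cast this
  rw [hdN]
  set f : ℤ →+* ZMod 5 := Int.castRingHom (ZMod 5) with hf
  have hmap := PowerSeries.coeff_map f N (G * PowerSeries.invOfUnit F 1)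
  rw [show ((PowerSeries.coeff (R := ℤ) N) (G * PowerSeries.invOfUnit F 1) : ZMod 5)
      = f ((PowerSeries.coeff (R := ℤ) N) (G * PowerSeries.invOfUnit F 1)) from rfl, ← hmap, map_mul]
  set F' : PowerSeries (ZMod 5) := PowerSeries.map f F with hF'
  -- constant coefficient of F is 1
  have hconstF : PowerSeries.constantCoeff (R := ℤ) F = 1 := by
    rw [hF, map_prod]
    rw [Finset.prod_congr rfl (fun t ht => by
      rw [map_sub, map_one, map_pow, PowerSeries.constantCoeff_X,
        zero_pow (by simp only [Finset.mem_Icc] at ht; omega), sub_zero])]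
    exact Finset.prod_const_one
  have hFinv : F * PowerSeries.invOfUnit F 1 = 1 :=
    PowerSeries.mul_invOfUnit F 1 (by rw [hconstF, Units.val_one])
  have hFinv' : F' * PowerSeries.map f (PowerSeries.invOfUnit F 1) = 1 := by
    rw [hF', ← map_mul, hFinv, map_one]
  -- G maps to F'^5
  have h5' : (5 : PowerSeries (ZMod 5)) = 0 := by
    have h51 : ((5:ℕ) : PowerSeries (ZMod 5)) = PowerSeries.C (R := ZMod 5) ((5:ℕ) : ZMod 5) :=
      (map_natCast (PowerSeries.C (R := ZMod 5)) 5).symm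
    norm_num at h51
    rw [h51, show ((5:ZMod 5)) = 0 from rfl, map_zero]
  have hfrob : ∀ Y : PowerSeries (ZMod 5), (1 - Y)^5 = 1 - Y^5 := by
    intro Y
    linear_combination (-Y + 2*Y^2 - 2*Y^3 + Y^4) * h5'
  have hGF : PowerSeries.map f G = F'^5 := by
    rw [hG, hF', hF, map_prod, map_prod, ← Finset.prod_pow]
    apply Finset.prod_congr rfl
    intro t _
    rw [map_sub, map_one, map_pow, PowerSeries.map_X, map_sub, map_one, map_pow,
      PowerSeries.map_X, hfrob, ← pow_mul, mul_comm t 5]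
  rw [hGF, show F'^5 * PowerSeries.map f (PowerSeries.invOfUnit F 1)
      = F'^4 * (F' * PowerSeries.map f (PowerSeries.invOfUnit F 1)) by ring, hFinv', mul_one]
  -- now coefficient of F'^4
  have hcoe : F = ((Reg5.Ei N : Polynomial ℤ) : PowerSeries ℤ) := by
    rw [Reg5.Ei, hF]
    rw [show ((↑(∏ j ∈ Finset.Icc 1 N, (1 - Polynomial.X^j : Polynomial ℤ)) : PowerSeries ℤ))
        = Polynomial.coeToPowerSeries.ringHom (∏ j ∈ Finset.Icc 1 N, (1 - Polynomial.X^j : Polynomial ℤ)) from rfl,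
      map_prod]
    apply Finset.prod_congr rfl
    intro t _
    rw [show (Polynomial.coeToPowerSeries.ringHom (1 - Polynomial.X^t : Polynomial ℤ))
        = ((1 - Polynomial.X^t : Polynomial ℤ) : PowerSeries ℤ) from rfl,
      Polynomial.coe_sub, Polynomial.coe_one, Polynomial.coe_pow, Polynomial.coe_X]
  rw [hF', ← map_pow, PowerSeries.coeff_map, hcoe, ← Polynomial.coe_pow, Polynomial.coeff_coe]
  rw [hN, Reg5.main_poly n, map_zero]
end

section
/- Define d_7(n) by Π_{t≥1}(1-q^{7t})/(1-q^t) = Σ_{n≥0} d_7(n) q^n. Then d_7(9n+5) ≡ 0 (mod 7) for all n ≥ 0. -/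
open PowerSeries Finset

namespace Stmt10Aux

/-- triangular numbers -/
def tri (j : ℕ) : ℕ := j * (j + 1) / 2

lemma tri_succ (j : ℕ) : tri (j+1) = tri j + (j+1) := by
  unfold tri
  have h : (j+1) * (j+1+1) = j * (j+1) + (j+1) * 2 := by ring
  rw [h, Nat.add_mul_div_right _ _ (by norm_num)]

lemma le_tri (j : ℕ) : j ≤ tri j := by
  induction j with
  | zero => simp [tri]
  | succ n ih => rw [tri_succ]; omega

@[simp] lemma tri_zero : tri 0 = 0 := rfl

lemma eight_tri (j : ℕ) : 8 * tri j + 1 = (2*j+1)*(2*j+1) := by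
  induction j with
  | zero => rfl
  | succ n ih => rw [tri_succ]; ring_nf; ring_nf at ih; omega

/-- exponent of the center-shifted triangular numbers: `E n m = T'_{m-n}` -/
def E (n m : ℕ) : ℕ := tri (m - n) + tri (n - m - 1)

lemma E_id (n m : ℕ) : E n (m+1) + n = E n m + (m+1) := by
  rcases le_or_gt n m with h | h
  · obtain ⟨k, rfl⟩ : ∃ k, m = n + k := ⟨m - n, by omega⟩
    unfold E
    rw [show n + k + 1 - n = k + 1 by omega, show n - (n+k) - 1 = 0 by omega,
      show n - (n+k+1) - 1 = 0 by omega, show n + k - n = k by omega, tri_succ]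
    simp; omega
  · rcases Nat.lt_or_ge (m+1) n with h' | h'
    · obtain ⟨k, rfl⟩ : ∃ k, n = m + 2 + k := ⟨n - (m+2), by omega⟩
      unfold E
      rw [show m + 1 - (m+2+k) = 0 by omega, show m - (m+2+k) = 0 by omega,
        show m+2+k - (m+1) - 1 = k by omega, show m+2+k - m - 1 = k + 1 by omega, tri_succ]
      simp; omega
    · have hn : n = m + 1 := by omega
      subst hn
      unfold E
      rw [show m + 1 - (m+1) = 0 by omega, show m - (m+1) = 0 by omega,
        show m + 1 - m - 1 = 0 by omega]

lemma E_succ_succ (n m : ℕ) : E (n+1) (m+1) = E n m := by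
  unfold E; rw [Nat.succ_sub_succ, Nat.succ_sub_succ]

lemma E_zero_left (n : ℕ) : E (n+1) 0 = E n 0 + n := by
  unfold E
  rcases n with _ | k
  · rfl
  · rw [show (0:ℕ) - (k+1+1) = 0 by omega, show (0:ℕ) - (k+1) = 0 by omega,
      show k + 1 + 1 - 0 - 1 = k + 1 by omega, show k + 1 - 0 - 1 = k by omega, tri_succ]
    omega

lemma E_add (n j : ℕ) : E n (n + j) = tri j := by
  unfold E
  rw [show n + j - n = j by omega, show n - (n+j) - 1 = 0 by omega]
  simp

lemma E_sub (n j : ℕ) (h : j + 1 ≤ n) : E n (n - 1 - j) = tri j := by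
  unfold E
  rw [show n - 1 - j - n = 0 by omega, show n - (n - 1 - j) - 1 = j by omega]
  simp

/-- Gaussian binomial coefficients as power series over ℤ, defined via Pascal. -/
noncomputable def qb : ℕ → ℕ → PowerSeries ℤ
  | _, 0 => 1
  | 0, _+1 => 0
  | n+1, k+1 => qb n (k+1) + X ^ (n - k) * qb n k

@[simp] lemma qb_zero (n : ℕ) : qb n 0 = 1 := by cases n <;> rfl

lemma qb_succ (n k : ℕ) : qb (n+1) (k+1) = qb n (k+1) + X ^ (n - k) * qb n k := rfl

lemma qb_eq_zero : ∀ {n k : ℕ}, n < k → qb n k = 0 := by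
  intro n
  induction n with
  | zero => intro k h; rcases k with _ | k; · omega
            · rfl
  | succ n ih =>
    intro k h
    rcases k with _ | k
    · omega
    · rw [qb_succ, ih (by omega), ih (by omega)]
      simp

@[simp] lemma qb_diag (n : ℕ) : qb n n = 1 := by
  induction n with
  | zero => rfl
  | succ n ih => rw [qb_succ, qb_eq_zero (by omega), ih]; simp

lemma qb_P2 : ∀ n k, qb (n+1) (k+1) = qb n k + X ^ (k+1) * qb n (k+1) := by
  intro n
  induction n with
  | zero =>
    intro k
    rcases k with _ | j
    · have h0 : qb 0 1 = 0 := rfl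
      rw [qb_succ, h0]
      simp
    · have h0 : qb 0 (j+1) = 0 := rfl
      have h1 : qb 0 (j+1+1) = 0 := rfl
      rw [qb_succ, h0, h1]
      simp
  | succ n ih =>
    intro k
    rcases k with _ | j
    · have h1 : qb (n+2) 1 = qb (n+1) 1 + X ^ (n+1) * qb (n+1) 0 := by
        rw [qb_succ]; norm_num
      have h2 : qb (n+1) 1 = qb n 1 + X ^ n * qb n 0 := by
        rw [qb_succ]; norm_num
      have h3 : qb (n+1) 1 = qb n 0 + X ^ 1 * qb n 1 := ih 0
      show qb (n+2) 1 = qb (n+1) 0 + X ^ 1 * qb (n+1) 1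
      rw [h1]
      nth_rewrite 2 [h2]
      nth_rewrite 1 [h3]
      simp only [qb_zero, mul_one]
      ring
    · rcases le_or_gt (j+1) n with hj | hj
      · obtain ⟨i, rfl⟩ : ∃ i, n = j + 1 + i := ⟨n - (j+1), by omega⟩
        have h1 : qb (j+1+i+2) (j+2) = qb (j+1+i+1) (j+2) + X ^ (i+1) * qb (j+1+i+1) (j+1) := by
          rw [qb_succ, show j + 1 + i + 1 - (j+1) = i + 1 by omega]
        have h2 : qb (j+1+i+1) (j+2) = qb (j+1+i) (j+1) + X ^ (j+2) * qb (j+1+i) (j+2) := ih (j+1)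
        have h5 : qb (j+1+i+1) (j+2) = qb (j+1+i) (j+2) + X ^ i * qb (j+1+i) (j+1) := by
          rw [qb_succ, show j + 1 + i - (j+1) = i by omega]
        have h3 : qb (j+1+i+1) (j+1) = qb (j+1+i) (j+1) + X ^ (i+1) * qb (j+1+i) j := by
          rw [qb_succ, show j + 1 + i - j = i + 1 by omega]
        have h4 : qb (j+1+i+1) (j+1) = qb (j+1+i) j + X ^ (j+1) * qb (j+1+i) (j+1) := ih j
        show qb (j+1+i+2) (j+2) = qb (j+1+i+1) (j+1) + X ^ (j+2) * qb (j+1+i+1) (j+2)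
        linear_combination h1 + h2 + (X:ℤ⟦X⟧) ^ (i+1) * h4 - h3 - (X:ℤ⟦X⟧) ^ (j+2) * h5
      · rcases eq_or_lt_of_le (show n ≤ j by omega) with rfl | hlt
        · have hz : qb (n+1) (n+2) = 0 := qb_eq_zero (by omega)
          show qb (n+2) (n+2) = qb (n+1) (n+1) + X ^ (n+2) * qb (n+1) (n+2)
          rw [hz, qb_diag, qb_diag]
          simp
        · show qb (n+2) (j+2) = qb (n+1) (j+1) + X ^ (j+2) * qb (n+1) (j+2)
          rw [qb_eq_zero (show n+2 < j+2 by omega), qb_eq_zero (show n+1 < j+1 by omega),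
            qb_eq_zero (show n+1 < j+2 by omega)]
          simp

lemma qb_diff_dvd (a k : ℕ) : X ^ (min (k+1) (a-k)) ∣ qb a (k+1) - qb a k := by
  have h1 := qb_succ a k
  have h2 := qb_P2 a k
  have h : qb a (k+1) - qb a k = X^(k+1) * qb a (k+1) - X^(a-k) * qb a k := by
    linear_combination h2 - h1
  rw [h]
  exact dvd_sub ((pow_dvd_pow X (min_le_left _ _)).mul_right _)
    ((pow_dvd_pow X (min_le_right _ _)).mul_right _)

lemma qb_tele (a e b : ℕ) : ∀ c, b ≤ c → (∀ i, b ≤ i → i < c → e ≤ min (i+1) (a - i)) →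
    X ^ e ∣ qb a c - qb a b := by
  intro c
  induction c with
  | zero => intro h _; rw [Nat.le_zero.mp h]; simp
  | succ m ih =>
    intro hbc h
    rcases eq_or_lt_of_le hbc with rfl | hlt
    · simp
    · have hm : b ≤ m := by omega
      have d1 : X ^ e ∣ qb a (m+1) - qb a m :=
        (pow_dvd_pow X (h m hm (by omega))).trans (qb_diff_dvd a m)
      have d2 : X ^ e ∣ qb a m - qb a b := ih hm (fun i h1 h2 => h i h1 (by omega))
      have : qb a (m+1) - qb a b = (qb a (m+1) - qb a m) + (qb a m - qb a b) := by ring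
      rw [this]
      exact dvd_add d1 d2

lemma qb_pair (n j : ℕ) (hj : j < n) :
    X ^ (n - j) ∣ qb (2*n) (n+j) - qb (2*n) (n-1-j) := by
  apply qb_tele (2*n) (n-j) (n-1-j) (n+j) (by omega)
  intro i h1 h2
  omega

lemma qb_center (n j : ℕ) (hj : j ≤ n) :
    X ^ (n - j) ∣ qb (2*n) (n+j) - qb (2*n) n := by
  apply qb_tele (2*n) (n-j) n (n+j) (by omega)
  intro i h1 h2
  omega

/-- partial Euler products -/
noncomputable def Pr (m : ℕ) : ℤ⟦X⟧ := ∏ k ∈ range m, (1 - X^(k+1))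

@[simp] lemma Pr_zero : Pr 0 = 1 := by simp [Pr]

lemma Pr_succ (m : ℕ) : Pr (m+1) = Pr m * (1 - X^(m+1)) := by
  rw [Pr, prod_range_succ]; rfl

lemma qb_mul : ∀ a k, k ≤ a → qb a k * (Pr k * Pr (a - k)) = Pr a := by
  intro a
  induction a with
  | zero =>
    intro k hk
    rw [Nat.le_zero.mp hk]
    simp
  | succ a ih =>
    intro k hk
    rcases k with _ | k'
    · simp
    · rcases eq_or_lt_of_le hk with heq | hlt
      · have : k' = a := by omega
        subst this
        rw [qb_diag, show k' + 1 - (k'+1) = 0 by omega]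
        simp
    
      · obtain ⟨i, rfl⟩ : ∃ i, a = k' + 1 + i := ⟨a - (k'+1), by omega⟩
        rw [show k'+1+i+1 - (k'+1) = i+1 by omega]
        have e1 : qb (k'+1+i+1) (k'+1) = qb (k'+1+i) (k'+1) + X^(i+1) * qb (k'+1+i) k' := by
          rw [qb_succ, show k'+1+i-k' = i+1 by omega]
        have ih1 := ih (k'+1) (by omega)
        simp only [show k'+1+i-(k'+1) = i from by omega] at ih1
        have ih2 := ih k' (by omega)
        simp only [show k'+1+i-k' = i+1 from by omega] at ih2
        have hPi : Pr (i+1) = Pr i * (1 - X^(i+1)) := Pr_succ i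
        have hPk : Pr (k'+1) = Pr k' * (1 - X^(k'+1)) := Pr_succ k'
        have hPa : Pr (k'+1+i+1) = Pr (k'+1+i) * (1 - X^(k'+1+i+1)) := Pr_succ (k'+1+i)
        linear_combination (Pr (k'+1) * Pr (i+1)) * e1
          + (qb (k'+1+i) (k'+1) * Pr (k'+1)) * hPi
          + (1 - (X:ℤ⟦X⟧)^(i+1)) * ih1
          + ((X:ℤ⟦X⟧)^(i+1) * qb (k'+1+i) k' * Pr (i+1)) * hPk
          + ((X:ℤ⟦X⟧)^(i+1) * (1 - (X:ℤ⟦X⟧)^(k'+1))) * ih2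
          - hPa

/-- the finite triple-product-style polynomial -/
noncomputable def F (n : ℕ) : Polynomial (ℤ⟦X⟧) :=
  ∏ k ∈ range n, ((1 + Polynomial.C ((X:ℤ⟦X⟧)^(k+1)) * Polynomial.X)
    * (Polynomial.X + Polynomial.C ((X:ℤ⟦X⟧)^k)))

lemma F_coeff : ∀ n d, (F n).coeff d = qb (2*n) d * X^(E n d) := by
  intro n
  induction n with
  | zero =>
    intro d
    rcases d with _ | d
    · simp [F, E, tri]
    · simp [F, qb_eq_zero (show 0 < d+1 by omega), Polynomial.coeff_one]
  | succ n ih =>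
    have hFs : F (n+1) = F n * Polynomial.C ((X:ℤ⟦X⟧)^n)
        + (F n * Polynomial.X) * Polynomial.C (1 + (X:ℤ⟦X⟧)^(n+1) * X^n)
        + (F n * Polynomial.X^2) * Polynomial.C ((X:ℤ⟦X⟧)^(n+1)) := by
      rw [F, prod_range_succ, ← F]
      rw [map_add, map_mul, map_one]
      ring
    intro d
    rw [hFs]
    simp only [Polynomial.coeff_add, Polynomial.coeff_mul_C]
    rw [show (F n * Polynomial.X : Polynomial ℤ⟦X⟧) = F n * Polynomial.X^1 by rw [pow_one]]
    rw [Polynomial.coeff_mul_X_pow', Polynomial.coeff_mul_X_pow']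
    rcases d with _ | _ | k
    · -- d = 0
      simp only [ih]
      norm_num
      rw [← pow_add, E_zero_left]
    · -- d = 1
      simp only [ih]
      norm_num
      have q1 : qb (2*n+1+1) 1 = qb (2*n+1) 1 + X^(2*n+1) * qb (2*n+1) 0 := by
        rw [qb_succ]; norm_num
      have q2 : qb (2*n+1) 1 = qb (2*n) 0 + X^1 * qb (2*n) 1 := qb_P2 (2*n) 0
      have hE : (X:ℤ⟦X⟧)^(E n 1) * X^n = X^(E n 0) * X^1 := by
        rw [← pow_add, ← pow_add, E_id n 0]
      have hE2 : E (n+1) 1 = E n 0 := E_succ_succ n 0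
      rw [show 2*(n+1) = 2*n+1+1 by ring, q1, q2, qb_zero, qb_zero, hE2]
      linear_combination qb (2*n) 1 * hE
    · -- d = k + 2
      simp only [ih, show k+1+1-2 = k from by omega]
      norm_num
      rw [show 2*(n+1) = 2*n+1+1 by ring]
      have hA : qb (2*n+1+1) (k+1+1) = qb (2*n+1) (k+1+1) + X^(2*n-k) * qb (2*n+1) (k+1) := by
        rw [qb_succ, show 2*n+1 - (k+1) = 2*n-k by omega]
      have hB : qb (2*n+1) (k+1+1) = qb (2*n) (k+1) + X^(k+1+1) * qb (2*n) (k+1+1) := qb_P2 (2*n) (k+1)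
      have hC : qb (2*n+1) (k+1) = qb (2*n) k + X^(k+1) * qb (2*n) (k+1) := qb_P2 (2*n) k
      have hEb : E (n+1) (k+1+1) = E n (k+1) := E_succ_succ n (k+1)
      rcases le_or_gt k (2*n) with hk | hk
      · have hE1 : (X:ℤ⟦X⟧)^(E n (k+1+1)) * X^n = X^(E n (k+1)) * X^(k+1+1) := by
          rw [← pow_add, ← pow_add]
          congr 1
          have := E_id n (k+1); omega
        have hE2 : (X:ℤ⟦X⟧)^(E n k) * X^(n+1) = X^(E n (k+1)) * X^(2*n-k) := by
          rw [← pow_add, ← pow_add]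
          congr 1
          have := E_id n k; omega
        have hE3 : (X:ℤ⟦X⟧)^(2*n-k) * X^(k+1) = X^(2*n+1) := by
          rw [← pow_add]
          congr 1
          omega
        have hab : (X:ℤ⟦X⟧)^(n+1) * X^n = X^(2*n+1) := by
          rw [← pow_add]; congr 1; omega
        rw [hEb]
        linear_combination (-(X:ℤ⟦X⟧)^(E n (k+1))) * hA - (X:ℤ⟦X⟧)^(E n (k+1)) * hB
          - (X:ℤ⟦X⟧)^(E n (k+1)) * (X:ℤ⟦X⟧)^(2*n-k) * hC
          + qb (2*n) (k+1+1) * hE1 + qb (2*n) k * hE2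
          - (X:ℤ⟦X⟧)^(E n (k+1)) * qb (2*n) (k+1) * hE3
          + qb (2*n) (k+1) * (X:ℤ⟦X⟧)^(E n (k+1)) * hab
      · rw [qb_eq_zero (show 2*n < k by omega), qb_eq_zero (show 2*n < k+1 by omega),
          qb_eq_zero (show 2*n < k+1+1 by omega),
          qb_eq_zero (show 2*n+1+1 < k+1+1 by omega)]
        simp

lemma F_sum (n : ℕ) : F n = ∑ m ∈ range (2*n+1),
    Polynomial.C (qb (2*n) m * X^(E n m)) * Polynomial.X ^ m := by
  apply Polynomial.ext
  intro d
  rw [F_coeff, Polynomial.finset_sum_coeff]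
  simp only [Polynomial.coeff_C_mul, Polynomial.coeff_X_pow, mul_ite, mul_one, mul_zero]
  rw [Finset.sum_ite_eq (range (2*n+1)) d (fun m => qb (2*n) m * X^(E n m))]
  rcases le_or_gt d (2*n) with hd | hd
  · rw [if_pos (mem_range.mpr (by omega))]
  · rw [if_neg (fun hc => by simp at hc; omega), qb_eq_zero (show 2*n < d by omega)]
    simp

lemma eval_deriv (n : ℕ) :
    Polynomial.eval (-1 : ℤ⟦X⟧) (Polynomial.derivative (F (n+1)))
      = (-1:ℤ⟦X⟧)^n * (Pr (n+1) * Pr n) := by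
  have hsplit : F (n+1) =
      ((∏ k ∈ range (n+1), (1 + Polynomial.C ((X:ℤ⟦X⟧)^(k+1)) * Polynomial.X)) *
        ∏ k ∈ range n, (Polynomial.X + Polynomial.C ((X:ℤ⟦X⟧)^(k+1)))) * (Polynomial.X + 1) := by
    rw [F, prod_mul_distrib,
      Finset.prod_range_succ' (fun k => Polynomial.X + Polynomial.C ((X:ℤ⟦X⟧)^k)) n]
    norm_num
    ring
  rw [hsplit, Polynomial.derivative_mul]
  simp only [Polynomial.derivative_add, Polynomial.derivative_X, Polynomial.derivative_one,
    add_zero, mul_one]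
  rw [Polynomial.eval_add, Polynomial.eval_mul, Polynomial.eval_add, Polynomial.eval_X,
    Polynomial.eval_one]
  rw [show (-1 : ℤ⟦X⟧) + 1 = 0 by ring, mul_zero, zero_add]
  rw [Polynomial.eval_mul, Polynomial.eval_prod, Polynomial.eval_prod]
  have h1 : ∀ k, Polynomial.eval (-1 : ℤ⟦X⟧)
      (1 + Polynomial.C ((X:ℤ⟦X⟧)^(k+1)) * Polynomial.X) = 1 - X^(k+1) := by
    intro k; simp; ring
  have h2 : ∀ k, Polynomial.eval (-1 : ℤ⟦X⟧)
      (Polynomial.X + Polynomial.C ((X:ℤ⟦X⟧)^(k+1))) = (-1) * (1 - X^(k+1)) := by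
    intro k; simp; ring
  rw [prod_congr rfl (fun k _ => h1 k), prod_congr rfl (fun k _ => h2 k), prod_mul_distrib,
    prod_const, card_range]
  rw [Pr, Pr]
  ring

lemma star (n : ℕ) : (-1:ℤ⟦X⟧)^n * (Pr (n+1) * Pr n)
    = ∑ m ∈ range (2*(n+1)+1), -((-1:ℤ⟦X⟧)^m * (m:ℤ⟦X⟧) * (qb (2*(n+1)) m * X^(E (n+1) m))) := by
  rw [← eval_deriv n, F_sum, Polynomial.derivative_sum, Polynomial.eval_finset_sum]
  apply sum_congr rfl
  intro m _
  rw [Polynomial.derivative_C_mul_X_pow, Polynomial.eval_mul, Polynomial.eval_C,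
    Polynomial.eval_pow, Polynomial.eval_X]
  rcases m with _ | j
  · simp
  · rw [show j+1-1 = j by omega, pow_succ]
    push_cast
    ring

/-- truncation of the Jacobi theta-cube series -/
noncomputable def S (n : ℕ) : ℤ⟦X⟧ :=
  ∑ j ∈ range n, PowerSeries.C (R := ℤ) ((-1)^j * (2*j+1)) * X^(tri j)

lemma neg_one_sq_pow (N : ℕ) : ((-1:ℤ⟦X⟧)^N) * ((-1:ℤ⟦X⟧)^N) = 1 := by
  rw [← pow_add, show N+N = 2*N by ring, pow_mul]
  norm_num

lemma key1 (N : ℕ) : (X:ℤ⟦X⟧)^(N+1) ∣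
    Pr (N+1) * Pr N - qb (2*(N+1)) (N+1) * S (N+1) := by
  have hsq := neg_one_sq_pow N
  have hstar := star N
  have hPP : Pr (N+1) * Pr N = (-1:ℤ⟦X⟧)^N *
      ∑ m ∈ range (2*(N+1)+1), -((-1:ℤ⟦X⟧)^m * (m:ℤ⟦X⟧) * (qb (2*(N+1)) m * X^(E (N+1) m))) := by
    rw [← hstar, ← mul_assoc, hsq, one_mul]
  have h1 : (∑ m ∈ range (2*(N+1)+1), -((-1:ℤ⟦X⟧)^m * (m:ℤ⟦X⟧) * (qb (2*(N+1)) m * X^(E (N+1) m))))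
      = (∑ j ∈ range (N+1),
          (-((-1:ℤ⟦X⟧)^(N+1+j) * ((N+1+j : ℕ):ℤ⟦X⟧) * (qb (2*(N+1)) (N+1+j) * X^(E (N+1) (N+1+j))))
          + -((-1:ℤ⟦X⟧)^(N-j) * ((N-j : ℕ):ℤ⟦X⟧) * (qb (2*(N+1)) (N-j) * X^(E (N+1) (N-j))))))
        + -((-1:ℤ⟦X⟧)^(2*(N+1)) * ((2*(N+1) : ℕ):ℤ⟦X⟧)
            * (qb (2*(N+1)) (2*(N+1)) * X^(E (N+1) (2*(N+1))))) := by
    rw [sum_range_succ]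
    congr 1
    rw [show range (2*(N+1)) = range ((N+1)+(N+1)) from by rw [two_mul]]
    rw [Finset.sum_range_add, sum_add_distrib, add_comm]
    congr 1
    have hrefl := Finset.sum_range_reflect
      (fun m => -((-1:ℤ⟦X⟧)^m * (m:ℤ⟦X⟧) * (qb (2*(N+1)) m * X^(E (N+1) m)))) (N+1)
    rw [← hrefl]
    apply sum_congr rfl
    intro j hj
    rw [show N+1-1-j = N-j by omega]
  have h2 : ∀ j ∈ range (N+1), (X:ℤ⟦X⟧)^(N+1) ∣
      ((-1:ℤ⟦X⟧)^N *
        (-((-1:ℤ⟦X⟧)^(N+1+j) * ((N+1+j : ℕ):ℤ⟦X⟧) * (qb (2*(N+1)) (N+1+j) * X^(E (N+1) (N+1+j))))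
          + -((-1:ℤ⟦X⟧)^(N-j) * ((N-j : ℕ):ℤ⟦X⟧) * (qb (2*(N+1)) (N-j) * X^(E (N+1) (N-j)))))
        - (PowerSeries.C (R := ℤ) ((-1)^j * (2*j+1)) * X^(tri j)) * qb (2*(N+1)) (N+1)) := by
    intro j hj
    rw [mem_range] at hj
    have hjN : j ≤ N := by omega
    have hEr : E (N+1) (N+1+j) = tri j := E_add (N+1) j
    have hEl : E (N+1) (N-j) = tri j := by
      have := E_sub (N+1) j (by omega)
      rwa [show N+1-1-j = N-j by omega] at this
    have hp := qb_pair (N+1) j (by omega)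
    rw [show N+1-1-j = N-j by omega] at hp
    obtain ⟨u, hu⟩ := hp
    obtain ⟨v, hv⟩ := qb_center (N+1) j (by omega)
    have hj2 : ((-1:ℤ⟦X⟧)^j) * ((-1:ℤ⟦X⟧)^j) = 1 := neg_one_sq_pow j
    have s1 : (-1:ℤ⟦X⟧)^(N+1+j) = -((-1:ℤ⟦X⟧)^N * (-1:ℤ⟦X⟧)^j) := by
      rw [show N+1+j = (N+j)+1 by ring, pow_succ, pow_add]
      ring
    have s3 : (-1:ℤ⟦X⟧)^(N-j) = (-1:ℤ⟦X⟧)^N * (-1:ℤ⟦X⟧)^j := by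
      have e : (-1:ℤ⟦X⟧)^(N-j) * (-1:ℤ⟦X⟧)^j = (-1:ℤ⟦X⟧)^N := by
        rw [← pow_add, show N-j+j = N by omega]
      linear_combination (-1:ℤ⟦X⟧)^j * e - (-1:ℤ⟦X⟧)^(N-j) * hj2
    have hc : ((N-j:ℕ) : ℤ⟦X⟧) = (N:ℤ⟦X⟧) - (j:ℤ⟦X⟧) := by
      rw [Nat.cast_sub hjN]
    have hCj : (PowerSeries.C (R := ℤ)) ((-1)^j * (2*(j:ℤ)+1)) = (-1:ℤ⟦X⟧)^j * (2*(j:ℤ⟦X⟧)+1) := by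
      rw [map_mul, map_pow, map_neg, map_one, map_add, map_mul, map_natCast, map_one]
      norm_num
    have hd1 : (X:ℤ⟦X⟧)^(N+1) ∣ (X:ℤ⟦X⟧)^(tri j) * ((X:ℤ⟦X⟧)^((N+1)-j) * u) := by
      rw [← mul_assoc, ← pow_add]
      exact (pow_dvd_pow X (by have := le_tri j; omega)).mul_right u
    have hd2 : (X:ℤ⟦X⟧)^(N+1) ∣ (X:ℤ⟦X⟧)^(tri j) * ((X:ℤ⟦X⟧)^((N+1)-j) * v) := by
      rw [← mul_assoc, ← pow_add]
      exact (pow_dvd_pow X (by have := le_tri j; omega)).mul_right v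
    have heq : ((-1:ℤ⟦X⟧)^N *
        (-((-1:ℤ⟦X⟧)^(N+1+j) * ((N+1+j : ℕ):ℤ⟦X⟧) * (qb (2*(N+1)) (N+1+j) * X^(E (N+1) (N+1+j))))
          + -((-1:ℤ⟦X⟧)^(N-j) * ((N-j : ℕ):ℤ⟦X⟧) * (qb (2*(N+1)) (N-j) * X^(E (N+1) (N-j)))))
        - (PowerSeries.C (R := ℤ) ((-1)^j * (2*j+1)) * X^(tri j)) * qb (2*(N+1)) (N+1))
        = ((-1:ℤ⟦X⟧)^j * ((N:ℤ⟦X⟧) - (j:ℤ⟦X⟧))) * ((X:ℤ⟦X⟧)^(tri j) * ((X:ℤ⟦X⟧)^((N+1)-j) * u))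
          + ((-1:ℤ⟦X⟧)^j * (2*(j:ℤ⟦X⟧)+1)) * ((X:ℤ⟦X⟧)^(tri j) * ((X:ℤ⟦X⟧)^((N+1)-j) * v)) := by
      rw [hEr, hEl, s1, s3, hc, hCj]
      push_cast
      linear_combination ((-1:ℤ⟦X⟧)^j * (((N:ℤ⟦X⟧)+1+(j:ℤ⟦X⟧)) * qb (2*(N+1)) (N+1+j)
            - ((N:ℤ⟦X⟧)-(j:ℤ⟦X⟧)) * qb (2*(N+1)) (N-j)) * (X:ℤ⟦X⟧)^(tri j)) * hsq
        + ((-1:ℤ⟦X⟧)^j * ((N:ℤ⟦X⟧)-(j:ℤ⟦X⟧)) * (X:ℤ⟦X⟧)^(tri j)) * hu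
        + ((-1:ℤ⟦X⟧)^j * (2*(j:ℤ⟦X⟧)+1) * (X:ℤ⟦X⟧)^(tri j)) * hv
    rw [heq]
    exact dvd_add (hd1.mul_left _) (hd2.mul_left _)
  have h3 : (X:ℤ⟦X⟧)^(N+1) ∣ (-1:ℤ⟦X⟧)^N *
      -((-1:ℤ⟦X⟧)^(2*(N+1)) * ((2*(N+1) : ℕ):ℤ⟦X⟧)
        * (qb (2*(N+1)) (2*(N+1)) * X^(E (N+1) (2*(N+1))))) := by
    have hE : E (N+1) (2*(N+1)) = tri (N+1) := by
      have := E_add (N+1) (N+1)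
      rwa [show N+1+(N+1) = 2*(N+1) by ring] at this
    rw [hE]
    have heq3 : (-1:ℤ⟦X⟧)^N * -((-1:ℤ⟦X⟧)^(2*(N+1)) * ((2*(N+1) : ℕ):ℤ⟦X⟧)
        * (qb (2*(N+1)) (2*(N+1)) * X^(tri (N+1))))
        = (-((-1:ℤ⟦X⟧)^N * (-1:ℤ⟦X⟧)^(2*(N+1)) * ((2*(N+1) : ℕ):ℤ⟦X⟧)
            * qb (2*(N+1)) (2*(N+1)))) * X^(tri (N+1)) := by ring
    rw [heq3]
    exact Dvd.dvd.mul_left (pow_dvd_pow X (by have := le_tri (N+1); omega)) _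
  have hassemble : Pr (N+1) * Pr N - qb (2*(N+1)) (N+1) * S (N+1)
      = (∑ j ∈ range (N+1),
          (((-1:ℤ⟦X⟧)^N *
            (-((-1:ℤ⟦X⟧)^(N+1+j) * ((N+1+j : ℕ):ℤ⟦X⟧) * (qb (2*(N+1)) (N+1+j) * X^(E (N+1) (N+1+j))))
              + -((-1:ℤ⟦X⟧)^(N-j) * ((N-j : ℕ):ℤ⟦X⟧) * (qb (2*(N+1)) (N-j) * X^(E (N+1) (N-j)))))
            - (PowerSeries.C (R := ℤ) ((-1)^j * (2*j+1)) * X^(tri j)) * qb (2*(N+1)) (N+1))))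
        + (-1:ℤ⟦X⟧)^N *
            -((-1:ℤ⟦X⟧)^(2*(N+1)) * ((2*(N+1) : ℕ):ℤ⟦X⟧)
              * (qb (2*(N+1)) (2*(N+1)) * X^(E (N+1) (2*(N+1))))) := by
    rw [hPP, h1, S, mul_add, mul_sum, mul_sum, add_sub_right_comm, ← sum_sub_distrib]
    congr 1
    apply sum_congr rfl
    intro j _
    ring
  rw [hassemble]
  exact dvd_add (Finset.dvd_sum h2) h3

lemma prod_tail_dvd (N : ℕ) (s : Finset ℕ) (h : ∀ k ∈ s, N+1 ≤ k+1) :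
    (X:ℤ⟦X⟧)^(N+1) ∣ (∏ k ∈ s, (1 - X^(k+1) : ℤ⟦X⟧)) - 1 := by
  induction s using Finset.induction with
  | empty => simp
  | @insert a s ha ih =>
    rw [prod_insert ha]
    have heq : (1 - X^(a+1) : ℤ⟦X⟧) * (∏ k ∈ s, (1 - X^(k+1) : ℤ⟦X⟧)) - 1
        = ((∏ k ∈ s, (1 - X^(k+1) : ℤ⟦X⟧)) - 1)
          - X^(a+1) * (∏ k ∈ s, (1 - X^(k+1) : ℤ⟦X⟧)) := by ring
    rw [heq]
    exact dvd_sub (ih (fun k hk => h k (mem_insert_of_mem hk)))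
      ((pow_dvd_pow X (h a (mem_insert_self a s))).mul_right _)

lemma Pr_unit (m : ℕ) : IsUnit (Pr m) := by
  apply PowerSeries.isUnit_iff_constantCoeff.mpr
  have : constantCoeff (R := ℤ) (Pr m) = 1 := by
    rw [Pr, map_prod]
    apply prod_eq_one
    intro k _
    rw [map_sub, map_one, map_pow, constantCoeff_X, zero_pow (show k+1 ≠ 0 by omega)]
    ring
  rw [this]
  exact isUnit_one

lemma jacobi_cube (N : ℕ) : (X:ℤ⟦X⟧)^(N+1) ∣ Pr (N+1)^3 - S (N+1) := by
  have k2 : (X:ℤ⟦X⟧)^(N+1) ∣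
      (Pr (N+1) * Pr N - qb (2*(N+1)) (N+1) * S (N+1)) * Pr (N+1)^2 := (key1 N).mul_right _
  have hqm := qb_mul (2*(N+1)) (N+1) (by omega)
  rw [show 2*(N+1) - (N+1) = N+1 by omega] at hqm
  have e2 : (Pr (N+1) * Pr N - qb (2*(N+1)) (N+1) * S (N+1)) * Pr (N+1)^2
      = Pr (N+1)^3 * Pr N - S (N+1) * Pr (2*(N+1)) := by
    linear_combination (-(S (N+1))) * hqm
  rw [e2] at k2
  have hsplit : Pr (2*(N+1)) = Pr N * ∏ k ∈ Ico N (2*(N+1)), (1 - X^(k+1) : ℤ⟦X⟧) := by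
    rw [Pr, Pr, ← Finset.prod_range_mul_prod_Ico _ (show N ≤ 2*(N+1) by omega)]
  have htail : (X:ℤ⟦X⟧)^(N+1) ∣ (∏ k ∈ Ico N (2*(N+1)), (1 - X^(k+1) : ℤ⟦X⟧)) - 1 :=
    prod_tail_dvd N _ (fun k hk => by rw [mem_Ico] at hk; omega)
  have k3 : (X:ℤ⟦X⟧)^(N+1) ∣ S (N+1) * Pr (2*(N+1)) - S (N+1) * Pr N := by
    have heq : S (N+1) * Pr (2*(N+1)) - S (N+1) * Pr N
        = (S (N+1) * Pr N) * ((∏ k ∈ Ico N (2*(N+1)), (1 - X^(k+1) : ℤ⟦X⟧)) - 1) := by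
      rw [hsplit]; ring
    rw [heq]
    exact htail.mul_left _
  have k4 : (X:ℤ⟦X⟧)^(N+1) ∣ (Pr (N+1)^3 - S (N+1)) * Pr N := by
    have heq : (Pr (N+1)^3 - S (N+1)) * Pr N
        = (Pr (N+1)^3 * Pr N - S (N+1) * Pr (2*(N+1)))
          + (S (N+1) * Pr (2*(N+1)) - S (N+1) * Pr N) := by ring
    rw [heq]
    exact dvd_add k2 k3
  exact ((Pr_unit N).dvd_mul_right).mp k4

lemma notri (n j k : ℕ) : tri j + tri k ≠ 9*n+5 := by
  intro h
  have hj := eight_tri j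
  have hk := eight_tri k
  have h9 : (2*j+1)*(2*j+1) + (2*k+1)*(2*k+1) = 72*n + 42 := by omega
  have hcast : ((2*j+1 : ℕ) : ZMod 9) * ((2*j+1 : ℕ) : ZMod 9)
      + ((2*k+1 : ℕ) : ZMod 9) * ((2*k+1 : ℕ) : ZMod 9) = 6 := by
    have hc := congrArg (fun t : ℕ => (t : ZMod 9)) h9
    push_cast at hc ⊢
    rw [hc, show (72:ZMod 9) = 0 by decide, show (42:ZMod 9) = 6 by decide]
    ring
  have hall : ∀ x y : ZMod 9, x*x + y*y ≠ 6 := by decide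
  exact hall _ _ hcast

lemma coeffS_ne (a M : ℕ) (h : (coeff (R := ℤ) a) (S M) ≠ 0) : ∃ j, tri j = a := by
  rw [S, map_sum] at h
  obtain ⟨j, _, hne⟩ := Finset.exists_ne_zero_of_sum_ne_zero h
  refine ⟨j, ?_⟩
  by_contra hc
  apply hne
  rw [PowerSeries.coeff_C_mul, PowerSeries.coeff_X_pow,
    if_neg (fun hh : a = tri j => hc hh.symm), mul_zero]

instance : Fact (Nat.Prime 7) := ⟨by norm_num⟩

instance : CharP ((ZMod 7)⟦X⟧) 7 := by
  constructor
  intro n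
  rw [← map_natCast (PowerSeries.C (R := ZMod 7)) n]
  rw [show ((PowerSeries.C (R := ZMod 7)) (n:ZMod 7) = 0 ↔ ((n:ZMod 7) = 0)) from
    map_eq_zero_iff _ (PowerSeries.C_injective)]
  exact CharP.cast_eq_zero_iff (ZMod 7) 7 n

end Stmt10Aux

open Stmt10Aux in
/-- With `d` the coefficients of `∏_{t≥1}(1-q^{7 t})/(1-q^t)` (each coefficient computed
from sufficiently long truncations in `ℤ⟦X⟧`), we have `d(9 n + 5) ≡ 0 (mod 7)`. -/
theorem stmt10 (d : ℕ → ℤ)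
    (hd : ∀ N : ℕ, d N =
      PowerSeries.coeff (R := ℤ) N
        ((∏ t ∈ Finset.Icc 1 N, (1 - (PowerSeries.X : PowerSeries ℤ) ^ (7 * t))) *
          PowerSeries.invOfUnit
            (∏ t ∈ Finset.Icc 1 N, (1 - (PowerSeries.X : PowerSeries ℤ) ^ t)) 1)) :
    ∀ n : ℕ, (7 : ℤ) ∣ d (9 * n + 5) := by
  intro n
  set N := 9*n+5 with hN
  rw [hd N, show (7:ℤ) = ((7:ℕ):ℤ) by norm_num, ← ZMod.intCast_zmod_eq_zero_iff_dvd]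
  set φ := Int.castRingHom (ZMod 7) with hφ
  set P : ℤ⟦X⟧ := ∏ t ∈ Finset.Icc 1 N, (1 - X^t) with hP
  set A : ℤ⟦X⟧ := ∏ t ∈ Finset.Icc 1 N, (1 - X^(7*t)) with hA
  have hcoeffmap : ∀ f : ℤ⟦X⟧, ((coeff (R := ℤ) N f : ℤ) : ZMod 7) = coeff (R := ZMod 7) N (PowerSeries.map φ f) :=
    fun f => (PowerSeries.coeff_map (f := φ) N f).symm
  rw [hcoeffmap, map_mul]
  have hconst : constantCoeff (R := ℤ) P = 1 := by
    rw [hP, map_prod]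
    apply prod_eq_one
    intro t ht
    rw [Finset.mem_Icc] at ht
    rw [map_sub, map_one, map_pow, constantCoeff_X, zero_pow (show t ≠ 0 by omega)]
    ring
  have hPI : PowerSeries.map φ P * PowerSeries.map φ (PowerSeries.invOfUnit P 1) = 1 := by
    rw [← map_mul, PowerSeries.mul_invOfUnit P 1 (by rw [hconst]; rfl), map_one]
  have hAmap : PowerSeries.map φ A = (PowerSeries.map φ P)^7 := by
    rw [hA, hP, map_prod, map_prod, ← prod_pow]
    apply prod_congr rfl
    intro t _
    simp only [map_sub, map_one, map_pow, PowerSeries.map_X]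
    rw [sub_pow_char (1 : (ZMod 7)⟦X⟧) (X^t), one_pow, ← pow_mul, mul_comm t 7]
  rw [hAmap, show ((PowerSeries.map φ) P)^7 = ((PowerSeries.map φ) P)^6 * (PowerSeries.map φ) P
      from pow_succ _ 6, mul_assoc, hPI, mul_one, ← map_pow, PowerSeries.coeff_map]
  suffices hs : coeff (R := ℤ) N (P^6) = 0 by rw [hs]; simp
  have hPPr : P = Pr N := by
    rw [hP, Pr, show Finset.Icc 1 N = Finset.Ico 1 (N+1) by rw [Finset.Ico_add_one_right_eq_Icc],
      Finset.prod_Ico_eq_prod_range, show N+1-1 = N by omega]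
    apply prod_congr rfl
    intro i _
    rw [add_comm 1 i]
  have h6 : (X:ℤ⟦X⟧)^(N+1) ∣ Pr (N+1)^6 - S (N+1) * S (N+1) := by
    have heq : Pr (N+1)^6 - S (N+1) * S (N+1)
        = (Pr (N+1)^3 - S (N+1)) * (Pr (N+1)^3 + S (N+1)) := by ring
    rw [heq]
    exact (jacobi_cube N).mul_right _
  have h7 : (X:ℤ⟦X⟧)^(N+1) ∣ Pr (N+1)^6 - Pr N ^6 := by
    rw [Pr_succ]
    have heq : (Pr N * (1 - X^(N+1)))^6 - Pr N^6 = Pr N^6 * ((1 - X^(N+1))^6 - 1^6) := by ring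
    rw [heq]
    apply Dvd.dvd.mul_left
    have hdd := sub_dvd_pow_sub_pow (1 - X^(N+1) : ℤ⟦X⟧) 1 6
    rw [show (1 - X^(N+1) : ℤ⟦X⟧) - 1 = -(X^(N+1)) by ring] at hdd
    exact (neg_dvd).mp hdd
  have h8 : (X:ℤ⟦X⟧)^(N+1) ∣ Pr N^6 - S (N+1) * S (N+1) := by
    have heq : Pr N^6 - S (N+1) * S (N+1)
        = (Pr (N+1)^6 - S (N+1) * S (N+1)) - (Pr (N+1)^6 - Pr N ^6) := by ring
    rw [heq]
    exact dvd_sub h6 h7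
  have h9 : coeff (R := ℤ) N (Pr N^6) = coeff (R := ℤ) N (S (N+1) * S (N+1)) := by
    have hz := (PowerSeries.X_pow_dvd_iff.mp h8) N (by omega)
    rw [map_sub, sub_eq_zero] at hz
    exact hz
  rw [hPPr, h9, PowerSeries.coeff_mul]
  apply sum_eq_zero
  intro p hp
  rw [Finset.HasAntidiagonal.mem_antidiagonal] at hp
  by_contra hne
  obtain ⟨c1, c2⟩ := mul_ne_zero_iff.mp hne
  obtain ⟨j, hj1⟩ := coeffS_ne _ _ c1
  obtain ⟨k, hk1⟩ := coeffS_ne _ _ c2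
  exact notri n j k (by omega)
end
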